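/- arXiv:1202.3907 — 3 statements merged into one kernel-verified Lean document; each statement's English description precedes it below -/
import Mathlib

section
/- Let k ≥ 2 and 2 ≤ j ≤ k, and let 0 < p < 1. Then there exists c > 0 such that for all L ≥ 1 the spectral gap of the oriented FA-jf model on the depth-L rooted k-ary tree with unconstrained leaves satisfies gap_L ≥ e^{-cL}, where gap_L = inf{ D_L(f)/Var_μ(f) : f : Ω_L → ℝ nonconstant } and D_L(f) = ∑_{x ∈ V_L} μ( c̄_x · Var_x(f) ). -/
set_option maxHeartbeats 1000000
set_option linter.unusedSectionVars false
set_option linter.unusedVariables false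
set_option linter.unreachableTactic false
set_option linter.unusedTactic false


open scoped Classical

noncomputable section

section Bernoulli

variable {V : Type*} [Fintype V] [DecidableEq V]

/-- Bernoulli(p) product weight of a configuration (`true` = occupied, with probability `p`). -/
def wt (p : ℝ) (η : V → Bool) : ℝ := ∏ x : V, if η x then p else 1 - p

/-- Expectation under the Bernoulli(p) product measure μ. -/
def mean (p : ℝ) (f : (V → Bool) → ℝ) : ℝ := ∑ η : V → Bool, wt p η * f η

/-- Probability of an event under the Bernoulli(p) product measure μ. -/
def probEv (p : ℝ) (E : (V → Bool) → Prop) : ℝ := mean p (fun η => if E η then 1 else 0)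

/-- Conditional expectation `μ_A(f)` of `f` given the coordinates outside `A`. -/
def cexp (p : ℝ) (A : Finset V) (f : (V → Bool) → ℝ) (η : V → Bool) : ℝ :=
  ∑ ζ : V → Bool,
    (∏ x : V, if x ∈ A then (if ζ x then p else 1 - p) else (if ζ x = η x then 1 else 0)) * f ζ

/-- Conditional variance `Var_A(f)` on the coordinates of `A` given the remaining coordinates. -/
def cvar (p : ℝ) (A : Finset V) (f : (V → Bool) → ℝ) (η : V → Bool) : ℝ :=
  cexp p A (fun ζ => f ζ ^ 2) η - (cexp p A f η) ^ 2

/-- Variance `Var_μ(f)` under the Bernoulli(p) product measure. -/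
def varTot (p : ℝ) (f : (V → Bool) → ℝ) : ℝ := mean p (fun η => f η ^ 2) - (mean p f) ^ 2

end Bernoulli

/-- Vertices of the rooted `k`-ary tree of depth `n`: words of length `≤ n` over `Fin k`. -/
abbrev TV (k n : ℕ) := Σ m : Fin (n + 1), Fin m.val → Fin k

/-- The root: the empty word. -/
def rootT (k n : ℕ) : TV k n := ⟨⟨0, Nat.succ_pos n⟩, Fin.elim0⟩

/-- `y` is a child of `x` in the rooted tree. -/
def childOf {k n : ℕ} (x y : TV k n) : Prop :=
  ∃ h : y.1.val = x.1.val + 1, ∀ i : Fin x.1.val, y.2 (Fin.cast h.symm i.castSucc) = x.2 i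

/-- The oriented bootstrap map `B̄`: a vertex becomes empty iff it is already empty or
at least `j` of its children are empty. -/
def bootO {k n : ℕ} (j : ℕ) (η : TV k n → Bool) : TV k n → Bool := fun x =>
  if η x = false ∨ j ≤ (Finset.univ.filter fun y : TV k n => childOf x y ∧ η y = false).card
  then false else true

/-- The oriented FA-jf constraint with unconstrained leaves: `c̄_x(η) = 1` iff `x` is a leaf
(depth `n`) or at least `j` children of `x` are empty. -/
def cbar {k n : ℕ} (j : ℕ) (x : TV k n) (η : TV k n → Bool) : ℝ :=
  if x.1.val = n then 1
  else if j ≤ (Finset.univ.filter fun y : TV k n => childOf x y ∧ η y = false).card then 1 else 0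

/-- The Dirichlet form of the oriented FA-jf model on the depth-`L` rooted `k`-ary tree. -/
def dirO (k j L : ℕ) (p : ℝ) (f : (TV k L → Bool) → ℝ) : ℝ :=
  ∑ x : TV k L, mean p (fun η => cbar j x η * cvar p {x} f η)

/-- The spectral gap of the oriented FA-jf model on the depth-`L` rooted `k`-ary tree:
the infimum over nonconstant `f` of `D_L(f)/Var_μ(f)`. -/
def gapO (k j L : ℕ) (p : ℝ) : ℝ :=
  sInf {r : ℝ | ∃ f : (TV k L → Bool) → ℝ, varTot p f ≠ 0 ∧ r = dirO k j L p f / varTot p f}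


section Aux
variable {V : Type*} [Fintype V] [DecidableEq V]

def Kker (p : ℝ) (A : Finset V) (η ζ : V → Bool) : ℝ :=
  ∏ x : V, if x ∈ A then (if ζ x then p else 1 - p) else (if ζ x = η x then 1 else 0)

lemma cexp_eq (p : ℝ) (A : Finset V) (f : (V → Bool) → ℝ) (η : V → Bool) :
    cexp p A f η = ∑ ζ : V → Bool, Kker p A η ζ * f ζ := rfl

lemma master (g : V → Bool → ℝ) :
    ∑ ζ : V → Bool, ∏ x : V, g x (ζ x) = ∏ x : V, (g x true + g x false) := by
  calc ∑ ζ : V → Bool, ∏ x : V, g x (ζ x)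
      = ∑ ζ ∈ Fintype.piFinset (fun _ : V => (Finset.univ : Finset Bool)),
          ∏ x : V, g x (ζ x) := by rw [Fintype.piFinset_univ]
    _ = ∏ x : V, ∑ b ∈ (Finset.univ : Finset Bool), g x b :=
        (Finset.prod_univ_sum _ _).symm
    _ = ∏ x : V, (g x true + g x false) := by
        exact Finset.prod_congr rfl fun x _ => Fintype.sum_bool (g x)

lemma bern_nonneg {p : ℝ} (hp0 : 0 < p) (hp1 : p < 1) (b : Bool) :
    0 ≤ (if b then p else 1 - p) := by
  cases b <;> simp <;> linarith

lemma wt_nonneg {p : ℝ} (hp0 : 0 < p) (hp1 : p < 1) (η : V → Bool) : 0 ≤ wt p η :=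
  Finset.prod_nonneg fun x _ => bern_nonneg hp0 hp1 _

lemma Kker_nonneg {p : ℝ} (hp0 : 0 < p) (hp1 : p < 1) (A : Finset V) (η ζ : V → Bool) :
    0 ≤ Kker p A η ζ := by
  refine Finset.prod_nonneg fun x _ => ?_
  by_cases h : x ∈ A
  · simpa [h] using bern_nonneg hp0 hp1 (ζ x)
  · simp only [h, if_false]
    by_cases h2 : ζ x = η x <;> simp [h2]

lemma sum_wt {p : ℝ} : ∑ η : V → Bool, wt p η = (1 : ℝ) := by
  simp only [wt]
  rw [master (V := V) (fun _ b => if b then p else 1 - p)]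
  refine Finset.prod_eq_one fun x _ => by simp

lemma sum_Kker {p : ℝ} (A : Finset V) (η : V → Bool) : ∑ ζ : V → Bool, Kker p A η ζ = 1 := by
  simp only [Kker]
  rw [master (V := V)
    (fun x b => if x ∈ A then (if b then p else 1 - p) else (if b = η x then 1 else 0))]
  refine Finset.prod_eq_one fun x _ => ?_
  by_cases h : x ∈ A
  · simp [h]
  · simp only [h, if_false]; cases hx : η x <;> simp

lemma mean_nonneg {p : ℝ} (hp0 : 0 < p) (hp1 : p < 1) {f : (V → Bool) → ℝ}
    (hf : ∀ η, 0 ≤ f η) : 0 ≤ mean p f :=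
  Finset.sum_nonneg fun η _ => mul_nonneg (wt_nonneg hp0 hp1 η) (hf η)

lemma mean_mono {p : ℝ} (hp0 : 0 < p) (hp1 : p < 1) {f g : (V → Bool) → ℝ}
    (hfg : ∀ η, f η ≤ g η) : mean p f ≤ mean p g :=
  Finset.sum_le_sum fun η _ => mul_le_mul_of_nonneg_left (hfg η) (wt_nonneg hp0 hp1 η)

lemma mean_const {p : ℝ} (c : ℝ) : mean p (fun _ : V → Bool => c) = c := by
  have h := sum_wt (V := V) (p := p)
  rw [mean, ← Finset.sum_mul, h, one_mul]

lemma mean_sub {p : ℝ} (f g : (V → Bool) → ℝ) :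
    mean p (fun η => f η - g η) = mean p f - mean p g := by
  simp [mean, mul_sub, Finset.sum_sub_distrib]

lemma mean_smul {p : ℝ} (c : ℝ) (f : (V → Bool) → ℝ) :
    mean p (fun η => c * f η) = c * mean p f := by
  simp only [mean, Finset.mul_sum]
  exact Finset.sum_congr rfl fun η _ => by ring

lemma mean_cexp {p : ℝ} (A : Finset V) (f : (V → Bool) → ℝ) :
    mean p (cexp p A f) = mean p f := by
  have key : ∀ ζ : V → Bool, (∑ η : V → Bool, wt p η * Kker p A η ζ) = wt p ζ := by
    intro ζ
    have h1 : ∀ η : V → Bool, wt p η * Kker p A η ζ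
        = ∏ x : V, ((if η x then p else 1 - p) *
            (if x ∈ A then (if ζ x then p else 1 - p) else (if ζ x = η x then 1 else 0))) := by
      intro η; rw [wt, Kker, ← Finset.prod_mul_distrib]
    rw [Finset.sum_congr rfl fun η _ => h1 η]
    rw [master (V := V) (fun x b => (if b then p else 1 - p) *
        (if x ∈ A then (if ζ x then p else 1 - p) else (if ζ x = b then 1 else 0)))]
    rw [wt]
    refine Finset.prod_congr rfl fun x _ => ?_
    by_cases h : x ∈ A
    · simp only [h, if_true]
      cases hz : ζ x <;> simp <;> ring
    · simp only [h, if_false]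
      cases hz : ζ x <;> simp <;> ring
  calc mean p (cexp p A f)
      = ∑ η : V → Bool, ∑ ζ : V → Bool, wt p η * Kker p A η ζ * f ζ := by
        simp only [mean, cexp_eq, Finset.mul_sum]
        exact Finset.sum_congr rfl fun η _ => Finset.sum_congr rfl fun ζ _ => by ring
    _ = ∑ ζ : V → Bool, (∑ η : V → Bool, wt p η * Kker p A η ζ) * f ζ := by
        rw [Finset.sum_comm]
        exact Finset.sum_congr rfl fun ζ _ => by rw [Finset.sum_mul]
    _ = mean p f := by
        simp only [key]; rfl


section Bernoulli2

variable {V : Type*} [Fintype V] [DecidableEq V]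

lemma update_true_ne_false (η : V → Bool) (y : V) :
    Function.update η y true ≠ Function.update η y false := by
  intro h
  have := congrFun h y
  simp at this

lemma Kker_update (p : ℝ) (y : V) (η : V → Bool) (b : Bool) :
    Kker p {y} η (Function.update η y b) = (if b then p else 1 - p) := by
  rw [Kker]
  rw [← Finset.mul_prod_erase Finset.univ _ (Finset.mem_univ y)]
  rw [Finset.prod_eq_one, mul_one]
  · simp
  · intro v hv
    have hvy : v ≠ y := (Finset.mem_erase.1 hv).1
    simp [hvy, Function.update_of_ne hvy]

lemma Kker_singleton_zero (p : ℝ) (y : V) (η ζ : V → Bool)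
    (h1 : ζ ≠ Function.update η y true) (h2 : ζ ≠ Function.update η y false) :
    Kker p {y} η ζ = 0 := by
  have hex : ∃ v, v ≠ y ∧ ζ v ≠ η v := by
    by_contra hc
    push_neg at hc
    have : ζ = Function.update η y (ζ y) := by
      funext v
      by_cases hv : v = y
      · subst hv; simp
      · rw [Function.update_of_ne hv]; exact hc v hv
    cases hb : ζ y
    · exact h2 (by rw [this, hb])
    · exact h1 (by rw [this, hb])
  obtain ⟨v, hvy, hv⟩ := hex
  rw [Kker]
  apply Finset.prod_eq_zero (Finset.mem_univ v)
  simp [hvy, hv]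

lemma cexp_single (p : ℝ) (y : V) (f : (V → Bool) → ℝ) (η : V → Bool) :
    cexp p {y} f η
      = p * f (Function.update η y true) + (1 - p) * f (Function.update η y false) := by
  rw [cexp_eq]
  have key : ∀ ζ : V → Bool, Kker p {y} η ζ * f ζ
      = (if ζ = Function.update η y true then p * f ζ else 0)
        + (if ζ = Function.update η y false then (1 - p) * f ζ else 0) := by
    intro ζ
    by_cases h1 : ζ = Function.update η y true
    · subst h1
      rw [if_pos rfl, if_neg (update_true_ne_false η y), add_zero, Kker_update]
      simp
    · by_cases h2 : ζ = Function.update η y false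
      · subst h2
        rw [if_neg (fun h => (update_true_ne_false η y) h.symm), if_pos rfl, zero_add,
          Kker_update]
        simp
      · rw [Kker_singleton_zero p y η ζ h1 h2, if_neg h1, if_neg h2]
        ring
  rw [Finset.sum_congr rfl fun ζ _ => key ζ, Finset.sum_add_distrib]
  rw [Finset.sum_ite_eq' Finset.univ, Finset.sum_ite_eq' Finset.univ]
  simp

lemma cexp_sq_le (p : ℝ) (hp0 : 0 < p) (hp1 : p < 1) (A : Finset V) (f : (V → Bool) → ℝ)
    (η : V → Bool) : (cexp p A f η) ^ 2 ≤ cexp p A (fun ζ => f ζ ^ 2) η := by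
  rw [cexp_eq, cexp_eq]
  have h := Finset.sum_mul_sq_le_sq_mul_sq Finset.univ
    (fun ζ : V → Bool => Real.sqrt (Kker p A η ζ))
    (fun ζ : V → Bool => Real.sqrt (Kker p A η ζ) * f ζ)
  have e1 : ∀ ζ : V → Bool, Real.sqrt (Kker p A η ζ) * (Real.sqrt (Kker p A η ζ) * f ζ)
      = Kker p A η ζ * f ζ := by
    intro ζ
    rw [← mul_assoc, Real.mul_self_sqrt (Kker_nonneg hp0 hp1 A η ζ)]
  have e2 : ∀ ζ : V → Bool, Real.sqrt (Kker p A η ζ) ^ 2 = Kker p A η ζ := fun ζ =>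
    Real.sq_sqrt (Kker_nonneg hp0 hp1 A η ζ)
  rw [Finset.sum_congr rfl fun ζ _ => e1 ζ, Finset.sum_congr rfl fun ζ _ => e2 ζ] at h
  calc (∑ ζ : V → Bool, Kker p A η ζ * f ζ) ^ 2
      ≤ (∑ ζ : V → Bool, Kker p A η ζ) *
          ∑ ζ : V → Bool, (Real.sqrt (Kker p A η ζ) * f ζ) ^ 2 := h
    _ = ∑ ζ : V → Bool, Kker p A η ζ * f ζ ^ 2 := by
        rw [sum_Kker, one_mul]
        refine Finset.sum_congr rfl fun ζ _ => ?_
        rw [mul_pow, e2 ζ]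

lemma cvar_nonneg (p : ℝ) (hp0 : 0 < p) (hp1 : p < 1) (A : Finset V) (f : (V → Bool) → ℝ)
    (η : V → Bool) : 0 ≤ cvar p A f η :=
  sub_nonneg.2 (cexp_sq_le p hp0 hp1 A f η)

lemma cvar_single (p : ℝ) (x : V) (f : (V → Bool) → ℝ) (η : V → Bool) :
    cvar p {x} f η = p * (1 - p) *
      (f (Function.update η x true) - f (Function.update η x false)) ^ 2 := by
  rw [cvar, cexp_single, cexp_single]
  ring

lemma cexp_sub (p : ℝ) (A : Finset V) (f g : (V → Bool) → ℝ) (η : V → Bool) :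
    cexp p A (fun ζ => f ζ - g ζ) η = cexp p A f η - cexp p A g η := by
  simp [cexp_eq, mul_sub, Finset.sum_sub_distrib]

lemma cexp_smul (p : ℝ) (A : Finset V) (c : ℝ) (f : (V → Bool) → ℝ) (η : V → Bool) :
    cexp p A (fun ζ => c * f ζ) η = c * cexp p A f η := by
  simp only [cexp_eq, Finset.mul_sum]
  exact Finset.sum_congr rfl fun ζ _ => by ring

lemma cexp_mono (p : ℝ) (hp0 : 0 < p) (hp1 : p < 1) (A : Finset V) {f g : (V → Bool) → ℝ}
    (hfg : ∀ ζ, f ζ ≤ g ζ) (η : V → Bool) : cexp p A f η ≤ cexp p A g η := by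
  rw [cexp_eq, cexp_eq]
  exact Finset.sum_le_sum fun ζ _ =>
    mul_le_mul_of_nonneg_left (hfg ζ) (Kker_nonneg hp0 hp1 A η ζ)

lemma cexp_empty (p : ℝ) (f : (V → Bool) → ℝ) (η : V → Bool) : cexp p ∅ f η = f η := by
  rw [cexp_eq]
  have key : ∀ ζ : V → Bool, Kker p ∅ η ζ * f ζ = if ζ = η then f ζ else 0 := by
    intro ζ
    by_cases h : ζ = η
    · subst h
      rw [if_pos rfl, Kker, Finset.prod_eq_one, one_mul]
      intro v _; simp
    · rw [if_neg h]
      obtain ⟨v, hv⟩ : ∃ v, ζ v ≠ η v := by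
        by_contra hc; push_neg at hc; exact h (funext hc)
      rw [Kker, Finset.prod_eq_zero (Finset.mem_univ v), zero_mul]
      simp [hv]
  rw [Finset.sum_congr rfl fun ζ _ => key ζ, Finset.sum_ite_eq' Finset.univ]
  simp

lemma cexp_univ (p : ℝ) (f : (V → Bool) → ℝ) (η : V → Bool) :
    cexp p Finset.univ f η = mean p f := by
  rw [cexp_eq, mean]
  refine Finset.sum_congr rfl fun ζ _ => ?_
  rw [Kker, wt]
  simp

lemma Kker_insert (p : ℝ) {x : V} {B : Finset V} (hx : x ∉ B) (η ζ : V → Bool) :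
    Kker p (insert x B) η ζ
      = p * Kker p B (Function.update η x true) ζ
        + (1 - p) * Kker p B (Function.update η x false) ζ := by
  have hfac : ∀ c : Bool, Kker p B (Function.update η x c) ζ
      = (if ζ x = c then 1 else 0) *
        ∏ v ∈ Finset.univ.erase x,
          (if v ∈ B then (if ζ v then p else 1 - p) else (if ζ v = η v then 1 else 0)) := by
    intro c
    rw [Kker, ← Finset.mul_prod_erase Finset.univ _ (Finset.mem_univ x)]
    congr 1
    · simp [hx]
    · refine Finset.prod_congr rfl fun v hv => ?_
      have hvx : v ≠ x := (Finset.mem_erase.1 hv).1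
      rw [Function.update_of_ne hvx]
  rw [hfac true, hfac false, Kker, ← Finset.mul_prod_erase Finset.univ _ (Finset.mem_univ x)]
  have hins : ∀ v ∈ Finset.univ.erase x,
      (if v ∈ insert x B then (if ζ v then p else 1 - p) else (if ζ v = η v then 1 else 0))
      = (if v ∈ B then (if ζ v then p else 1 - p) else (if ζ v = η v then 1 else 0)) := by
    intro v hv
    have hvx : v ≠ x := (Finset.mem_erase.1 hv).1
    simp [Finset.mem_insert, hvx]
  rw [Finset.prod_congr rfl hins]
  simp only [Finset.mem_insert, true_or, if_true]
  cases hz : ζ x <;> simp [hz] <;> ring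

lemma cexp_tower (p : ℝ) {x : V} {B : Finset V} (hx : x ∉ B) (f : (V → Bool) → ℝ)
    (η : V → Bool) : cexp p {x} (cexp p B f) η = cexp p (insert x B) f η := by
  rw [cexp_single, cexp_eq, cexp_eq, cexp_eq]
  rw [Finset.mul_sum, Finset.mul_sum, ← Finset.sum_add_distrib]
  refine Finset.sum_congr rfl fun ζ _ => ?_
  rw [Kker_insert p hx]
  ring

lemma cexp_update_indep (p : ℝ) {x : V} {B : Finset V} (hx : x ∉ B) (c : Bool)
    (f : (V → Bool) → ℝ) (η : V → Bool) :
    cexp p B f (Function.update η x c)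
      = cexp p B (fun ζ => f (Function.update ζ x c)) η := by
  classical
  set s : Equiv.Perm Bool := Equiv.swap (η x) c with hs
  have hinv : Function.Involutive (fun ζ : V → Bool => Function.update ζ x (s (ζ x))) := by
    intro ζ
    simp only [Function.update_self, Function.update_idem]
    rw [Equiv.swap_apply_self]
    exact Function.update_eq_self x ζ
  have key : ∀ ζ : V → Bool,
      Kker p B (Function.update η x c) (Function.update ζ x (s (ζ x)))
        * f (Function.update ζ x (s (ζ x)))
      = Kker p B η ζ * f (Function.update ζ x c) := by
    intro ζ
    by_cases hc : ζ x = η x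
    · have hsz : s (ζ x) = c := by rw [hc, hs, Equiv.swap_apply_left]
      rw [hsz]
      congr 1
      rw [Kker, Kker]
      refine Finset.prod_congr rfl fun v _ => ?_
      by_cases hvx : v = x
      · subst hvx
        simp [hx, hc]
      · rw [Function.update_of_ne hvx, Function.update_of_ne hvx]
    · have h1 : Kker p B η ζ = 0 := by
        rw [Kker]
        apply Finset.prod_eq_zero (Finset.mem_univ x)
        simp [hx, hc]
      have h2 : s (ζ x) ≠ c := by
        intro h
        apply hc
        have : s (ζ x) = s (η x) := by rw [h, hs, Equiv.swap_apply_left]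
        exact s.injective this
      have h3 : Kker p B (Function.update η x c) (Function.update ζ x (s (ζ x))) = 0 := by
        rw [Kker]
        apply Finset.prod_eq_zero (Finset.mem_univ x)
        simp [hx, h2]
      rw [h1, h3, zero_mul, zero_mul]
  rw [cexp_eq, cexp_eq]
  exact (Fintype.sum_equiv (Function.Involutive.toPerm _ hinv)
    (fun ζ => Kker p B η ζ * f (Function.update ζ x c))
    (fun ζ => Kker p B (Function.update η x c) ζ * f ζ)
    (fun ζ => (key ζ).symm)).symm

end Bernoulli2

section Bernoulli3

variable {V : Type*} [Fintype V] [DecidableEq V]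

lemma mean_cvar_eq (p : ℝ) (A : Finset V) (f : (V → Bool) → ℝ) :
    mean p (cvar p A f)
      = mean p (fun η => f η ^ 2) - mean p (fun η => (cexp p A f η) ^ 2) := by
  have : cvar p A f = fun η => cexp p A (fun ζ => f ζ ^ 2) η - (cexp p A f η) ^ 2 := rfl
  rw [this, mean_sub (f := cexp p A (fun ζ => f ζ ^ 2)) (g := fun η => (cexp p A f η) ^ 2),
    mean_cexp]

lemma es_step (p : ℝ) (hp0 : 0 < p) (hp1 : p < 1) {x : V} {B : Finset V} (hx : x ∉ B)
    (f : (V → Bool) → ℝ) :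
    mean p (cvar p (insert x B) f) ≤ mean p (cvar p {x} f) + mean p (cvar p B f) := by
  have hq : (0:ℝ) ≤ p * (1 - p) := by nlinarith
  have pt : ∀ η, cvar p {x} (cexp p B f) η ≤ cexp p B (cvar p {x} f) η := by
    intro η
    rw [cvar_single]
    have e1 : ∀ c, cexp p B f (Function.update η x c)
        = cexp p B (fun ζ => f (Function.update ζ x c)) η := fun c =>
      cexp_update_indep p hx c f η
    rw [e1 true, e1 false, ← cexp_sub]
    have e2 : cexp p B (cvar p {x} f) η = p * (1 - p) *
        cexp p B (fun ζ =>
          (f (Function.update ζ x true) - f (Function.update ζ x false)) ^ 2) η := by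
      rw [← cexp_smul]
      congr 1
      funext ζ
      rw [cvar_single]
    rw [e2]
    exact mul_le_mul_of_nonneg_left
      (cexp_sq_le p hp0 hp1 B
        (fun ζ => f (Function.update ζ x true) - f (Function.update ζ x false)) η) hq
  have hmean : mean p (cvar p {x} (cexp p B f)) ≤ mean p (cvar p {x} f) := by
    calc mean p (cvar p {x} (cexp p B f)) ≤ mean p (cexp p B (cvar p {x} f)) :=
          mean_mono hp0 hp1 pt
      _ = mean p (cvar p {x} f) := mean_cexp B _
  have htow : cexp p {x} (cexp p B f) = cexp p (insert x B) f := by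
    funext η; exact cexp_tower p hx f η
  have h1 := mean_cvar_eq p {x} (cexp p B f)
  rw [htow] at h1
  have h2 := mean_cvar_eq p (insert x B) f
  have h3 := mean_cvar_eq p {x} f
  have h4 := mean_cvar_eq p B f
  have h5 : mean p (fun η => cexp p B f η ^ 2)
      - mean p (fun η => cexp p (insert x B) f η ^ 2)
      ≤ mean p (fun η => f η ^ 2) - mean p (fun η => cexp p {x} f η ^ 2) := by
    calc mean p (fun η => cexp p B f η ^ 2)
        - mean p (fun η => cexp p (insert x B) f η ^ 2)
        = mean p (cvar p {x} (cexp p B f)) := by rw [h1]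
      _ ≤ mean p (cvar p {x} f) := hmean
      _ = _ := h3
  linarith

lemma es_aux (p : ℝ) (hp0 : 0 < p) (hp1 : p < 1) (f : (V → Bool) → ℝ) (A : Finset V) :
    mean p (cvar p A f) ≤ ∑ x ∈ A, mean p (cvar p {x} f) := by
  induction A using Finset.induction_on with
  | empty =>
      have : cvar p ∅ f = fun _ => (0:ℝ) := by
        funext η
        rw [cvar, cexp_empty, cexp_empty]
        ring
      rw [this, mean_const]
      simp
  | @insert x B hx ih =>
      calc mean p (cvar p (insert x B) f)
          ≤ mean p (cvar p {x} f) + mean p (cvar p B f) := es_step p hp0 hp1 hx f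
        _ ≤ mean p (cvar p {x} f) + ∑ y ∈ B, mean p (cvar p {y} f) := by linarith
        _ = ∑ y ∈ insert x B, mean p (cvar p {y} f) := by rw [Finset.sum_insert hx]

lemma varTot_eq_mean_cvar_univ (p : ℝ) (f : (V → Bool) → ℝ) :
    varTot p f = mean p (cvar p (Finset.univ : Finset V) f) := by
  have : cvar p (Finset.univ : Finset V) f = fun _ => varTot p f := by
    funext η
    rw [cvar, cexp_univ, cexp_univ, varTot]
  rw [this, mean_const]

lemma efron_stein (p : ℝ) (hp0 : 0 < p) (hp1 : p < 1) (f : (V → Bool) → ℝ) :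
    varTot p f ≤ ∑ x : V, mean p (cvar p {x} f) := by
  rw [varTot_eq_mean_cvar_univ]
  exact es_aux p hp0 hp1 f Finset.univ

lemma cv_update (p : ℝ) (hp0 : 0 < p) (hp1 : p < 1) (x : V) (b : Bool)
    {h : (V → Bool) → ℝ} (hh : ∀ η, 0 ≤ h η) :
    mean p (fun η => h (Function.update η x b)) ≤ (min p (1 - p))⁻¹ * mean p h := by
  set m := min p (1 - p) with hm
  have hm0 : 0 < m := lt_min hp0 (by linarith)
  have pt : ∀ η, h (Function.update η x b) ≤ m⁻¹ * cexp p {x} h η := by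
    intro η
    have hc : m * h (Function.update η x b) ≤ cexp p {x} h η := by
      rw [cexp_single]
      cases b
      · have h1 : 0 ≤ p * h (Function.update η x true) :=
          mul_nonneg (le_of_lt hp0) (hh _)
        have h2 : m ≤ 1 - p := min_le_right _ _
        nlinarith [hh (Function.update η x false)]
      · have h1 : 0 ≤ (1 - p) * h (Function.update η x false) :=
          mul_nonneg (by linarith) (hh _)
        have h2 : m ≤ p := min_le_left _ _
        nlinarith [hh (Function.update η x true)]
    calc h (Function.update η x b) = m⁻¹ * (m * h (Function.update η x b)) := by
          field_simp
      _ ≤ m⁻¹ * cexp p {x} h η :=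
          mul_le_mul_of_nonneg_left hc (inv_nonneg.2 (le_of_lt hm0))
  calc mean p (fun η => h (Function.update η x b))
      ≤ mean p (fun η => m⁻¹ * cexp p {x} h η) := mean_mono hp0 hp1 pt
    _ = m⁻¹ * mean p (cexp p {x} h) := mean_smul _ _
    _ = m⁻¹ * mean p h := by rw [mean_cexp]

end Bernoulli3

section Extra

variable {V : Type*} [Fintype V] [DecidableEq V]

lemma mean_add (p : ℝ) (a b : (V → Bool) → ℝ) :
    mean p (fun η => a η + b η) = mean p a + mean p b := by
  simp [mean, mul_add, Finset.sum_add_distrib]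

lemma mean_sum (p : ℝ) {ι : Type*} (s : Finset ι) (g : ι → (V → Bool) → ℝ) :
    mean p (fun η => ∑ m ∈ s, g m η) = ∑ m ∈ s, mean p (g m) := by
  simp only [mean, Finset.mul_sum]
  exact Finset.sum_comm

lemma sq_sum_le (n : ℕ) (a : ℕ → ℝ) :
    (∑ i ∈ Finset.range n, a i) ^ 2 ≤ (n : ℝ) * ∑ i ∈ Finset.range n, a i ^ 2 := by
  have h := Finset.sum_mul_sq_le_sq_mul_sq (Finset.range n) a (fun _ => (1:ℝ))
  simp only [mul_one, one_pow] at h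
  calc (∑ i ∈ Finset.range n, a i) ^ 2
      ≤ (∑ i ∈ Finset.range n, a i ^ 2) * ∑ _i ∈ Finset.range n, (1:ℝ) := h
    _ = (n : ℝ) * ∑ i ∈ Finset.range n, a i ^ 2 := by
        rw [Finset.sum_const, Finset.card_range]
        simp [mul_comm]

lemma diff_sq_le (g : (V → Bool) → ℝ) (ζ : V → Bool) (z : V) :
    (g ζ - g (Function.update ζ z false)) ^ 2
      ≤ (g (Function.update ζ z true) - g (Function.update ζ z false)) ^ 2 := by
  cases hb : ζ z
  · have : Function.update ζ z false = ζ := by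
      rw [← hb]; exact Function.update_eq_self z ζ
    rw [this]
    simp [sq_nonneg]
  · have : Function.update ζ z true = ζ := by
      rw [← hb]; exact Function.update_eq_self z ζ
    rw [this]

end Extra

section Tree

variable {k j L : ℕ}

/-- the `m`-th child of a non-leaf vertex -/
def chld (x : TV k L) (hx : x.1.val < L) (m : Fin k) : TV k L :=
  ⟨⟨x.1.val + 1, by omega⟩, Fin.snoc x.2 m⟩

lemma chld_childOf (x : TV k L) (hx : x.1.val < L) (m : Fin k) : childOf x (chld x hx m) := by
  refine ⟨rfl, fun i => ?_⟩
  have hc : (Fin.cast (rfl : x.1.val + 1 = x.1.val + 1).symm i.castSucc) = i.castSucc := by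
    apply Fin.ext; simp
  change (Fin.snoc x.2 m : Fin (x.1.val + 1) → Fin k) (Fin.cast (rfl : x.1.val + 1 = x.1.val + 1).symm i.castSucc) = x.2 i; rw [hc]
  show (Fin.snoc x.2 m : Fin (x.1.val + 1) → Fin k) i.castSucc = x.2 i
  simp

lemma chld_ne (x : TV k L) (hx : x.1.val < L) (m : Fin k) : chld x hx m ≠ x := by
  intro h
  have := congrArg (fun z : TV k L => z.1.val) h
  simp only [chld] at this
  omega

lemma chld_inj (x : TV k L) (hx : x.1.val < L) {m m' : Fin k}
    (h : chld x hx m = chld x hx m') : m = m' := by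
  have h2 : HEq (chld x hx m).2 (chld x hx m').2 := by rw [h]
  have h3 : (Fin.snoc x.2 m : Fin (x.1.val + 1) → Fin k) = Fin.snoc x.2 m' := eq_of_heq h2
  have := congrFun h3 (Fin.last x.1.val)
  simpa [Fin.snoc_last] using this

lemma cbar_nonneg (x : TV k L) (η : TV k L → Bool) : 0 ≤ cbar j x η := by
  rw [cbar]; split
  · norm_num
  · split <;> norm_num

lemma cbar_le_one (x : TV k L) (η : TV k L → Bool) : cbar j x η ≤ 1 := by
  rw [cbar]; split
  · norm_num
  · split <;> norm_num

lemma cbar_leaf (x : TV k L) (hx : x.1.val = L) (η : TV k L → Bool) : cbar j x η = 1 := by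
  rw [cbar, if_pos hx]

lemma cbar_of_children_false (hjk : j ≤ k) (hk0 : 0 < k) (x : TV k L) (hx : x.1.val < L)
    (η : TV k L → Bool) (hc : ∀ m : Fin k, (m : ℕ) < j → η (chld x hx m) = false) :
    cbar j x η = 1 := by
  rw [cbar, if_neg (by omega)]
  rw [if_pos]
  have hsub : (Finset.range j).image
      (fun m => chld x hx ⟨m % k, Nat.mod_lt m (by omega)⟩)
      ⊆ Finset.univ.filter fun y : TV k L => childOf x y ∧ η y = false := by
    intro y hy
    simp only [Finset.mem_image, Finset.mem_range] at hy
    obtain ⟨m, hm, rfl⟩ := hy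
    refine Finset.mem_filter.2 ⟨Finset.mem_univ _, chld_childOf x hx _, hc _ ?_⟩
    simp only
    rw [Nat.mod_eq_of_lt (by omega)]
    exact hm
  have hcard : ((Finset.range j).image
      (fun m => chld x hx ⟨m % k, Nat.mod_lt m (by omega)⟩)).card = j := by
    rw [Finset.card_image_of_injOn, Finset.card_range]
    intro a ha b hb hab
    simp only [Finset.mem_coe, Finset.mem_range] at ha hb
    have := chld_inj x hx hab
    have h2 := congrArg Fin.val this
    simp only at h2
    rwa [Nat.mod_eq_of_lt (by omega), Nat.mod_eq_of_lt (by omega)] at h2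
  calc j = _ := hcard.symm
    _ ≤ _ := Finset.card_le_card hsub

/-- empties the first `m` children of `x` -/
def emptied (x : TV k L) (hx : x.1.val < L) (hk0 : 0 < k) :
    ℕ → (TV k L → Bool) → (TV k L → Bool)
  | 0, η => η
  | (m+1), η =>
      Function.update (emptied x hx hk0 m η) (chld x hx ⟨m % k, Nat.mod_lt m hk0⟩) false

lemma emptied_false (x : TV k L) (hx : x.1.val < L) (hk0 : 0 < k) (η : TV k L → Bool) :
    ∀ m, m ≤ k → ∀ m', m' < m →
      emptied x hx hk0 m η (chld x hx ⟨m' % k, Nat.mod_lt m' hk0⟩) = false := by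
  intro m
  induction m with
  | zero => omega
  | succ m ih =>
      intro hm m' hm'
      rw [emptied]
      by_cases he : m' = m
      · subst he
        rw [Function.update_self]
      · have hne : chld x hx ⟨m' % k, Nat.mod_lt m' hk0⟩
            ≠ chld x hx ⟨m % k, Nat.mod_lt m hk0⟩ := by
          intro hcontra
          have := congrArg Fin.val (chld_inj x hx hcontra)
          simp only at this
          rw [Nat.mod_eq_of_lt (by omega), Nat.mod_eq_of_lt (by omega)] at this
          exact he this
        rw [Function.update_of_ne hne]
        exact ih (by omega) m' (by omega)

lemma cbar_emptied (hjk : j ≤ k) (hk0 : 0 < k) (x : TV k L) (hx : x.1.val < L)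
    (η : TV k L → Bool) : cbar j x (emptied x hx hk0 j η) = 1 := by
  apply cbar_of_children_false hjk hk0 x hx
  intro m hm
  have : m = (⟨(m : ℕ) % k, Nat.mod_lt _ hk0⟩ : Fin k) := by
    apply Fin.ext; simp [Nat.mod_eq_of_lt m.isLt]
  rw [this]
  exact emptied_false x hx hk0 η j hjk (m : ℕ) hm

end Tree

end Aux

section Tree2

variable {k j L : ℕ}

lemma mean_emptied_le (p : ℝ) (hp0 : 0 < p) (hp1 : p < 1) (x : TV k L) (hx : x.1.val < L)
    (hk0 : 0 < k) {h : (TV k L → Bool) → ℝ} (hh : ∀ η, 0 ≤ h η) (m : ℕ) :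
    mean p (fun η => h (emptied x hx hk0 m η)) ≤ (min p (1 - p))⁻¹ ^ m * mean p h := by
  induction m generalizing h with
  | zero =>
      simp only [emptied, pow_zero, one_mul]
      exact le_of_eq rfl
  | succ m ih =>
      have key : (fun η => h (emptied x hx hk0 (m+1) η))
          = (fun η => (fun ζ => h (Function.update ζ
              (chld x hx ⟨m % k, Nat.mod_lt m hk0⟩) false)) (emptied x hx hk0 m η)) := rfl
      rw [key]
      have hh' : ∀ ζ, 0 ≤ (fun ζ => h (Function.update ζ
          (chld x hx ⟨m % k, Nat.mod_lt m hk0⟩) false)) ζ := fun ζ => hh _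
      calc mean p (fun η => (fun ζ => h (Function.update ζ
              (chld x hx ⟨m % k, Nat.mod_lt m hk0⟩) false)) (emptied x hx hk0 m η))
          ≤ (min p (1 - p))⁻¹ ^ m * mean p (fun ζ => h (Function.update ζ
              (chld x hx ⟨m % k, Nat.mod_lt m hk0⟩) false)) := ih hh'
        _ ≤ (min p (1 - p))⁻¹ ^ m * ((min p (1 - p))⁻¹ * mean p h) := by
            apply mul_le_mul_of_nonneg_left (cv_update p hp0 hp1 _ false hh)
            have hm0 : 0 < min p (1 - p) := lt_min hp0 (by linarith)
            exact pow_nonneg (inv_nonneg.2 (le_of_lt hm0)) m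
        _ = (min p (1 - p))⁻¹ ^ (m+1) * mean p h := by ring

lemma mean_emptied_update_le (p : ℝ) (hp0 : 0 < p) (hp1 : p < 1) (x : TV k L)
    (hx : x.1.val < L) (hk0 : 0 < k) {h : (TV k L → Bool) → ℝ} (hh : ∀ η, 0 ≤ h η)
    (m : ℕ) (c : Bool) :
    mean p (fun η => h (Function.update (emptied x hx hk0 m η) x c))
      ≤ (min p (1 - p))⁻¹ ^ (m+1) * mean p h := by
  have h2 : ∀ ζ, 0 ≤ (fun ζ => h (Function.update ζ x c)) ζ := fun ζ => hh _
  calc mean p (fun η => h (Function.update (emptied x hx hk0 m η) x c))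
      ≤ (min p (1 - p))⁻¹ ^ m * mean p (fun ζ => h (Function.update ζ x c)) :=
        mean_emptied_le p hp0 hp1 x hx hk0 h2 m
    _ ≤ (min p (1 - p))⁻¹ ^ m * ((min p (1 - p))⁻¹ * mean p h) := by
        apply mul_le_mul_of_nonneg_left (cv_update p hp0 hp1 _ c hh)
        have hm0 : 0 < min p (1 - p) := lt_min hp0 (by linarith)
        exact pow_nonneg (inv_nonneg.2 (le_of_lt hm0)) m
    _ = (min p (1 - p))⁻¹ ^ (m+1) * mean p h := by ring

lemma block_est (p : ℝ) (hp0 : 0 < p) (hp1 : p < 1) (hk : 2 ≤ k) (hj1 : 1 ≤ j)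
    (hjk : j ≤ k) (f : (TV k L → Bool) → ℝ) (x : TV k L) (hx : x.1.val < L) :
    mean p (cvar p {x} f) ≤ (6 * ((j:ℝ)+1) * (min p (1-p))⁻¹ ^ (j+1)) *
      (mean p (fun η => cbar j x η * cvar p {x} f η)
        + ∑ m ∈ Finset.range j,
            mean p (cvar p {chld x hx ⟨m % k, Nat.mod_lt m (by omega)⟩} f)) := by
  have hk0 : 0 < k := by omega
  set M : ℝ := (min p (1-p))⁻¹ with hMdef
  have hm0 : 0 < min p (1-p) := lt_min hp0 (by linarith)
  have hM0 : 0 < M := by positivity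
  have hM1 : 1 ≤ M := by
    rw [hMdef]
    exact one_le_inv₀ hm0 |>.mpr (le_trans (min_le_left _ _) (by linarith))
  have hq0 : 0 < p * (1-p) := by nlinarith
  set y : ℕ → TV k L := fun m => chld x hx ⟨m % k, Nat.mod_lt m hk0⟩ with hydef
  set Dfun : TV k L → (TV k L → Bool) → ℝ := fun z η =>
    (f (Function.update η z true) - f (Function.update η z false))^2 with hDdef
  have hDnn : ∀ z η, 0 ≤ Dfun z η := fun z η => sq_nonneg _
  have hcvar : ∀ z : TV k L, cvar p {z} f = fun η => p * (1-p) * Dfun z η := by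
    intro z; funext η; rw [cvar_single]
  set G : (TV k L → Bool) → ℝ := fun ζ => cbar j x ζ * Dfun x ζ with hGdef
  have hGnn : ∀ ζ, 0 ≤ G ζ := fun ζ => mul_nonneg (cbar_nonneg x ζ) (hDnn x ζ)
  -- pointwise estimate
  have point : ∀ η, Dfun x η ≤ 3 * G (emptied x hx hk0 j η)
      + 3 * (j:ℝ) * ∑ m ∈ Finset.range j,
          (Dfun (y m) (Function.update (emptied x hx hk0 m η) x true)
            + Dfun (y m) (Function.update (emptied x hx hk0 m η) x false)) := by
    intro η
    set A : Bool → ℕ → ℝ := fun c m => f (Function.update (emptied x hx hk0 m η) x c)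
      with hAdef
    have hstep : ∀ (c : Bool) m, m < j → (A c m - A c (m+1))^2
        ≤ Dfun (y m) (Function.update (emptied x hx hk0 m η) x c) := by
      intro c m hm
      have hyne : y m ≠ x := chld_ne x hx _
      have he : A c (m+1) = f (Function.update
          (Function.update (emptied x hx hk0 m η) x c) (y m) false) := by
        rw [hAdef]
        simp only
        rw [show emptied x hx hk0 (m+1) η
            = Function.update (emptied x hx hk0 m η) (y m) false from rfl]
        rw [Function.update_comm hyne]
      rw [he]
      exact diff_sq_le f (Function.update (emptied x hx hk0 m η) x c) (y m)
    have tel : ∀ c : Bool, A c 0 - A c j = ∑ m ∈ Finset.range j, (A c m - A c (m+1)) :=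
      fun c => (Finset.sum_range_sub' (A c) j).symm
    have hsq : ∀ c : Bool, (A c 0 - A c j)^2 ≤ (j:ℝ) * ∑ m ∈ Finset.range j,
        Dfun (y m) (Function.update (emptied x hx hk0 m η) x c) := by
      intro c
      rw [tel c]
      calc (∑ m ∈ Finset.range j, (A c m - A c (m+1)))^2
          ≤ (j:ℝ) * ∑ m ∈ Finset.range j, (A c m - A c (m+1))^2 :=
            sq_sum_le j _
        _ ≤ (j:ℝ) * ∑ m ∈ Finset.range j,
              Dfun (y m) (Function.update (emptied x hx hk0 m η) x c) := by
            apply mul_le_mul_of_nonneg_left _ (by positivity)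
            exact Finset.sum_le_sum fun m hm => hstep c m (Finset.mem_range.1 hm)
    have hD0 : Dfun x η = (A true 0 - A false 0)^2 := by
      rw [hDdef, hAdef]
      simp only
      rw [show emptied x hx hk0 0 η = η from rfl]
    have hDj : (A true j - A false j)^2 = Dfun x (emptied x hx hk0 j η) := by
      rw [hDdef, hAdef]
    have hGj : G (emptied x hx hk0 j η) = Dfun x (emptied x hx hk0 j η) := by
      rw [hGdef]
      simp only
      rw [cbar_emptied hjk hk0 x hx η, one_mul]
    have decomp : A true 0 - A false 0
        = (A true j - A false j) + (A true 0 - A true j) - (A false 0 - A false j) := by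
      ring
    have key : (A true 0 - A false 0)^2 ≤ 3 * (A true j - A false j)^2
        + 3 * (A true 0 - A true j)^2 + 3 * (A false 0 - A false j)^2 := by
      rw [decomp]
      nlinarith [sq_nonneg ((A true j - A false j) - (A true 0 - A true j)),
        sq_nonneg ((A true j - A false j) + (A false 0 - A false j)),
        sq_nonneg ((A true 0 - A true j) + (A false 0 - A false j))]
    have hsplit : ∑ m ∈ Finset.range j,
        (Dfun (y m) (Function.update (emptied x hx hk0 m η) x true)
          + Dfun (y m) (Function.update (emptied x hx hk0 m η) x false))
        = (∑ m ∈ Finset.range j,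
            Dfun (y m) (Function.update (emptied x hx hk0 m η) x true))
          + ∑ m ∈ Finset.range j,
            Dfun (y m) (Function.update (emptied x hx hk0 m η) x false) :=
      Finset.sum_add_distrib
    rw [hD0, hsplit, hGj, hDj.symm]
    have h1 := hsq true
    have h2 := hsq false
    nlinarith [key]
  -- take means
  have meanineq : mean p (Dfun x) ≤ 3 * (M^j * mean p G)
      + 3 * (j:ℝ) * ∑ m ∈ Finset.range j, (M^j * mean p (Dfun (y m)) + M^j * mean p (Dfun (y m))) := by
    have step1 : mean p (Dfun x) ≤ mean p (fun η => 3 * G (emptied x hx hk0 j η)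
        + 3 * (j:ℝ) * ∑ m ∈ Finset.range j,
            (Dfun (y m) (Function.update (emptied x hx hk0 m η) x true)
              + Dfun (y m) (Function.update (emptied x hx hk0 m η) x false))) :=
      mean_mono hp0 hp1 point
    have step2 : mean p (fun η => 3 * G (emptied x hx hk0 j η)
        + 3 * (j:ℝ) * ∑ m ∈ Finset.range j,
            (Dfun (y m) (Function.update (emptied x hx hk0 m η) x true)
              + Dfun (y m) (Function.update (emptied x hx hk0 m η) x false)))
        = 3 * mean p (fun η => G (emptied x hx hk0 j η))
          + 3 * (j:ℝ) * ∑ m ∈ Finset.range j,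
              (mean p (fun η => Dfun (y m) (Function.update (emptied x hx hk0 m η) x true))
               + mean p (fun η => Dfun (y m) (Function.update (emptied x hx hk0 m η) x false))) := by
      rw [mean_add]
      congr 1
      · exact mean_smul 3 _
      · rw [show (fun η => 3 * (j:ℝ) * ∑ m ∈ Finset.range j,
            (Dfun (y m) (Function.update (emptied x hx hk0 m η) x true)
              + Dfun (y m) (Function.update (emptied x hx hk0 m η) x false)))
            = (fun η => (3 * (j:ℝ)) * ((fun η => ∑ m ∈ Finset.range j,
            (Dfun (y m) (Function.update (emptied x hx hk0 m η) x true)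
              + Dfun (y m) (Function.update (emptied x hx hk0 m η) x false))) η)) from rfl]
        rw [mean_smul]
        congr 1
        rw [mean_sum]
        refine Finset.sum_congr rfl fun m hm => mean_add p _ _
    have bG : mean p (fun η => G (emptied x hx hk0 j η)) ≤ M^j * mean p G :=
      mean_emptied_le p hp0 hp1 x hx hk0 hGnn j
    have bD : ∀ m ∈ Finset.range j, ∀ c : Bool,
        mean p (fun η => Dfun (y m) (Function.update (emptied x hx hk0 m η) x c))
          ≤ M^j * mean p (Dfun (y m)) := by
      intro m hm c
      have hmj : m + 1 ≤ j := Finset.mem_range.1 hm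
      calc mean p (fun η => Dfun (y m) (Function.update (emptied x hx hk0 m η) x c))
          ≤ M^(m+1) * mean p (Dfun (y m)) :=
            mean_emptied_update_le p hp0 hp1 x hx hk0 (hDnn (y m)) m c
        _ ≤ M^j * mean p (Dfun (y m)) := by
            apply mul_le_mul_of_nonneg_right (pow_le_pow_right₀ hM1 hmj)
            exact mean_nonneg hp0 hp1 (hDnn (y m))
    calc mean p (Dfun x) ≤ _ := step1
      _ = _ := step2
      _ ≤ 3 * (M^j * mean p G)
          + 3 * (j:ℝ) * ∑ m ∈ Finset.range j,
              (M^j * mean p (Dfun (y m)) + M^j * mean p (Dfun (y m))) := by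
        have hsum : ∑ m ∈ Finset.range j,
            (mean p (fun η => Dfun (y m) (Function.update (emptied x hx hk0 m η) x true))
             + mean p (fun η => Dfun (y m) (Function.update (emptied x hx hk0 m η) x false)))
            ≤ ∑ m ∈ Finset.range j,
              (M^j * mean p (Dfun (y m)) + M^j * mean p (Dfun (y m))) :=
          Finset.sum_le_sum fun m hm => add_le_add (bD m hm true) (bD m hm false)
        have h3 : (0:ℝ) ≤ 3 * (j:ℝ) := by positivity
        nlinarith [mul_le_mul_of_nonneg_left hsum h3, bG]
  -- convert to cvar
  have conv1 : mean p (cvar p {x} f) = p * (1-p) * mean p (Dfun x) := by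
    rw [hcvar x, mean_smul]
  have conv2 : mean p (fun η => cbar j x η * cvar p {x} f η) = p * (1-p) * mean p G := by
    rw [show (fun η => cbar j x η * cvar p {x} f η)
        = (fun η => p * (1-p) * G η) from by
      funext η
      rw [hcvar x, hGdef]
      simp only
      ring]
    exact mean_smul _ _
  have conv3 : ∀ m, mean p (cvar p {y m} f) = p * (1-p) * mean p (Dfun (y m)) := by
    intro m
    rw [hcvar (y m), mean_smul]
  have hGm : 0 ≤ mean p G := mean_nonneg hp0 hp1 hGnn
  have hDm : ∀ m, 0 ≤ mean p (Dfun (y m)) := fun m => mean_nonneg hp0 hp1 (hDnn (y m))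
  have hSm : 0 ≤ ∑ m ∈ Finset.range j, mean p (Dfun (y m)) :=
    Finset.sum_nonneg fun m _ => hDm m
  have hsum_eq : ∑ m ∈ Finset.range j,
      mean p (cvar p {chld x hx ⟨m % k, Nat.mod_lt m (by omega)⟩} f)
      = p * (1-p) * ∑ m ∈ Finset.range j, mean p (Dfun (y m)) := by
    rw [Finset.mul_sum]
    exact Finset.sum_congr rfl fun m _ => conv3 m
  rw [conv1, conv2, hsum_eq]
  have simp_rhs : ∑ m ∈ Finset.range j, (M^j * mean p (Dfun (y m)) + M^j * mean p (Dfun (y m)))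
      = 2 * M^j * ∑ m ∈ Finset.range j, mean p (Dfun (y m)) := by
    rw [Finset.mul_sum]
    exact Finset.sum_congr rfl fun m _ => by ring
  rw [simp_rhs] at meanineq
  -- final arithmetic
  have hMj0 : 0 < M^j := by positivity
  have hMjj : M^j ≤ M^(j+1) := pow_le_pow_right₀ hM1 (by omega)
  have coeffG : 3 * M^j ≤ 6 * ((j:ℝ)+1) * M^(j+1) := by
    have hj0 : (1:ℝ) ≤ (j:ℝ) := by exact_mod_cast hj1
    nlinarith
  have coeffD : 6 * (j:ℝ) * M^j ≤ 6 * ((j:ℝ)+1) * M^(j+1) := by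
    have hj0 : (1:ℝ) ≤ (j:ℝ) := by exact_mod_cast hj1
    nlinarith
  calc p * (1-p) * mean p (Dfun x)
      ≤ p * (1-p) * (3 * (M^j * mean p G)
          + 3 * (j:ℝ) * (2 * M^j * ∑ m ∈ Finset.range j, mean p (Dfun (y m)))) :=
        mul_le_mul_of_nonneg_left meanineq (le_of_lt hq0)
    _ ≤ p * (1-p) * ((6 * ((j:ℝ)+1) * M^(j+1)) * mean p G
          + (6 * ((j:ℝ)+1) * M^(j+1)) * ∑ m ∈ Finset.range j, mean p (Dfun (y m))) := by
        apply mul_le_mul_of_nonneg_left _ (le_of_lt hq0)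
        have t1 : 3 * (M^j * mean p G) ≤ (6 * ((j:ℝ)+1) * M^(j+1)) * mean p G := by
          have := mul_le_mul_of_nonneg_right coeffG hGm
          nlinarith
        have t2 : 3 * (j:ℝ) * (2 * M^j * ∑ m ∈ Finset.range j, mean p (Dfun (y m)))
            ≤ (6 * ((j:ℝ)+1) * M^(j+1)) * ∑ m ∈ Finset.range j, mean p (Dfun (y m)) := by
          have := mul_le_mul_of_nonneg_right coeffD hSm
          nlinarith
        linarith
    _ = (6 * ((j:ℝ)+1) * M^(j+1)) *
          (p * (1-p) * mean p G + p * (1-p) * ∑ m ∈ Finset.range j, mean p (Dfun (y m))) := by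
        ring

end Tree2

section Aux2
variable {V : Type*} [Fintype V] [DecidableEq V]

lemma varTot_nonneg (p : ℝ) (hp0 : 0 < p) (hp1 : p < 1) (f : (V → Bool) → ℝ) :
    0 ≤ varTot p f := by
  rw [varTot_eq_mean_cvar_univ]
  exact mean_nonneg hp0 hp1 fun η => cvar_nonneg p hp0 hp1 _ f η

lemma varTot_indicator (p : ℝ) (v : V) :
    varTot p (fun η : V → Bool => if η v then (1:ℝ) else 0) = p - p^2 := by
  set f : (V → Bool) → ℝ := fun η => if η v then (1:ℝ) else 0 with hf
  have hsq : (fun η => f η ^ 2) = f := by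
    funext η; rw [hf]; by_cases h : η v <;> simp [h]
  have hc : cexp p {v} f = fun _ : V → Bool => p := by
    funext η
    rw [cexp_single, hf]
    simp [Function.update_self]
  have hm : mean p f = p := by
    rw [← mean_cexp ({v} : Finset V) f, hc, mean_const]
  rw [varTot, hsq, hm]

end Aux2

section Tree3

variable {k j L : ℕ}

lemma dirO_nonneg (p : ℝ) (hp0 : 0 < p) (hp1 : p < 1) (f : (TV k L → Bool) → ℝ) :
    0 ≤ dirO k j L p f := by
  unfold dirO
  refine Finset.sum_nonneg fun x _ => mean_nonneg hp0 hp1 fun η => ?_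
  exact mul_nonneg (cbar_nonneg x η) (cvar_nonneg p hp0 hp1 _ f η)

lemma term_le_dirO (p : ℝ) (hp0 : 0 < p) (hp1 : p < 1) (f : (TV k L → Bool) → ℝ)
    (x : TV k L) :
    mean p (fun η => cbar j x η * cvar p {x} f η) ≤ dirO k j L p f := by
  unfold dirO
  refine Finset.single_le_sum
    (f := fun z => mean p (fun η => cbar j z η * cvar p {z} f η))
    (fun z _ => mean_nonneg hp0 hp1 fun η =>
      mul_nonneg (cbar_nonneg z η) (cvar_nonneg p hp0 hp1 _ f η))
    (Finset.mem_univ x)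

lemma depth_rec (p : ℝ) (hp0 : 0 < p) (hp1 : p < 1) (hk : 2 ≤ k) (hj1 : 1 ≤ j)
    (hjk : j ≤ k) (f : (TV k L → Bool) → ℝ) :
    ∀ n : ℕ, ∀ x : TV k L, L = x.1.val + n →
      mean p (cvar p {x} f) ≤
        ((6 * ((j:ℝ)+1) * (min p (1-p))⁻¹ ^ (j+1)) * ((j:ℝ)+1) + 1)^(n+1) * dirO k j L p f := by
  have hm0 : 0 < min p (1-p) := lt_min hp0 (by linarith)
  set C : ℝ := 6 * ((j:ℝ)+1) * (min p (1-p))⁻¹ ^ (j+1) with hCdef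
  set K : ℝ := C * ((j:ℝ)+1) + 1 with hKdef
  have hC0 : 0 ≤ C := by
    rw [hCdef]
    have : (0:ℝ) ≤ (min p (1-p))⁻¹ ^ (j+1) := pow_nonneg (inv_nonneg.2 hm0.le) _
    positivity
  have hj0 : (0:ℝ) ≤ (j:ℝ) := Nat.cast_nonneg j
  have hK1 : 1 ≤ K := by
    rw [hKdef]
    nlinarith
  have hD0 : 0 ≤ dirO k j L p f := dirO_nonneg p hp0 hp1 f
  intro n
  induction n with
  | zero =>
      intro x hLx
      have hleaf : x.1.val = L := by omega
      have heq : (fun η => cbar j x η * cvar p {x} f η) = cvar p {x} f := by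
        funext η
        rw [cbar_leaf x hleaf, one_mul]
      calc mean p (cvar p {x} f) = mean p (fun η => cbar j x η * cvar p {x} f η) := by
            rw [heq]
        _ ≤ dirO k j L p f := term_le_dirO (j := j) p hp0 hp1 f x
        _ ≤ K^(0+1) * dirO k j L p f := by
            rw [pow_one]
            exact le_mul_of_one_le_left hD0 hK1
  | succ n ih =>
      intro x hLx
      have hx : x.1.val < L := by omega
      have hKn1 : 1 ≤ K^(n+1) := one_le_pow₀ hK1
      have hS : ∑ m ∈ Finset.range j,
          mean p (cvar p {chld x hx ⟨m % k, Nat.mod_lt m (by omega)⟩} f)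
          ≤ (j:ℝ) * (K^(n+1) * dirO k j L p f) := by
        calc ∑ m ∈ Finset.range j,
            mean p (cvar p {chld x hx ⟨m % k, Nat.mod_lt m (by omega)⟩} f)
            ≤ ∑ _m ∈ Finset.range j, K^(n+1) * dirO k j L p f := by
              refine Finset.sum_le_sum fun m hm => ?_
              exact ih (chld x hx ⟨m % k, Nat.mod_lt m (by omega)⟩)
                (by show L = x.1.val + 1 + n; omega)
          _ = (j:ℝ) * (K^(n+1) * dirO k j L p f) := by
              rw [Finset.sum_const, Finset.card_range, nsmul_eq_mul]
      have hT1 := term_le_dirO (j := j) p hp0 hp1 f x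
      calc mean p (cvar p {x} f)
          ≤ C * (mean p (fun η => cbar j x η * cvar p {x} f η)
              + ∑ m ∈ Finset.range j,
                  mean p (cvar p {chld x hx ⟨m % k, Nat.mod_lt m (by omega)⟩} f)) :=
            block_est p hp0 hp1 hk hj1 hjk f x hx
        _ ≤ C * (dirO k j L p f + (j:ℝ) * (K^(n+1) * dirO k j L p f)) :=
            mul_le_mul_of_nonneg_left (add_le_add hT1 hS) hC0
        _ ≤ K^(n+1+1) * dirO k j L p f := by
            have hps : K^(n+1+1) = K^(n+1) * K := pow_succ K (n+1)
            have hKD : 0 ≤ K^(n+1) * dirO k j L p f :=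
              mul_nonneg (pow_nonneg (by linarith) _) hD0
            have hcd : C * dirO k j L p f ≤ C * (K^(n+1) * dirO k j L p f) :=
              mul_le_mul_of_nonneg_left (le_mul_of_one_le_left hD0 hKn1) hC0
            have expand : K^(n+1) * K * dirO k j L p f
                = C * (j:ℝ) * (K^(n+1) * dirO k j L p f)
                  + C * (K^(n+1) * dirO k j L p f) + K^(n+1) * dirO k j L p f := by
              rw [hKdef]; ring
            rw [hps, expand]
            nlinarith [hcd, hKD]

lemma card_TV_le (hk1 : 1 ≤ k) : Fintype.card (TV k L) ≤ (L+1) * k^L := by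
  classical
  rw [Fintype.card_sigma]
  calc ∑ m : Fin (L+1), Fintype.card (Fin (m.val) → Fin k)
      ≤ ∑ _m : Fin (L+1), k^L := by
        refine Finset.sum_le_sum fun m _ => ?_
        rw [Fintype.card_fun, Fintype.card_fin, Fintype.card_fin]
        exact Nat.pow_le_pow_right hk1 (by omega)
    _ = (L+1) * k^L := by
        rw [Finset.sum_const, Finset.card_univ, Fintype.card_fin, smul_eq_mul]

lemma var_bound (p : ℝ) (hp0 : 0 < p) (hp1 : p < 1) (hk : 2 ≤ k) (hj1 : 1 ≤ j)
    (hjk : j ≤ k) (f : (TV k L → Bool) → ℝ) :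
    varTot p f ≤ ((Fintype.card (TV k L) : ℝ) *
        ((6 * ((j:ℝ)+1) * (min p (1-p))⁻¹ ^ (j+1)) * ((j:ℝ)+1) + 1)^(L+1)) * dirO k j L p f := by
  have hm0 : 0 < min p (1-p) := lt_min hp0 (by linarith)
  set C : ℝ := 6 * ((j:ℝ)+1) * (min p (1-p))⁻¹ ^ (j+1) with hCdef
  set K : ℝ := C * ((j:ℝ)+1) + 1 with hKdef
  have hC0 : 0 ≤ C := by
    rw [hCdef]
    have : (0:ℝ) ≤ (min p (1-p))⁻¹ ^ (j+1) := pow_nonneg (inv_nonneg.2 hm0.le) _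
    positivity
  have hj0 : (0:ℝ) ≤ (j:ℝ) := Nat.cast_nonneg j
  have hK1 : 1 ≤ K := by rw [hKdef]; nlinarith
  have hD0 : 0 ≤ dirO k j L p f := dirO_nonneg p hp0 hp1 f
  calc varTot p f ≤ ∑ x : TV k L, mean p (cvar p {x} f) := efron_stein p hp0 hp1 f
    _ ≤ ∑ _x : TV k L, K^(L+1) * dirO k j L p f := by
        refine Finset.sum_le_sum fun x _ => ?_
        have hxle : x.1.val ≤ L := by have := x.1.isLt; omega
        calc mean p (cvar p {x} f)
            ≤ K^((L - x.1.val)+1) * dirO k j L p f :=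
              depth_rec p hp0 hp1 hk hj1 hjk f (L - x.1.val) x (by omega)
          _ ≤ K^(L+1) * dirO k j L p f := by
              apply mul_le_mul_of_nonneg_right _ hD0
              exact pow_le_pow_right₀ hK1 (by omega)
    _ = ((Fintype.card (TV k L) : ℝ) * K^(L+1)) * dirO k j L p f := by
        rw [Finset.sum_const, Finset.card_univ, nsmul_eq_mul]
        ring

end Tree3

theorem gap_lower_bound (k j : ℕ) (p : ℝ) (hk : 2 ≤ k) (hj : 2 ≤ j) (hjk : j ≤ k)
    (hp : p ∈ Set.Ioo (0 : ℝ) 1) :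
    ∃ c > (0 : ℝ), ∀ L : ℕ, 1 ≤ L → Real.exp (-(c * L)) ≤ gapO k j L p := by
  obtain ⟨hp0, hp1⟩ := hp
  have hj1 : 1 ≤ j := by omega
  have hm0 : 0 < min p (1-p) := lt_min hp0 (by linarith)
  set C : ℝ := 6 * ((j:ℝ)+1) * (min p (1-p))⁻¹ ^ (j+1) with hCdef
  set K : ℝ := C * ((j:ℝ)+1) + 1 with hKdef
  have hC0 : 0 ≤ C := by
    rw [hCdef]
    exact mul_nonneg (by positivity) (pow_nonneg (inv_nonneg.2 hm0.le) _)
  have hj0 : (0:ℝ) ≤ (j:ℝ) := Nat.cast_nonneg j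
  have hK1 : 1 ≤ K := by rw [hKdef]; nlinarith
  set A : ℝ := (2*(k:ℝ)*K)^2 with hAdef
  have hk2 : (2:ℝ) ≤ (k:ℝ) := by exact_mod_cast hk
  have h2kK : 1 ≤ 2*(k:ℝ)*K := by nlinarith
  have hA1 : 1 ≤ A := by rw [hAdef]; nlinarith
  have hA0 : 0 < A := by linarith
  refine ⟨Real.log A + 1, by have := Real.log_nonneg hA1; linarith, ?_⟩
  intro L hL
  unfold gapO
  apply le_csInf
  · refine ⟨_, ⟨(fun η => if η (rootT k L) then (1:ℝ) else 0), ?_, rfl⟩⟩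
    rw [varTot_indicator p (rootT k L)]
    nlinarith
  · rintro r ⟨f, hfvar, rfl⟩
    have hv0 : 0 ≤ varTot p f := varTot_nonneg p hp0 hp1 f
    have hvpos : 0 < varTot p f := lt_of_le_of_ne hv0 (Ne.symm hfvar)
    have hD0 : 0 ≤ dirO k j L p f := dirO_nonneg p hp0 hp1 f
    have hcard : (Fintype.card (TV k L) : ℝ) ≤ ((L:ℝ)+1) * (k:ℝ)^L := by
      have h := card_TV_le (k := k) (L := L) (by omega)
      calc (Fintype.card (TV k L):ℝ) ≤ (((L+1) * k^L : ℕ) : ℝ) := by exact_mod_cast h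
        _ = ((L:ℝ)+1)*(k:ℝ)^L := by push_cast; ring
    have hL1 : ((L:ℝ)+1) ≤ (2:ℝ)^(2*L) := by
      have h1 : L + 1 ≤ 2^(L+1) := le_of_lt (Nat.lt_two_pow_self (n := L+1))
      have h2 : 2^(L+1) ≤ 2^(2*L) := Nat.pow_le_pow_right (by omega) (by omega)
      calc ((L:ℝ)+1) = ((L+1 : ℕ):ℝ) := by push_cast; ring
        _ ≤ ((2^(2*L) : ℕ):ℝ) := by exact_mod_cast le_trans h1 h2
        _ = (2:ℝ)^(2*L) := by push_cast; ring
    have hkL : (k:ℝ)^L ≤ (k:ℝ)^(2*L) := pow_le_pow_right₀ (by linarith) (by omega)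
    have hKL : K^(L+1) ≤ K^(2*L) := pow_le_pow_right₀ hK1 (by omega)
    have hK0' : (0:ℝ) ≤ K := by linarith
    have hcoeff : (Fintype.card (TV k L) : ℝ) * K^(L+1) ≤ A^L := by
      have e : A^L = ((2:ℝ)^(2*L) * (k:ℝ)^(2*L)) * K^(2*L) := by
        rw [hAdef, ← pow_mul, mul_pow, mul_pow]
      calc (Fintype.card (TV k L) : ℝ) * K^(L+1)
          ≤ (((L:ℝ)+1)*(k:ℝ)^L) * K^(L+1) :=
            mul_le_mul_of_nonneg_right hcard (pow_nonneg hK0' _)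
        _ ≤ ((2:ℝ)^(2*L)*(k:ℝ)^(2*L)) * K^(2*L) := by
            apply mul_le_mul _ hKL (pow_nonneg hK0' _)
            · positivity
            · apply mul_le_mul hL1 hkL (pow_nonneg (by linarith) _) (by positivity)
        _ = A^L := e.symm
    have hvb : varTot p f ≤ A^L * dirO k j L p f := by
      calc varTot p f
          ≤ ((Fintype.card (TV k L) : ℝ) * K^(L+1)) * dirO k j L p f :=
            var_bound p hp0 hp1 hk hj1 hjk f
        _ ≤ A^L * dirO k j L p f := mul_le_mul_of_nonneg_right hcoeff hD0
    have hAL0 : 0 < A^L := pow_pos hA0 L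
    have hstep1 : (A^L)⁻¹ ≤ dirO k j L p f / varTot p f := by
      rw [le_div_iff₀ hvpos]
      calc (A^L)⁻¹ * varTot p f ≤ (A^L)⁻¹ * (A^L * dirO k j L p f) :=
            mul_le_mul_of_nonneg_left hvb (inv_nonneg.2 hAL0.le)
        _ = dirO k j L p f := by
            field_simp
    have hstep2 : Real.exp (-((Real.log A + 1) * L)) ≤ (A^L)⁻¹ := by
      rw [Real.exp_neg]
      apply inv_anti₀ hAL0
      have e2 : A^L = Real.exp ((L:ℝ) * Real.log A) := by
        rw [Real.exp_nat_mul, Real.exp_log hA0]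
      rw [e2]
      apply Real.exp_le_exp.2
      have hL0 : (0:ℝ) ≤ (L:ℝ) := Nat.cast_nonneg L
      nlinarith [Real.log_nonneg hA1]
    exact le_trans hstep2 hstep1
end
end

section
/- Let p ∈ (0,1) and ℓ ≥ 1, and let p_ℓ^{NE} be the probability, under the Bernoulli(p) product measure on {0,1}^{Λ_ℓ}, that the origin is occupied after ℓ iterations of the North-East bootstrap map with occupied boundary conditions on Λ_ℓ. If (ℓ+1)² · p_ℓ^{NE}/p ≤ 1/4, then for every L ≥ 0 and every f : {0,1}^{Λ_L} → ℝ, Var_μ(f) ≤ 8 · ∑_{x ∈ Λ_L} μ( c_x^{(ℓ)} · Var_x(f) ), where c_x^{(ℓ)} is the long-range North-East constraint on Λ_L with empty boundary conditions; in particular the constant 8 is independent of L. -/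
open scoped Classical
set_option linter.unusedSectionVars false
set_option linter.unnecessarySeqFocus false

noncomputable section

namespace NEP

open Finset Function

variable {V : Type*} [Fintype V] [DecidableEq V] {p : ℝ}

def nu (p : ℝ) (b : Bool) : ℝ := if b then p else 1 - p

lemma nu_nonneg (hp0 : 0 ≤ p) (hp1 : p ≤ 1) (b : Bool) : 0 ≤ nu p b := by
  cases b <;> simp [nu] <;> linarith

def ker (p : ℝ) (A : Finset V) (η ζ : V → Bool) : ℝ :=
  ∏ x : V, if x ∈ A then nu p (ζ x) else (if ζ x = η x then 1 else 0)

lemma wt_eq (η : V → Bool) : wt p η = ∏ x : V, nu p (η x) := rfl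

lemma cexp_eq (A : Finset V) (f : (V → Bool) → ℝ) (η : V → Bool) :
    cexp p A f η = ∑ ζ : V → Bool, ker p A η ζ * f ζ := rfl

lemma sum_fun_prod (g : V → Bool → ℝ) :
    ∑ ζ : V → Bool, ∏ y : V, g y (ζ y) = ∏ y : V, (g y true + g y false) := by
  have h1 : ∀ y : V, g y true + g y false = ∑ b : Bool, g y b := by
    intro y; rw [Fintype.sum_bool]
  simp_rw [h1]
  rw [Finset.prod_univ_sum (fun _ => (univ : Finset Bool)) g]
  rw [Fintype.piFinset_univ]

lemma ker_nonneg (hp0 : 0 ≤ p) (hp1 : p ≤ 1) (A : Finset V) (η ζ : V → Bool) :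
    0 ≤ ker p A η ζ := by
  refine Finset.prod_nonneg fun x _ => ?_
  by_cases hx : x ∈ A
  · simpa [hx] using nu_nonneg hp0 hp1 (ζ x)
  · simp only [hx, if_false]; positivity

lemma wt_nonneg (hp0 : 0 ≤ p) (hp1 : p ≤ 1) (η : V → Bool) : 0 ≤ wt p η := by
  rw [wt_eq]; exact Finset.prod_nonneg fun x _ => nu_nonneg hp0 hp1 _

lemma ker_sum (A : Finset V) (η : V → Bool) : ∑ ζ : V → Bool, ker p A η ζ = 1 := by
  unfold ker
  rw [sum_fun_prod (fun y b => if y ∈ A then nu p b else (if b = η y then 1 else 0))]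
  rw [Finset.prod_eq_one]
  intro x _
  by_cases hx : x ∈ A
  · simp [hx, nu]
  · cases h : η x <;> simp [hx, h]

lemma sum_wt : ∑ η : V → Bool, wt p η = 1 := by
  simp_rw [wt_eq]
  rw [sum_fun_prod (fun _ b => nu p b)]
  rw [Finset.prod_eq_one]
  intro x _; simp [nu]

lemma mean_const (a : ℝ) : mean p (fun _ : V → Bool => a) = a := by
  unfold mean
  rw [← Finset.sum_mul, sum_wt, one_mul]

lemma mean_congr {f g : (V → Bool) → ℝ} (h : ∀ η, f η = g η) : mean p f = mean p g := by
  unfold mean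
  exact Finset.sum_congr rfl fun η _ => by rw [h η]

lemma mean_add (f g : (V → Bool) → ℝ) :
    mean p (fun η => f η + g η) = mean p f + mean p g := by
  unfold mean; rw [← Finset.sum_add_distrib]; congr 1; funext η; ring

lemma mean_sub (f g : (V → Bool) → ℝ) :
    mean p (fun η => f η - g η) = mean p f - mean p g := by
  unfold mean; rw [← Finset.sum_sub_distrib]; congr 1; funext η; ring

lemma mean_smul (a : ℝ) (f : (V → Bool) → ℝ) :
    mean p (fun η => a * f η) = a * mean p f := by
  unfold mean; rw [Finset.mul_sum]; congr 1; funext η; ring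

lemma mean_mono (hp0 : 0 ≤ p) (hp1 : p ≤ 1) {f g : (V → Bool) → ℝ}
    (h : ∀ η, f η ≤ g η) : mean p f ≤ mean p g := by
  unfold mean
  exact Finset.sum_le_sum fun η _ => mul_le_mul_of_nonneg_left (h η) (wt_nonneg hp0 hp1 η)

lemma mean_nonneg (hp0 : 0 ≤ p) (hp1 : p ≤ 1) {f : (V → Bool) → ℝ}
    (h : ∀ η, 0 ≤ f η) : 0 ≤ mean p f := by
  have := mean_mono (p := p) hp0 hp1 (f := fun _ => 0) (g := f) (fun η => h η)
  rwa [mean_const] at this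

lemma cexp_add (A : Finset V) (f g : (V → Bool) → ℝ) (η : V → Bool) :
    cexp p A (fun ζ => f ζ + g ζ) η = cexp p A f η + cexp p A g η := by
  unfold cexp; rw [← Finset.sum_add_distrib]; congr 1; funext ζ; ring

lemma cexp_sub (A : Finset V) (f g : (V → Bool) → ℝ) (η : V → Bool) :
    cexp p A (fun ζ => f ζ - g ζ) η = cexp p A f η - cexp p A g η := by
  unfold cexp; rw [← Finset.sum_sub_distrib]; congr 1; funext ζ; ring

lemma cexp_smul (A : Finset V) (a : ℝ) (f : (V → Bool) → ℝ) (η : V → Bool) :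
    cexp p A (fun ζ => a * f ζ) η = a * cexp p A f η := by
  unfold cexp; rw [Finset.mul_sum]; congr 1; funext ζ; ring

lemma cexp_const (A : Finset V) (a : ℝ) (η : V → Bool) :
    cexp p A (fun _ => a) η = a := by
  rw [cexp_eq, ← Finset.sum_mul, ker_sum, one_mul]

lemma cexp_mono (hp0 : 0 ≤ p) (hp1 : p ≤ 1) (A : Finset V) {f g : (V → Bool) → ℝ}
    (h : ∀ ζ, f ζ ≤ g ζ) (η : V → Bool) : cexp p A f η ≤ cexp p A g η := by
  rw [cexp_eq, cexp_eq]
  exact Finset.sum_le_sum fun ζ _ =>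
    mul_le_mul_of_nonneg_left (h ζ) (ker_nonneg hp0 hp1 A η ζ)

lemma cexp_nonneg (hp0 : 0 ≤ p) (hp1 : p ≤ 1) (A : Finset V) {f : (V → Bool) → ℝ}
    (h : ∀ ζ, 0 ≤ f ζ) (η : V → Bool) : 0 ≤ cexp p A f η := by
  have := cexp_mono (p := p) hp0 hp1 A (f := fun _ => 0) (g := f) h η
  rwa [cexp_const] at this


lemma ker_ne_zero_imp {A : Finset V} {η ζ : V → Bool} (h : ker p A η ζ ≠ 0) :
    ∀ y, y ∉ A → ζ y = η y := by
  intro y hy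
  by_contra hne
  apply h
  refine Finset.prod_eq_zero (Finset.mem_univ y) ?_
  simp [hy, hne]

lemma ker_congr_offA {A : Finset V} {η η' ζ : V → Bool}
    (h : ∀ y, y ∉ A → η y = η' y) : ker p A η ζ = ker p A η' ζ := by
  refine Finset.prod_congr rfl fun x _ => ?_
  by_cases hx : x ∈ A
  · simp [hx]
  · simp [hx, h x hx]

lemma cexp_indep_offA {A : Finset V} {f : (V → Bool) → ℝ} {η η' : V → Bool}
    (h : ∀ y, y ∉ A → η y = η' y) : cexp p A f η = cexp p A f η' := by
  rw [cexp_eq, cexp_eq]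
  exact Finset.sum_congr rfl fun ζ _ => by rw [ker_congr_offA h]

lemma cexp_mul_indep {A : Finset V} (u v : (V → Bool) → ℝ)
    (hv : ∀ ζ η, (∀ y, y ∉ A → ζ y = η y) → v ζ = v η) (η : V → Bool) :
    cexp p A (fun ζ => u ζ * v ζ) η = v η * cexp p A u η := by
  rw [cexp_eq, cexp_eq, Finset.mul_sum]
  refine Finset.sum_congr rfl fun ζ _ => ?_
  by_cases hk : ker p A η ζ = 0
  · simp [hk]
  · rw [hv ζ η (ker_ne_zero_imp hk)]; ring

lemma cexp_of_indep {A : Finset V} {f : (V → Bool) → ℝ}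
    (hf : ∀ ζ η, (∀ y, y ∉ A → ζ y = η y) → f ζ = f η) (η : V → Bool) :
    cexp p A f η = f η := by
  have h := cexp_mul_indep (p := p) (A := A) (fun _ => 1) f hf η
  simp only [one_mul] at h
  rw [h, cexp_const, mul_one]

lemma cexp_univ (f : (V → Bool) → ℝ) (η : V → Bool) :
    cexp p (univ : Finset V) f η = mean p f := by
  rw [cexp_eq]
  unfold mean
  refine Finset.sum_congr rfl fun ζ _ => ?_
  congr 1
  rw [wt_eq]
  exact Finset.prod_congr rfl fun x _ => by simp [ker]

lemma cexp_cexp (A B : Finset V) (f : (V → Bool) → ℝ) (η : V → Bool) :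
    cexp p A (cexp p B f) η = cexp p (A ∪ B) f η := by
  rw [cexp_eq]
  simp_rw [cexp_eq]
  have swap : ∑ ζ : V → Bool, ker p A η ζ * ∑ ξ : V → Bool, ker p B ζ ξ * f ξ
      = ∑ ξ : V → Bool, (∑ ζ : V → Bool, ker p A η ζ * ker p B ζ ξ) * f ξ := by
    simp_rw [Finset.mul_sum, Finset.sum_mul]
    rw [Finset.sum_comm]
    exact Finset.sum_congr rfl fun ξ _ => Finset.sum_congr rfl fun ζ _ => by ring
  rw [swap]
  refine Finset.sum_congr rfl fun ξ _ => ?_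
  congr 1
  have hprod : ∀ ζ : V → Bool, ker p A η ζ * ker p B ζ ξ
      = ∏ y : V, ((if y ∈ A then nu p (ζ y) else (if ζ y = η y then 1 else 0)) *
          (if y ∈ B then nu p (ξ y) else (if ξ y = ζ y then 1 else 0))) := by
    intro ζ; unfold ker; rw [← Finset.prod_mul_distrib]
  simp_rw [hprod]
  rw [sum_fun_prod (fun y b => (if y ∈ A then nu p b else (if b = η y then 1 else 0)) *
          (if y ∈ B then nu p (ξ y) else (if ξ y = b then 1 else 0)))]
  refine Finset.prod_congr rfl fun x _ => ?_
  by_cases hA : x ∈ A <;> by_cases hB : x ∈ B <;>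
    cases hη : η x <;> cases hξ : ξ x <;>
      simp [hA, hB, hη, hξ, ker, nu] <;> ring

lemma mean_cexp (A : Finset V) (f : (V → Bool) → ℝ) :
    mean p (cexp p A f) = mean p f := by
  unfold mean
  simp_rw [cexp_eq]
  have swap : ∑ η : V → Bool, wt p η * ∑ ζ : V → Bool, ker p A η ζ * f ζ
      = ∑ ζ : V → Bool, (∑ η : V → Bool, wt p η * ker p A η ζ) * f ζ := by
    simp_rw [Finset.mul_sum, Finset.sum_mul]
    rw [Finset.sum_comm]
    exact Finset.sum_congr rfl fun ζ _ => Finset.sum_congr rfl fun η _ => by ring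
  rw [swap]
  refine Finset.sum_congr rfl fun ζ _ => ?_
  congr 1
  have hprod : ∀ η : V → Bool, wt p η * ker p A η ζ
      = ∏ y : V, (nu p (η y) * (if y ∈ A then nu p (ζ y) else (if ζ y = η y then 1 else 0))) := by
    intro η; rw [wt_eq]; unfold ker; rw [← Finset.prod_mul_distrib]
  simp_rw [hprod]
  rw [sum_fun_prod (fun y b => nu p b * (if y ∈ A then nu p (ζ y) else (if ζ y = b then 1 else 0)))]
  rw [wt_eq]
  refine Finset.prod_congr rfl fun x _ => ?_
  by_cases hA : x ∈ A <;> cases hζ : ζ x <;> simp [hA, hζ, nu] <;> ring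

lemma cexp_local_const {A : Finset V} {f : (V → Bool) → ℝ}
    (hf : ∀ η η', (∀ y, y ∈ A → η y = η' y) → f η = f η') (η : V → Bool) :
    cexp p A f η = mean p f := by
  have h1 : cexp p Aᶜ f = f := by
    funext ζ
    exact cexp_of_indep (fun ζ' η' hagree => hf ζ' η'
      (fun y hy => hagree y (by simp [hy]))) ζ
  calc cexp p A f η = cexp p A (cexp p Aᶜ f) η := by rw [h1]
    _ = cexp p (A ∪ Aᶜ) f η := cexp_cexp A Aᶜ f η
    _ = mean p f := by rw [Finset.union_compl]; exact cexp_univ f η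


lemma bool_filter_sum (g : Bool → ℝ) (s : Bool) :
    ∑ b : Bool, (if b = s then (1:ℝ) else 0) * g b = g s := by
  rw [Fintype.sum_bool]; cases s <;> simp

lemma cexp_single (x : V) (f : (V → Bool) → ℝ) (η : V → Bool) :
    cexp p {x} f η
      = p * f (Function.update η x true) + (1 - p) * f (Function.update η x false) := by
  classical
  rw [cexp_eq]
  have hne : Function.update η x true ≠ Function.update η x false := by
    intro h
    have := congrFun h x
    simp at this
  have hkerb : ∀ b : Bool, ker p ({x} : Finset V) η (Function.update η x b) = nu p b := by
    intro b
    unfold ker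
    rw [← Finset.mul_prod_erase univ _ (Finset.mem_univ x)]
    have h1 : (if x ∈ ({x} : Finset V) then nu p (Function.update η x b x)
        else (if Function.update η x b x = η x then 1 else 0)) = nu p b := by
      simp
    rw [h1]
    have h2 : ∏ y ∈ univ.erase x, (if y ∈ ({x} : Finset V) then nu p (Function.update η x b y)
        else (if Function.update η x b y = η y then 1 else 0)) = 1 := by
      refine Finset.prod_eq_one fun y hy => ?_
      have hyx := (Finset.mem_erase.mp hy).1
      simp [hyx, Function.update_of_ne hyx]
    rw [h2, mul_one]
  have hvan : ∀ ζ ∈ (univ : Finset (V → Bool)),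
      ζ ∉ ({Function.update η x true, Function.update η x false} : Finset (V → Bool)) →
      ker p ({x} : Finset V) η ζ * f ζ = 0 := by
    intro ζ _ hζ
    have hex : ∃ y, y ≠ x ∧ ζ y ≠ η y := by
      by_contra hno
      push_neg at hno
      apply hζ
      have : ζ = Function.update η x (ζ x) := by
        funext y
        by_cases hy : y = x
        · subst hy; simp
        · rw [Function.update_of_ne hy]; exact hno y hy
      rw [this]
      cases h : ζ x <;> simp [h]
    obtain ⟨y, hyx, hyv⟩ := hex
    have : ker p ({x} : Finset V) η ζ = 0 := by
      unfold ker
      refine Finset.prod_eq_zero (Finset.mem_univ y) ?_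
      simp [hyx, hyv]
    rw [this, zero_mul]
  rw [← Finset.sum_subset (Finset.subset_univ _) hvan, Finset.sum_pair hne]
  rw [hkerb true, hkerb false]
  simp [nu]

lemma cvar_single (x : V) (f : (V → Bool) → ℝ) (η : V → Bool) :
    cvar p {x} f η
      = p * (1 - p) * (f (Function.update η x true) - f (Function.update η x false)) ^ 2 := by
  unfold cvar
  rw [cexp_single, cexp_single]
  ring

lemma cvar_nonneg (hp0 : 0 ≤ p) (hp1 : p ≤ 1) (x : V) (f : (V → Bool) → ℝ) (η : V → Bool) :
    0 ≤ cvar p {x} f η := by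
  rw [cvar_single]
  have : 0 ≤ p * (1 - p) := mul_nonneg hp0 (by linarith)
  positivity

lemma cexp_update {A : Finset V} {x : V} (hx : x ∉ A) (f : (V → Bool) → ℝ) (η : V → Bool)
    (s : Bool) :
    cexp p A f (Function.update η x s) = cexp p A (fun ζ => f (Function.update ζ x s)) η := by
  classical
  rw [cexp_eq, cexp_eq]
  set R : (V → Bool) → ℝ := fun ζ => ∏ y ∈ univ.erase x,
      (if y ∈ A then nu p (ζ y) else (if ζ y = η y then 1 else 0)) with hR
  have hker1 : ∀ ζ, ker p A (Function.update η x s) ζ = (if ζ x = s then (1:ℝ) else 0) * R ζ := by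
    intro ζ
    unfold ker
    rw [← Finset.mul_prod_erase univ _ (Finset.mem_univ x), if_neg hx]
    congr 1
    · rw [Function.update_self]
    · refine Finset.prod_congr rfl fun y hy => ?_
      rw [Function.update_of_ne (Finset.mem_erase.mp hy).1]
  have hker2 : ∀ ζ, ker p A η ζ = (if ζ x = η x then (1:ℝ) else 0) * R ζ := by
    intro ζ
    unfold ker
    rw [← Finset.mul_prod_erase univ _ (Finset.mem_univ x), if_neg hx]
  simp_rw [hker1, hker2]
  let E := Equiv.funSplitAt x Bool
  have hEs : ∀ (b : Bool) (r : {j // j ≠ x} → Bool) (y : V),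
      E.symm (b, r) y = if h : y = x then b else r ⟨y, h⟩ := by
    intro b r y
    by_cases h : y = x
    · subst h; simp [E]
    · simp [E, h]
  have hupd : ∀ (b : Bool) (r : {j // j ≠ x} → Bool),
      Function.update (E.symm (b, r)) x s = E.symm (s, r) := by
    intro b r; funext y
    by_cases h : y = x
    · subst h; rw [Function.update_self, hEs]; simp
    · rw [Function.update_of_ne h, hEs, hEs]; simp [h]
  have hRE : ∀ (b b' : Bool) (r : {j // j ≠ x} → Bool),
      R (E.symm (b, r)) = R (E.symm (b', r)) := by
    intro b b' r
    refine Finset.prod_congr rfl fun y hy => ?_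
    have hyx := (Finset.mem_erase.mp hy).1
    rw [hEs, hEs]
    simp [hyx]
  have hxv : ∀ (b : Bool) (r : {j // j ≠ x} → Bool), E.symm (b, r) x = b := by
    intro b r; rw [hEs]; simp
  have reindex : ∀ G : (V → Bool) → ℝ, ∑ ζ : V → Bool, G ζ
      = ∑ pr : Bool × ({j // j ≠ x} → Bool), G (E.symm pr) :=
    fun G => (Fintype.sum_equiv E.symm (fun pr => G (E.symm pr)) G (fun pr => rfl)).symm
  rw [reindex, reindex]
  rw [Fintype.sum_prod_type, Fintype.sum_prod_type]
  conv_lhs => rw [Finset.sum_comm]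
  conv_rhs => rw [Finset.sum_comm]
  refine Finset.sum_congr rfl fun r _ => ?_
  have l1 : ∑ b : Bool, (if E.symm (b, r) x = s then (1:ℝ) else 0) * R (E.symm (b, r))
        * f (E.symm (b, r))
      = ∑ b : Bool, (if b = s then (1:ℝ) else 0) * (R (E.symm (b, r)) * f (E.symm (b, r))) := by
    refine Finset.sum_congr rfl fun b _ => ?_
    rw [hxv]; ring
  have l2 : ∑ b : Bool, (if E.symm (b, r) x = η x then (1:ℝ) else 0) * R (E.symm (b, r))
        * f (Function.update (E.symm (b, r)) x s)
      = ∑ b : Bool, (if b = η x then (1:ℝ) else 0)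
          * (R (E.symm (b, r)) * f (E.symm (s, r))) := by
    refine Finset.sum_congr rfl fun b _ => ?_
    rw [hxv, hupd]; ring
  rw [l1, l2, bool_filter_sum, bool_filter_sum]
  rw [hRE s (η x) r]

lemma cexp_cs (hp0 : 0 ≤ p) (hp1 : p ≤ 1) (A : Finset V) (u h : (V → Bool) → ℝ)
    (hu : ∀ ζ, u ζ = 0 ∨ u ζ = 1) (η : V → Bool) :
    (cexp p A (fun ζ => u ζ * h ζ) η) ^ 2
      ≤ cexp p A u η * cexp p A (fun ζ => u ζ * h ζ ^ 2) η := by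
  rw [cexp_eq, cexp_eq, cexp_eq]
  have hw : ∀ ζ, 0 ≤ ker p A η ζ * u ζ := by
    intro ζ; rcases hu ζ with h0 | h1
    · rw [h0, mul_zero]
    · rw [h1, mul_one]; exact ker_nonneg hp0 hp1 A η ζ
  have key := Finset.sum_mul_sq_le_sq_mul_sq univ
      (fun ζ => Real.sqrt (ker p A η ζ * u ζ))
      (fun ζ => Real.sqrt (ker p A η ζ * u ζ) * h ζ)
  have e1 : ∀ ζ : V → Bool, Real.sqrt (ker p A η ζ * u ζ)
      * (Real.sqrt (ker p A η ζ * u ζ) * h ζ) = ker p A η ζ * (u ζ * h ζ) := by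
    intro ζ
    rw [← mul_assoc, Real.mul_self_sqrt (hw ζ), mul_assoc]
  have e2 : ∀ ζ : V → Bool, (Real.sqrt (ker p A η ζ * u ζ)) ^ 2 = ker p A η ζ * u ζ :=
    fun ζ => Real.sq_sqrt (hw ζ)
  have e3 : ∀ ζ : V → Bool, (Real.sqrt (ker p A η ζ * u ζ) * h ζ) ^ 2
      = ker p A η ζ * (u ζ * h ζ ^ 2) := by
    intro ζ
    rw [mul_pow, Real.sq_sqrt (hw ζ)]; ring
  simp_rw [e1, e2, e3] at key
  exact key

lemma sq_cexp_le (hp0 : 0 ≤ p) (hp1 : p ≤ 1) (A : Finset V) (h : (V → Bool) → ℝ)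
    (η : V → Bool) :
    (cexp p A h η) ^ 2 ≤ cexp p A (fun ζ => h ζ ^ 2) η := by
  have key := cexp_cs hp0 hp1 A (fun _ => 1) h (fun _ => Or.inr rfl) η
  simpa [cexp_const] using key


lemma cexp_empty (f : (V → Bool) → ℝ) (η : V → Bool) : cexp p (∅ : Finset V) f η = f η :=
  cexp_of_indep (fun ζ η' h => by
    have : ζ = η' := funext fun y => h y (Finset.notMem_empty y)
    rw [this]) η

lemma mean_cvar_single (x : V) (h : (V → Bool) → ℝ) :
    mean p (cvar p {x} h) = mean p (fun η => h η ^ 2) - mean p (fun η => (cexp p {x} h η) ^ 2) := by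
  have e : cvar p {x} h = fun η => cexp p {x} (fun ζ => h ζ ^ 2) η - (cexp p {x} h η) ^ 2 := rfl
  rw [e, mean_sub]
  congr 1
  exact mean_cexp {x} (fun ζ => h ζ ^ 2)

lemma mean_cvar_le_mean_sq (hp0 : 0 ≤ p) (hp1 : p ≤ 1) (x : V) (h : (V → Bool) → ℝ) :
    mean p (cvar p {x} h) ≤ mean p (fun η => h η ^ 2) := by
  rw [mean_cvar_single]
  have h2 : 0 ≤ mean p (fun η => (cexp p {x} h η) ^ 2) :=
    mean_nonneg hp0 hp1 (fun η => sq_nonneg _)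
  linarith

lemma mean_cvar_nonneg (hp0 : 0 ≤ p) (hp1 : p ≤ 1) (x : V) (h : (V → Bool) → ℝ) :
    0 ≤ mean p (cvar p {x} h) :=
  mean_nonneg hp0 hp1 (fun η => cvar_nonneg hp0 hp1 x h η)

section Ordered

variable [LinearOrder V]

lemma telescope (E : Finset V) (g : (V → Bool) → ℝ) :
    mean p (fun η => g η ^ 2) - mean p (fun η => (cexp p E g η) ^ 2)
      = ∑ y ∈ E, mean p (cvar p {y} (cexp p (E.filter (fun z => y < z)) g)) := by
  classical
  induction E using Finset.strongInduction with
  | _ E ih =>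
    rcases Finset.eq_empty_or_nonempty E with rfl | hne
    · simp only [Finset.sum_empty]
      have : ∀ η, (cexp p (∅ : Finset V) g η) ^ 2 = g η ^ 2 := fun η => by rw [cexp_empty]
      simp_rw [this]
      ring
    · set y₀ := E.min' hne with hy₀
      have hy₀E : y₀ ∈ E := E.min'_mem hne
      set E' := E.erase y₀ with hE'
      have hEE : insert y₀ E' = E := Finset.insert_erase hy₀E
      have hssub : E' ⊂ E := Finset.erase_ssubset hy₀E
      have hcomp : ∀ η, cexp p E g η = cexp p ({y₀} : Finset V) (cexp p E' g) η := by
        intro η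
        rw [cexp_cexp]
        congr 1
        rw [← Finset.insert_eq, hEE]
      have hfilt0 : E.filter (fun z => y₀ < z) = E' := by
        ext z
        simp only [Finset.mem_filter, hE', Finset.mem_erase]
        constructor
        · rintro ⟨hz, hlt⟩; exact ⟨ne_of_gt hlt, hz⟩
        · rintro ⟨hne', hz⟩
          exact ⟨hz, lt_of_le_of_ne (E.min'_le z hz) (Ne.symm hne')⟩
      have hfilt : ∀ y ∈ E', E.filter (fun z => y < z) = E'.filter (fun z => y < z) := by
        intro y hy
        ext z
        simp only [Finset.mem_filter, hE', Finset.mem_erase]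
        constructor
        · rintro ⟨hz, hlt⟩
          refine ⟨⟨?_, hz⟩, hlt⟩
          intro hzy₀
          have h1 : y₀ ≤ y := E.min'_le y (Finset.mem_of_mem_erase hy)
          rw [hzy₀] at hlt
          exact absurd hlt (not_lt.mpr h1)
        · rintro ⟨⟨_, hz⟩, hlt⟩; exact ⟨hz, hlt⟩
      have hstep : mean p (fun η => (cexp p E' g η) ^ 2) - mean p (fun η => (cexp p E g η) ^ 2)
          = mean p (cvar p {y₀} (cexp p E' g)) := by
        rw [mean_cvar_single]
        congr 1
        refine Finset.sum_congr rfl fun η _ => ?_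
        dsimp only
        rw [hcomp]
      rw [← hEE, Finset.sum_insert (Finset.notMem_erase y₀ E)]
      rw [show (insert y₀ E').filter (fun z => y₀ < z) = E' by rw [hEE]; exact hfilt0]
      have hsum' : ∑ y ∈ E', mean p (cvar p {y} (cexp p ((insert y₀ E').filter (fun z => y < z)) g))
          = ∑ y ∈ E', mean p (cvar p {y} (cexp p (E'.filter (fun z => y < z)) g)) := by
        refine Finset.sum_congr rfl fun y hy => ?_
        rw [show (insert y₀ E').filter (fun z => y < z) = E'.filter (fun z => y < z) by
          rw [hEE]; exact hfilt y hy]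
      rw [hsum']
      have ihE' := ih E' hssub
      have hgoal : mean p (fun η => g η ^ 2) - mean p (fun η => (cexp p (insert y₀ E') g η) ^ 2)
          = mean p (cvar p {y₀} (cexp p E' g))
            + (mean p (fun η => g η ^ 2) - mean p (fun η => (cexp p E' g η) ^ 2)) := by
        rw [← hstep]
        have : ∀ η, cexp p (insert y₀ E') g η = cexp p E g η := fun η => by rw [hEE]
        simp_rw [this]
        ring
      rw [hgoal, ihE']

lemma contract (hp0 : 0 ≤ p) (hp1 : p ≤ 1) {E : Finset V} {x : V} (hx : x ∉ E)
    (h : (V → Bool) → ℝ) :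
    mean p (cvar p {x} (cexp p E h)) ≤ mean p (cvar p {x} h) := by
  have hpq : 0 ≤ p * (1 - p) := mul_nonneg hp0 (by linarith)
  have pointwise : ∀ η, cvar p {x} (cexp p E h) η ≤ cexp p E (cvar p {x} h) η := by
    intro η
    rw [cvar_single]
    have hD : cexp p E h (Function.update η x true) - cexp p E h (Function.update η x false)
        = cexp p E (fun ζ => h (Function.update ζ x true) - h (Function.update ζ x false)) η := by
      rw [cexp_update hx h η true, cexp_update hx h η false, ← cexp_sub]
    rw [hD]
    have hsq := sq_cexp_le hp0 hp1 E
        (fun ζ => h (Function.update ζ x true) - h (Function.update ζ x false)) η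
    calc p * (1 - p) * (cexp p E (fun ζ => h (Function.update ζ x true)
            - h (Function.update ζ x false)) η) ^ 2
        ≤ p * (1 - p) * cexp p E (fun ζ => (h (Function.update ζ x true)
            - h (Function.update ζ x false)) ^ 2) η := by
          exact mul_le_mul_of_nonneg_left hsq hpq
      _ = cexp p E (fun ζ => p * (1 - p) * (h (Function.update ζ x true)
            - h (Function.update ζ x false)) ^ 2) η := (cexp_smul _ _ _ _).symm
      _ = cexp p E (cvar p {x} h) η := by
          congr 1
          funext ζ
          rw [cvar_single]
  calc mean p (cvar p {x} (cexp p E h)) ≤ mean p (cexp p E (cvar p {x} h)) :=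
        mean_mono hp0 hp1 pointwise
    _ = mean p (cvar p {x} h) := mean_cexp E _


lemma persite (hp0 : 0 < p) (hp1 : p < 1) (f c₀ : (V → Bool) → ℝ) (Δ₀ : Finset V) (x : V)
    (hc01 : ∀ η, c₀ η = 0 ∨ c₀ η = 1)
    (hdep : ∀ η η', (∀ y ∈ Δ₀, η y = η' y) → c₀ η = c₀ η')
    (hΔx : ∀ y ∈ Δ₀, x < y) :
    (1 - mean p (fun η => 1 - c₀ η)) ^ 2
        * mean p (cvar p {x} (cexp p (univ.filter (fun z => x < z)) f))
      ≤ 2 * mean p (fun η => c₀ η * cvar p {x} f η)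
        + 2 * mean p (fun η => 1 - c₀ η)
            * ∑ y ∈ Δ₀, mean p (cvar p {y} (cexp p (univ.filter (fun z => y < z)) f)) := by
  have hp0' := hp0.le
  have hp1' := hp1.le
  have hpq : 0 ≤ p * (1 - p) := mul_nonneg hp0' (by linarith)
  have hc0 : ∀ η, 0 ≤ c₀ η := fun η => by rcases hc01 η with h | h <;> rw [h] <;> norm_num
  have hc1 : ∀ η, c₀ η ≤ 1 := fun η => by rcases hc01 η with h | h <;> rw [h] <;> norm_num
  have h1mc01 : ∀ η, 1 - c₀ η = 0 ∨ 1 - c₀ η = 1 := fun η => by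
    rcases hc01 η with h | h
    · right; rw [h]; ring
    · left; rw [h]; ring
  set ε := mean p (fun η => 1 - c₀ η) with hε
  have hεnn : 0 ≤ ε := mean_nonneg hp0' hp1' (fun η => by have := hc1 η; linarith)
  set B₀ : Finset V := univ.filter (fun z => x < z) with hB₀
  have hΔB : Δ₀ ⊆ B₀ := fun y hy => Finset.mem_filter.2 ⟨Finset.mem_univ y, hΔx y hy⟩
  have hxB : x ∉ B₀ := by rw [hB₀]; simp
  have hxΔ : x ∉ Δ₀ := fun h => lt_irrefl x (hΔx x h)
  set Bm := B₀ \ Δ₀ with hBm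
  have hun : Δ₀ ∪ Bm = B₀ := Finset.union_sdiff_of_subset hΔB
  set g := cexp p Bm f with hg
  set fx := cexp p B₀ f with hfx
  set cf := cexp p B₀ (fun η => c₀ η * f η) with hcf
  set r := cexp p Δ₀ (fun η => (1 - c₀ η) * (g η - fx η)) with hr
  have hfx_indep : ∀ ζ η', (∀ y, y ∉ Δ₀ → ζ y = η' y) → fx ζ = fx η' := by
    intro ζ η' h
    exact cexp_indep_offA (fun y hyB => h y (fun hyΔ => hyB (hΔB hyΔ)))
  have hcupd : ∀ η s, c₀ (Function.update η x s) = c₀ η := by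
    intro η s
    refine hdep _ _ fun y hy => ?_
    have hyx : y ≠ x := fun h => hxΔ (h ▸ hy)
    rw [Function.update_of_ne hyx]
  have hcBm : ∀ ζ η', (∀ y, y ∉ Bm → ζ y = η' y) → (1 - c₀ ζ) = (1 - c₀ η') := by
    intro ζ η' h
    rw [hdep ζ η' (fun y hy => h y (by rw [hBm, Finset.mem_sdiff]; rintro ⟨-, hyn⟩; exact hyn hy))]
  have hεconst : ∀ η, cexp p Δ₀ (fun ζ => 1 - c₀ ζ) η = ε := by
    intro η
    rw [hε]
    exact cexp_local_const (fun η₁ η₂ h12 => by rw [hdep η₁ η₂ h12]) η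
  -- the key algebraic identity
  have hid : ∀ η, (1 - ε) * fx η = cf η + r η := by
    intro η
    have h1 : fx η = cf η + cexp p B₀ (fun ζ => (1 - c₀ ζ) * f ζ) η := by
      rw [hfx, hcf, ← cexp_add]
      congr 1
      funext ζ
      ring
    have h2 : cexp p B₀ (fun ζ => (1 - c₀ ζ) * f ζ) η
        = cexp p Δ₀ (fun ζ => (1 - c₀ ζ) * g ζ) η := by
      rw [← hun, ← cexp_cexp]
      congr 1
      funext ζ
      have e1 : (fun ξ => (1 - c₀ ξ) * f ξ) = (fun ξ => f ξ * (1 - c₀ ξ)) := by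
        funext ξ; ring
      rw [e1, cexp_mul_indep f (fun ξ => 1 - c₀ ξ) hcBm ζ, hg]
    have h3 : cexp p Δ₀ (fun ζ => (1 - c₀ ζ) * g ζ) η
        = r η + cexp p Δ₀ (fun ζ => (1 - c₀ ζ) * fx ζ) η := by
      rw [hr, ← cexp_add]
      congr 1
      funext ζ
      ring
    have h4 : cexp p Δ₀ (fun ζ => (1 - c₀ ζ) * fx ζ) η = fx η * ε := by
      rw [cexp_mul_indep (fun ζ => 1 - c₀ ζ) fx hfx_indep η, hεconst]
    linear_combination h1 + h2 + h3 + h4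
  -- pointwise quadratic split
  have hkey2 : ∀ η, (1 - ε) ^ 2 * cvar p {x} fx η
      ≤ 2 * cvar p {x} cf η + 2 * cvar p {x} r η := by
    intro η
    rw [cvar_single, cvar_single, cvar_single]
    have hidT := hid (Function.update η x true)
    have hidF := hid (Function.update η x false)
    have hDid : (1 - ε) * (fx (Function.update η x true) - fx (Function.update η x false))
        = (cf (Function.update η x true) - cf (Function.update η x false))
          + (r (Function.update η x true) - r (Function.update η x false)) := by
      linarith
    have h1 : (1 - ε) ^ 2 * (fx (Function.update η x true) - fx (Function.update η x false)) ^ 2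
        ≤ 2 * (cf (Function.update η x true) - cf (Function.update η x false)) ^ 2
          + 2 * (r (Function.update η x true) - r (Function.update η x false)) ^ 2 := by
      have hsq : ((1 - ε) * (fx (Function.update η x true) - fx (Function.update η x false))) ^ 2
          = ((cf (Function.update η x true) - cf (Function.update η x false))
            + (r (Function.update η x true) - r (Function.update η x false))) ^ 2 := by
        rw [hDid]
      nlinarith [hsq, sq_nonneg ((cf (Function.update η x true) - cf (Function.update η x false))
          - (r (Function.update η x true) - r (Function.update η x false)))]
    calc (1 - ε) ^ 2 * (p * (1 - p)
          * (fx (Function.update η x true) - fx (Function.update η x false)) ^ 2)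
        = p * (1 - p) * ((1 - ε) ^ 2
            * (fx (Function.update η x true) - fx (Function.update η x false)) ^ 2) := by ring
      _ ≤ p * (1 - p) * (2 * (cf (Function.update η x true) - cf (Function.update η x false)) ^ 2
            + 2 * (r (Function.update η x true) - r (Function.update η x false)) ^ 2) :=
          mul_le_mul_of_nonneg_left h1 hpq
      _ = 2 * (p * (1 - p) * (cf (Function.update η x true)
              - cf (Function.update η x false)) ^ 2)
          + 2 * (p * (1 - p) * (r (Function.update η x true)
              - r (Function.update η x false)) ^ 2) := by ring
  have hmean2 : (1 - ε) ^ 2 * mean p (cvar p {x} fx)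
      ≤ 2 * mean p (cvar p {x} cf) + 2 * mean p (cvar p {x} r) := by
    have h := mean_mono hp0' hp1' hkey2
    rw [show (fun η => (1 - ε) ^ 2 * cvar p {x} fx η)
        = (fun η => (1 - ε) ^ 2 * (cvar p {x} fx) η) from rfl] at h
    rw [mean_smul] at h
    have h2 : mean p (fun η => 2 * cvar p {x} cf η + 2 * cvar p {x} r η)
        = 2 * mean p (cvar p {x} cf) + 2 * mean p (cvar p {x} r) := by
      rw [mean_add (fun η => 2 * cvar p {x} cf η) (fun η => 2 * cvar p {x} r η)]
      rw [mean_smul, mean_smul]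
    rw [h2] at h
    exact h
  -- Term 1
  have hT1 : mean p (cvar p {x} cf) ≤ mean p (fun η => c₀ η * cvar p {x} f η) := by
    have pointwise : ∀ η, cvar p {x} cf η
        ≤ cexp p B₀ (fun ζ => c₀ ζ * cvar p {x} f ζ) η := by
      intro η
      rw [cvar_single]
      have hDcf : cf (Function.update η x true) - cf (Function.update η x false)
          = cexp p B₀ (fun ζ => c₀ ζ * (f (Function.update ζ x true)
              - f (Function.update ζ x false))) η := by
        rw [hcf, cexp_update hxB _ η true, cexp_update hxB _ η false, ← cexp_sub]
        congr 1
        funext ζ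
        rw [hcupd ζ true, hcupd ζ false]
        ring
      rw [hDcf]
      have hCS := cexp_cs hp0' hp1' B₀ c₀
        (fun ζ => f (Function.update ζ x true) - f (Function.update ζ x false)) hc01 η
      have hc_le : cexp p B₀ c₀ η ≤ 1 := by
        have := cexp_mono hp0' hp1' B₀ (f := c₀) (g := fun _ => 1) hc1 η
        rwa [cexp_const] at this
      have hnn : 0 ≤ cexp p B₀ (fun ζ => c₀ ζ * (f (Function.update ζ x true)
          - f (Function.update ζ x false)) ^ 2) η :=
        cexp_nonneg hp0' hp1' B₀ (fun ζ => mul_nonneg (hc0 ζ) (sq_nonneg _)) η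
      calc p * (1 - p) * (cexp p B₀ (fun ζ => c₀ ζ * (f (Function.update ζ x true)
              - f (Function.update ζ x false))) η) ^ 2
          ≤ p * (1 - p) * (cexp p B₀ c₀ η * cexp p B₀ (fun ζ => c₀ ζ
              * (f (Function.update ζ x true) - f (Function.update ζ x false)) ^ 2) η) :=
            mul_le_mul_of_nonneg_left hCS hpq
        _ ≤ p * (1 - p) * cexp p B₀ (fun ζ => c₀ ζ
              * (f (Function.update ζ x true) - f (Function.update ζ x false)) ^ 2) η :=
            mul_le_mul_of_nonneg_left (mul_le_of_le_one_left hnn hc_le) hpq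
        _ = cexp p B₀ (fun ζ => c₀ ζ * cvar p {x} f ζ) η := by
            rw [← cexp_smul]
            congr 1
            funext ζ
            rw [cvar_single]
            ring
    calc mean p (cvar p {x} cf)
        ≤ mean p (cexp p B₀ (fun ζ => c₀ ζ * cvar p {x} f ζ)) :=
          mean_mono hp0' hp1' pointwise
      _ = mean p (fun η => c₀ η * cvar p {x} f η) := mean_cexp _ _
  -- Term 2
  have hT2 : mean p (cvar p {x} r)
      ≤ ε * ∑ y ∈ Δ₀, mean p (cvar p {y} (cexp p (univ.filter (fun z => y < z)) f)) := by
    have pointwise : ∀ η, cvar p {x} r η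
        ≤ ε * cexp p Δ₀ (cvar p {x} (fun ζ => g ζ - fx ζ)) η := by
      intro η
      rw [cvar_single]
      have hDr : r (Function.update η x true) - r (Function.update η x false)
          = cexp p Δ₀ (fun ζ => (1 - c₀ ζ) * ((g (Function.update ζ x true)
              - fx (Function.update ζ x true)) - (g (Function.update ζ x false)
              - fx (Function.update ζ x false)))) η := by
        rw [hr, cexp_update hxΔ _ η true, cexp_update hxΔ _ η false, ← cexp_sub]
        congr 1
        funext ζ
        rw [hcupd ζ true, hcupd ζ false]
        ring
      rw [hDr]
      have hCS := cexp_cs hp0' hp1' Δ₀ (fun ζ => 1 - c₀ ζ)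
        (fun ζ => (g (Function.update ζ x true) - fx (Function.update ζ x true))
          - (g (Function.update ζ x false) - fx (Function.update ζ x false))) h1mc01 η
      rw [hεconst η] at hCS
      have hmono : cexp p Δ₀ (fun ζ => (1 - c₀ ζ) * ((g (Function.update ζ x true)
            - fx (Function.update ζ x true)) - (g (Function.update ζ x false)
            - fx (Function.update ζ x false))) ^ 2) η
          ≤ cexp p Δ₀ (fun ζ => ((g (Function.update ζ x true)
            - fx (Function.update ζ x true)) - (g (Function.update ζ x false)
            - fx (Function.update ζ x false))) ^ 2) η := by
        refine cexp_mono hp0' hp1' Δ₀ (fun ζ => ?_) η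
        have h1c : 1 - c₀ ζ ≤ 1 := by have := hc0 ζ; linarith
        exact mul_le_of_le_one_left (sq_nonneg _) h1c
      have hεG : (cexp p Δ₀ (fun ζ => (1 - c₀ ζ) * ((g (Function.update ζ x true)
            - fx (Function.update ζ x true)) - (g (Function.update ζ x false)
            - fx (Function.update ζ x false)))) η) ^ 2
          ≤ ε * cexp p Δ₀ (fun ζ => ((g (Function.update ζ x true)
            - fx (Function.update ζ x true)) - (g (Function.update ζ x false)
            - fx (Function.update ζ x false))) ^ 2) η := by
        calc (cexp p Δ₀ (fun ζ => (1 - c₀ ζ) * ((g (Function.update ζ x true)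
            - fx (Function.update ζ x true)) - (g (Function.update ζ x false)
            - fx (Function.update ζ x false)))) η) ^ 2
            ≤ ε * cexp p Δ₀ (fun ζ => (1 - c₀ ζ) * ((g (Function.update ζ x true)
            - fx (Function.update ζ x true)) - (g (Function.update ζ x false)
            - fx (Function.update ζ x false))) ^ 2) η := hCS
          _ ≤ ε * cexp p Δ₀ (fun ζ => ((g (Function.update ζ x true)
            - fx (Function.update ζ x true)) - (g (Function.update ζ x false)
            - fx (Function.update ζ x false))) ^ 2) η := mul_le_mul_of_nonneg_left hmono hεnn
      calc p * (1 - p) * (cexp p Δ₀ (fun ζ => (1 - c₀ ζ) * ((g (Function.update ζ x true)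
            - fx (Function.update ζ x true)) - (g (Function.update ζ x false)
            - fx (Function.update ζ x false)))) η) ^ 2
          ≤ p * (1 - p) * (ε * cexp p Δ₀ (fun ζ => ((g (Function.update ζ x true)
            - fx (Function.update ζ x true)) - (g (Function.update ζ x false)
            - fx (Function.update ζ x false))) ^ 2) η) :=
            mul_le_mul_of_nonneg_left hεG hpq
        _ = ε * cexp p Δ₀ (fun ζ => p * (1 - p) * ((g (Function.update ζ x true)
            - fx (Function.update ζ x true)) - (g (Function.update ζ x false)
            - fx (Function.update ζ x false))) ^ 2) η := by
            rw [cexp_smul]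
            ring
        _ = ε * cexp p Δ₀ (cvar p {x} (fun ζ => g ζ - fx ζ)) η := by
            congr 1
            congr 1
            funext ζ
            rw [cvar_single]
    have step1 : mean p (cvar p {x} r)
        ≤ ε * mean p (cvar p {x} (fun ζ => g ζ - fx ζ)) := by
      have h := mean_mono hp0' hp1' pointwise
      rw [mean_smul, mean_cexp] at h
      exact h
    have step2 : mean p (cvar p {x} (fun ζ => g ζ - fx ζ))
        ≤ mean p (fun η => (g η - fx η) ^ 2) := by
      have := mean_cvar_le_mean_sq hp0' hp1' x (fun ζ => g ζ - fx ζ)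
      exact this
    have hgfx : mean p (fun η => g η * fx η) = mean p (fun η => fx η ^ 2) := by
      have h2 : ∀ η, cexp p Δ₀ g η = fx η := by
        intro η
        rw [hg, cexp_cexp, hun]
      calc mean p (fun η => g η * fx η)
          = mean p (cexp p Δ₀ (fun ζ => g ζ * fx ζ)) := (mean_cexp _ _).symm
        _ = mean p (fun η => fx η ^ 2) := by
            congr 1
            funext η
            rw [cexp_mul_indep g fx hfx_indep η, h2 η]
            ring
    have step3 : mean p (fun η => (g η - fx η) ^ 2)
        = mean p (fun η => g η ^ 2) - mean p (fun η => fx η ^ 2) := by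
      have e : (fun η => (g η - fx η) ^ 2)
          = fun η => g η ^ 2 - (2 * (g η * fx η) - fx η ^ 2) := by
        funext η; ring
      rw [e, mean_sub (fun η => g η ^ 2) (fun η => 2 * (g η * fx η) - fx η ^ 2)]
      rw [mean_sub (fun η => 2 * (g η * fx η)) (fun η => fx η ^ 2)]
      rw [mean_smul 2 (fun η => g η * fx η), hgfx]
      ring
    have step4 : mean p (fun η => g η ^ 2) - mean p (fun η => fx η ^ 2)
        = ∑ y ∈ Δ₀, mean p (cvar p {y} (cexp p (Δ₀.filter (fun z => y < z)) g)) := by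
      have htel := telescope (p := p) Δ₀ g
      have h2 : ∀ η, cexp p Δ₀ g η = fx η := fun η => by rw [hg, cexp_cexp, hun]
      rw [← htel]
      congr 1
      congr 1
      funext η
      rw [h2 η]
    have step5 : ∀ y ∈ Δ₀, mean p (cvar p {y} (cexp p (Δ₀.filter (fun z => y < z)) g))
        ≤ mean p (cvar p {y} (cexp p (univ.filter (fun z => y < z)) f)) := by
      intro y hy
      have hxy := hΔx y hy
      have h1 : cexp p (Δ₀.filter (fun z => y < z)) g
          = cexp p (Δ₀.filter (fun z => y < z) ∪ Bm) f := by
        funext η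
        rw [hg, cexp_cexp]
      have hByC : univ.filter (fun z => y < z) ⊆ Δ₀.filter (fun z => y < z) ∪ Bm := by
        intro z hz
        have hyz : y < z := (Finset.mem_filter.1 hz).2
        by_cases hzΔ : z ∈ Δ₀
        · exact Finset.mem_union_left _ (Finset.mem_filter.2 ⟨hzΔ, hyz⟩)
        · refine Finset.mem_union_right _ ?_
          rw [hBm, Finset.mem_sdiff]
          exact ⟨Finset.mem_filter.2 ⟨Finset.mem_univ z, lt_trans hxy hyz⟩, hzΔ⟩
      have hyC : y ∉ Δ₀.filter (fun z => y < z) ∪ Bm := by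
        rw [Finset.mem_union]
        rintro (h | h)
        · exact lt_irrefl y (Finset.mem_filter.1 h).2
        · rw [hBm, Finset.mem_sdiff] at h
          exact h.2 hy
      have h2 : cexp p (Δ₀.filter (fun z => y < z) ∪ Bm) f
          = cexp p ((Δ₀.filter (fun z => y < z) ∪ Bm) \ univ.filter (fun z => y < z))
              (cexp p (univ.filter (fun z => y < z)) f) := by
        funext η
        rw [cexp_cexp, Finset.sdiff_union_of_subset hByC]
      have hyCB : y ∉ (Δ₀.filter (fun z => y < z) ∪ Bm) \ univ.filter (fun z => y < z) :=
        fun h => hyC (Finset.mem_sdiff.1 h).1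
      rw [h1, h2]
      exact contract hp0' hp1' hyCB _
    calc mean p (cvar p {x} r)
        ≤ ε * mean p (cvar p {x} (fun ζ => g ζ - fx ζ)) := step1
      _ ≤ ε * mean p (fun η => (g η - fx η) ^ 2) :=
          mul_le_mul_of_nonneg_left step2 hεnn
      _ = ε * ∑ y ∈ Δ₀, mean p (cvar p {y} (cexp p (Δ₀.filter (fun z => y < z)) g)) := by
          rw [step3, step4]
      _ ≤ ε * ∑ y ∈ Δ₀, mean p (cvar p {y} (cexp p (univ.filter (fun z => y < z)) f)) :=
          mul_le_mul_of_nonneg_left (Finset.sum_le_sum step5) hεnn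
  linarith


lemma abstract_poincare (hp0 : 0 < p) (hp1 : p < 1)
    (c : V → (V → Bool) → ℝ) (Δ : V → Finset V)
    (hc01 : ∀ x η, c x η = 0 ∨ c x η = 1)
    (hdep : ∀ x η η', (∀ y ∈ Δ x, η y = η' y) → c x η = c x η')
    (hΔ : ∀ x, ∀ y ∈ Δ x, x < y)
    (hsum : ∀ y : V, ∑ x ∈ univ.filter (fun x => y ∈ insert x (Δ x)),
        mean p (fun η => 1 - c x η) ≤ 1/4)
    (f : (V → Bool) → ℝ) :
    varTot p f ≤ 8 * ∑ x : V, mean p (fun η => c x η * cvar p {x} f η) := by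
  have hp0' := hp0.le
  have hp1' := hp1.le
  have hunn : ∀ x : V, 0 ≤ mean p (cvar p {x} (cexp p (univ.filter (fun z => x < z)) f)) :=
    fun x => mean_cvar_nonneg hp0' hp1' _ _
  have hDnn : ∀ x : V, 0 ≤ mean p (fun η => c x η * cvar p {x} f η) := by
    intro x
    refine mean_nonneg hp0' hp1' fun η => ?_
    have hc0 : 0 ≤ c x η := by rcases hc01 x η with h | h <;> rw [h] <;> norm_num
    exact mul_nonneg hc0 (cvar_nonneg hp0' hp1' x f η)
  have hvar : varTot p f
      = ∑ x : V, mean p (cvar p {x} (cexp p (univ.filter (fun z => x < z)) f)) := by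
    have htel := telescope (p := p) (univ : Finset V) f
    have h2 : mean p (fun η => (cexp p (univ : Finset V) f η) ^ 2) = (mean p f) ^ 2 := by
      calc mean p (fun η => (cexp p (univ : Finset V) f η) ^ 2)
          = mean p (fun _ => (mean p f) ^ 2) := by
            congr 1
            funext η
            rw [cexp_univ]
        _ = (mean p f) ^ 2 := mean_const _
    unfold varTot
    rw [← h2, htel]
  have hkey : ∀ x : V, mean p (cvar p {x} (cexp p (univ.filter (fun z => x < z)) f))
      ≤ 2 * mean p (fun η => c x η * cvar p {x} f η)
        + 2 * (mean p (fun η => 1 - c x η)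
          * ∑ y ∈ insert x (Δ x), mean p (cvar p {y} (cexp p (univ.filter (fun z => y < z)) f))) := by
    intro x
    have hx := persite hp0 hp1 f (c x) (Δ x) x (hc01 x) (hdep x) (hΔ x)
    have hxΔ : x ∉ Δ x := fun h => lt_irrefl x (hΔ x x h)
    rw [Finset.sum_insert hxΔ]
    set a := mean p (cvar p {x} (cexp p (univ.filter (fun z => x < z)) f)) with ha
    set e := mean p (fun η => 1 - c x η) with he
    set S := ∑ y ∈ Δ x, mean p (cvar p {y} (cexp p (univ.filter (fun z => y < z)) f)) with hS
    set d := mean p (fun η => c x η * cvar p {x} f η) with hd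
    have hann : 0 ≤ a := hunn x
    have henn : 0 ≤ e := by
      rw [he]
      refine mean_nonneg hp0' hp1' fun η => ?_
      rcases hc01 x η with h | h <;> rw [h] <;> norm_num
    nlinarith [hx, mul_nonneg (mul_nonneg henn henn) hann]
  have hswap : ∑ x : V, mean p (fun η => 1 - c x η)
        * ∑ y ∈ insert x (Δ x), mean p (cvar p {y} (cexp p (univ.filter (fun z => y < z)) f))
      ≤ (1/4) * ∑ y : V, mean p (cvar p {y} (cexp p (univ.filter (fun z => y < z)) f)) := by
    have h1 : ∀ x : V, mean p (fun η => 1 - c x η)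
        * ∑ y ∈ insert x (Δ x), mean p (cvar p {y} (cexp p (univ.filter (fun z => y < z)) f))
        = ∑ y : V, (if y ∈ insert x (Δ x) then mean p (fun η => 1 - c x η)
            * mean p (cvar p {y} (cexp p (univ.filter (fun z => y < z)) f)) else 0) := by
      intro x
      rw [Finset.mul_sum, ← Finset.sum_filter]
      congr 1
      ext y
      simp
    calc ∑ x : V, mean p (fun η => 1 - c x η)
          * ∑ y ∈ insert x (Δ x), mean p (cvar p {y} (cexp p (univ.filter (fun z => y < z)) f))
        = ∑ x : V, ∑ y : V, (if y ∈ insert x (Δ x) then mean p (fun η => 1 - c x η)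
            * mean p (cvar p {y} (cexp p (univ.filter (fun z => y < z)) f)) else 0) :=
          Finset.sum_congr rfl fun x _ => h1 x
      _ = ∑ y : V, ∑ x : V, (if y ∈ insert x (Δ x) then mean p (fun η => 1 - c x η)
            * mean p (cvar p {y} (cexp p (univ.filter (fun z => y < z)) f)) else 0) :=
          Finset.sum_comm
      _ = ∑ y : V, (∑ x ∈ univ.filter (fun x => y ∈ insert x (Δ x)),
            mean p (fun η => 1 - c x η))
            * mean p (cvar p {y} (cexp p (univ.filter (fun z => y < z)) f)) := by
          refine Finset.sum_congr rfl fun y _ => ?_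
          rw [Finset.sum_mul, Finset.sum_filter]
      _ ≤ ∑ y : V, (1/4) * mean p (cvar p {y} (cexp p (univ.filter (fun z => y < z)) f)) :=
          Finset.sum_le_sum fun y _ => mul_le_mul_of_nonneg_right (hsum y) (hunn y)
      _ = (1/4) * ∑ y : V, mean p (cvar p {y} (cexp p (univ.filter (fun z => y < z)) f)) :=
          (Finset.mul_sum _ _ _).symm
  have hsum_u : ∑ x : V, mean p (cvar p {x} (cexp p (univ.filter (fun z => x < z)) f))
      ≤ 2 * ∑ x : V, mean p (fun η => c x η * cvar p {x} f η)
        + 2 * ((1/4) * ∑ y : V, mean p (cvar p {y} (cexp p (univ.filter (fun z => y < z)) f))) := by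
    calc ∑ x : V, mean p (cvar p {x} (cexp p (univ.filter (fun z => x < z)) f))
        ≤ ∑ x : V, (2 * mean p (fun η => c x η * cvar p {x} f η)
          + 2 * (mean p (fun η => 1 - c x η)
            * ∑ y ∈ insert x (Δ x), mean p (cvar p {y} (cexp p (univ.filter (fun z => y < z)) f)))) :=
          Finset.sum_le_sum fun x _ => hkey x
      _ = 2 * ∑ x : V, mean p (fun η => c x η * cvar p {x} f η)
          + 2 * ∑ x : V, mean p (fun η => 1 - c x η)
            * ∑ y ∈ insert x (Δ x), mean p (cvar p {y} (cexp p (univ.filter (fun z => y < z)) f)) := by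
          rw [Finset.sum_add_distrib, ← Finset.mul_sum, ← Finset.mul_sum]
      _ ≤ 2 * ∑ x : V, mean p (fun η => c x η * cvar p {x} f η)
          + 2 * ((1/4) * ∑ y : V, mean p (cvar p {y} (cexp p (univ.filter (fun z => y < z)) f))) := by
          have := hswap
          linarith
  have hDsum : 0 ≤ ∑ x : V, mean p (fun η => c x η * cvar p {x} f η) :=
    Finset.sum_nonneg fun x _ => hDnn x
  rw [hvar]
  linarith [hsum_u]

end Ordered

section Transport

lemma mean_mul_local_indep {x : V} (u v : (V → Bool) → ℝ)
    (hu : ∀ η η', η x = η' x → u η = u η')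
    (hv : ∀ η s, v (Function.update η x s) = v η) :
    mean p (fun η => u η * v η) = mean p u * mean p v := by
  have hv' : ∀ ζ η', (∀ y, y ∉ ({x} : Finset V) → ζ y = η' y) → v ζ = v η' := by
    intro ζ η' h
    have : Function.update ζ x (η' x) = η' := by
      funext y
      by_cases hy : y = x
      · subst hy; simp
      · rw [Function.update_of_ne hy]
        exact h y (by simp [hy])
    rw [← this, hv]
  have hu' : ∀ η η', (∀ y, y ∈ ({x} : Finset V) → η y = η' y) → u η = u η' := by
    intro η η' h
    exact hu η η' (h x (Finset.mem_singleton_self x))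
  calc mean p (fun η => u η * v η)
      = mean p (cexp p {x} (fun η => u η * v η)) := (mean_cexp _ _).symm
    _ = mean p (fun η => mean p u * v η) := by
        congr 1
        funext η
        rw [cexp_mul_indep u v hv' η, cexp_local_const hu' η]
        ring
    _ = mean p u * mean p v := mean_smul _ _

variable {W : Type*} [Fintype W] [DecidableEq W]

lemma mean_equiv (e : V ≃ W) (F : (V → Bool) → ℝ) :
    mean p (fun η : W → Bool => F (fun v => η (e v))) = mean p F := by
  unfold mean
  refine (Fintype.sum_equiv (Equiv.arrowCongr e (Equiv.refl Bool))
    (fun κ : V → Bool => wt p κ * F κ)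
    (fun η : W → Bool => wt p η * F (fun v => η (e v))) ?_).symm
  intro κ
  show wt p κ * F κ = wt p (fun w => κ (e.symm w)) * F (fun v => κ (e.symm (e v)))
  have hwt : wt p (fun w => κ (e.symm w)) = wt p κ := by
    rw [wt_eq, wt_eq]
    exact Equiv.prod_comp e.symm fun v => nu p (κ v)
  have hF : (fun v => κ (e.symm (e v))) = κ := by funext v; simp
  rw [hwt, hF]

lemma mean_inl (F : (V → Bool) → ℝ) :
    mean p (fun κ : V ⊕ W → Bool => F (fun a => κ (Sum.inl a))) = mean p F := by
  unfold mean
  rw [← Equiv.sum_comp (Equiv.sumArrowEquivProdArrow V W Bool).symm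
      (fun κ : V ⊕ W → Bool => wt p κ * F (fun a => κ (Sum.inl a)))]
  rw [Fintype.sum_prod_type]
  have hterm : ∀ (fg : (V → Bool) × (W → Bool)),
      wt p ((Equiv.sumArrowEquivProdArrow V W Bool).symm fg)
        * F (fun a => ((Equiv.sumArrowEquivProdArrow V W Bool).symm fg) (Sum.inl a))
      = (wt p fg.1 * F fg.1) * wt p fg.2 := by
    intro fg
    have h2 : wt p ((Equiv.sumArrowEquivProdArrow V W Bool).symm fg)
        = wt p fg.1 * wt p fg.2 := by
      rw [wt_eq, wt_eq, wt_eq]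
      rw [show ((Equiv.sumArrowEquivProdArrow V W Bool).symm fg : V ⊕ W → Bool)
          = Sum.elim fg.1 fg.2 from rfl]
      rw [Fintype.prod_sum_type]
      rfl
    rw [h2]
    have h3 : (fun a => ((Equiv.sumArrowEquivProdArrow V W Bool).symm fg) (Sum.inl a))
        = fg.1 := rfl
    rw [h3]
    ring
  calc ∑ x : V → Bool, ∑ y : W → Bool,
        wt p ((Equiv.sumArrowEquivProdArrow V W Bool).symm (x, y))
          * F (fun a => ((Equiv.sumArrowEquivProdArrow V W Bool).symm (x, y)) (Sum.inl a))
      = ∑ x : V → Bool, ∑ y : W → Bool, (wt p x * F x) * wt p y :=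
        Finset.sum_congr rfl fun x _ => Finset.sum_congr rfl fun y _ => hterm (x, y)
    _ = ∑ x : V → Bool, wt p x * F x := by
        refine Finset.sum_congr rfl fun x _ => ?_
        rw [← Finset.mul_sum, sum_wt, mul_one]

lemma mean_restrict (P : W → Prop) [DecidablePred P] (F : ({w // P w} → Bool) → ℝ) :
    mean p (fun η : W → Bool => F (fun u => η u.val)) = mean p F := by
  have h1 := mean_equiv (p := p) (Equiv.sumCompl P)
    (fun κ : ({w // P w} ⊕ {w // ¬ P w}) → Bool => F (fun u => κ (Sum.inl u)))
  have h2 := mean_inl (p := p) (W := {w // ¬ P w}) F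
  rw [h2] at h1
  rw [← h1]
  congr 1

lemma mean_inj {U : Type*} [Fintype U] [DecidableEq U] (j : U → W)
    (hj : Function.Injective j) (F : (U → Bool) → ℝ) :
    mean p (fun η : W → Bool => F (fun u => η (j u))) = mean p F := by
  classical
  set P : W → Prop := fun w => w ∈ Set.range j with hP
  let e₀ : U ≃ {w // P w} := Equiv.ofInjective j hj
  let e2 : (U ⊕ {w // ¬ P w}) ≃ W := (Equiv.sumCongr e₀ (Equiv.refl _)).trans (Equiv.sumCompl P)
  have he2 : ∀ a : U, e2 (Sum.inl a) = j a := by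
    intro a
    show (Equiv.sumCompl P) (Sum.inl (e₀ a)) = j a
    rw [Equiv.sumCompl_apply_inl]
    rfl
  have h1 := mean_equiv (p := p) e2
    (fun κ : (U ⊕ {w // ¬ P w}) → Bool => F (fun a => κ (Sum.inl a)))
  have h2 := mean_inl (p := p) (W := {w // ¬ P w}) F
  rw [h2] at h1
  rw [← h1]
  congr 1

end Transport

end NEP

/-- The triangle `Λ_L = {(a,b) ∈ ℤ² : a ≥ 0, b ≥ 0, a + b ≤ L}`. -/
abbrev SiteL (L : ℕ) := {z : Fin (L + 1) × Fin (L + 1) // z.1.val + z.2.val ≤ L}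

/-- `y` is the North neighbor `x + e₂` of `x`. -/
def isNorth {L : ℕ} (y x : SiteL L) : Prop :=
  y.1.1.val = x.1.1.val ∧ y.1.2.val = x.1.2.val + 1

/-- `y` is the East neighbor `x + e₁` of `x`. -/
def isEast {L : ℕ} (y x : SiteL L) : Prop :=
  y.1.1.val = x.1.1.val + 1 ∧ y.1.2.val = x.1.2.val

/-- North-East bootstrap map with empty boundary conditions on `Λ_L`: a site becomes empty iff
it is empty or both its North and East neighbors are empty, a neighbor outside `Λ_L` counting
as empty. -/
def bootNEfree {L : ℕ} (η : SiteL L → Bool) : SiteL L → Bool := fun x =>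
  if η x = false ∨
      ((∀ y, isNorth y x → η y = false) ∧ (∀ y, isEast y x → η y = false))
  then false else true

/-- North-East bootstrap map with occupied boundary conditions on `Λ_L`: a site becomes empty
iff it is empty or both its North and East neighbors are empty, a neighbor outside `Λ_L`
counting as occupied. -/
def bootNEfull {L : ℕ} (η : SiteL L → Bool) : SiteL L → Bool := fun x =>
  if η x = false ∨
      ((∃ y, isNorth y x ∧ η y = false) ∧ (∃ y, isEast y x ∧ η y = false))
  then false else true

/-- The origin `(0,0)` of `Λ_L`. -/
def origin (L : ℕ) : SiteL L := ⟨(0, 0), by simp⟩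

/-- `p_ℓ^{NE}`: the probability that the origin is occupied after `ℓ` iterations of the
North-East bootstrap map with occupied boundary conditions on `Λ_ℓ`. -/
def pNE (ℓ : ℕ) (p : ℝ) : ℝ :=
  probEv p (fun η : SiteL ℓ → Bool => bootNEfull^[ℓ] η (origin ℓ) = true)

/-- The long-range North-East constraint `c_x^{(ℓ)}` on `Λ_L` with empty boundary conditions:
`1` iff `x` can be emptied within `ℓ` steps of the empty-boundary bootstrap map applied to the
configuration set to occupied at `x`. -/
def cNE {L : ℕ} (ℓ : ℕ) (x : SiteL L) (η : SiteL L → Bool) : ℝ :=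
  if bootNEfree^[ℓ] (Function.update η x true) x = false then 1 else 0

namespace NEP

section Model

lemma bootfree_false_iff {L : ℕ} (ξ : SiteL L → Bool) (z : SiteL L) :
    bootNEfree ξ z = false ↔ (ξ z = false ∨
      ((∀ y, isNorth y z → ξ y = false) ∧ (∀ y, isEast y z → ξ y = false))) := by
  unfold bootNEfree
  constructor
  · intro hb
    by_contra hc
    rw [if_neg hc] at hb
    simp at hb
  · intro hc
    rw [if_pos hc]

lemma bootfull_false_iff {L : ℕ} (ξ : SiteL L → Bool) (z : SiteL L) :
    bootNEfull ξ z = false ↔ (ξ z = false ∨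
      ((∃ y, isNorth y z ∧ ξ y = false) ∧ (∃ y, isEast y z ∧ ξ y = false))) := by
  unfold bootNEfull
  constructor
  · intro hb
    by_contra hc
    rw [if_neg hc] at hb
    simp at hb
  · intro hc
    rw [if_pos hc]

lemma bootfree_false {L : ℕ} {ξ : SiteL L → Bool} {z : SiteL L} (h : ξ z = false) :
    bootNEfree ξ z = false := (bootfree_false_iff ξ z).2 (Or.inl h)

lemma bootfull_false {L : ℕ} {ξ : SiteL L → Bool} {z : SiteL L} (h : ξ z = false) :
    bootNEfull ξ z = false := (bootfull_false_iff ξ z).2 (Or.inl h)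

lemma bootfull_iter_false {L : ℕ} {ξ : SiteL L → Bool} {z : SiteL L} (k : ℕ) (h : ξ z = false) :
    bootNEfull^[k] ξ z = false := by
  induction k with
  | zero => simpa using h
  | succ k ih => rw [Function.iterate_succ_apply']; exact bootfull_false ih

lemma bootfull_mono {L : ℕ} {ζ ζ' : SiteL L → Bool} (h : ∀ z, ζ' z = false → ζ z = false) :
    ∀ z, bootNEfull ζ' z = false → bootNEfull ζ z = false := by
  intro z hz
  rw [bootfull_false_iff] at hz ⊢
  rcases hz with h1 | ⟨⟨yN, hN, hyN⟩, ⟨yE, hE, hyE⟩⟩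
  · exact Or.inl (h z h1)
  · exact Or.inr ⟨⟨yN, hN, h _ hyN⟩, ⟨yE, hE, h _ hyE⟩⟩

lemma bootfull_iter_mono {L : ℕ} {ζ ζ' : SiteL L → Bool} (h : ∀ z, ζ' z = false → ζ z = false)
    (k : ℕ) : ∀ z, bootNEfull^[k] ζ' z = false → bootNEfull^[k] ζ z = false := by
  induction k with
  | zero => simpa using h
  | succ k ih =>
    intro z
    rw [Function.iterate_succ_apply', Function.iterate_succ_apply']
    exact bootfull_mono ih z

def inTri {L : ℕ} (k : ℕ) (x y : SiteL L) : Prop :=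
  x.1.1.val ≤ y.1.1.val ∧ x.1.2.val ≤ y.1.2.val ∧
    (y.1.1.val - x.1.1.val) + (y.1.2.val - x.1.2.val) ≤ k

lemma site_ext {L : ℕ} {a b : SiteL L} (h1 : a.1.1.val = b.1.1.val)
    (h2 : a.1.2.val = b.1.2.val) : a = b := by
  apply Subtype.ext
  exact Prod.ext (Fin.ext h1) (Fin.ext h2)

lemma bootfree_iter_local {L : ℕ} (k : ℕ) :
    ∀ (η η' : SiteL L → Bool) (w : SiteL L),
      (∀ y, inTri k w y → η y = η' y) → bootNEfree^[k] η w = bootNEfree^[k] η' w := by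
  induction k with
  | zero =>
    intro η η' w h
    exact h w ⟨le_refl _, le_refl _, by omega⟩
  | succ k ih =>
    intro η η' w h
    rw [Function.iterate_succ_apply', Function.iterate_succ_apply']
    have hw : bootNEfree^[k] η w = bootNEfree^[k] η' w := by
      refine ih η η' w fun y hy => h y ?_
      obtain ⟨h1, h2, h3⟩ := hy
      exact ⟨h1, h2, by omega⟩
    have hN : ∀ y, isNorth y w → bootNEfree^[k] η y = bootNEfree^[k] η' y := by
      intro y hy
      refine ih η η' y fun z hz => h z ?_
      obtain ⟨ha, hb⟩ := hy
      obtain ⟨h1, h2, h3⟩ := hz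
      exact ⟨by omega, by omega, by omega⟩
    have hE : ∀ y, isEast y w → bootNEfree^[k] η y = bootNEfree^[k] η' y := by
      intro y hy
      refine ih η η' y fun z hz => h z ?_
      obtain ⟨ha, hb⟩ := hy
      obtain ⟨h1, h2, h3⟩ := hz
      exact ⟨by omega, by omega, by omega⟩
    unfold bootNEfree
    have hcond : (bootNEfree^[k] η w = false ∨
        ((∀ y, isNorth y w → bootNEfree^[k] η y = false)
          ∧ (∀ y, isEast y w → bootNEfree^[k] η y = false)))
        ↔ (bootNEfree^[k] η' w = false ∨
        ((∀ y, isNorth y w → bootNEfree^[k] η' y = false)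
          ∧ (∀ y, isEast y w → bootNEfree^[k] η' y = false))) := by
      rw [hw]
      apply or_congr Iff.rfl
      apply and_congr
      · constructor
        · intro hh y hy; rw [← hN y hy]; exact hh y hy
        · intro hh y hy; rw [hN y hy]; exact hh y hy
      · constructor
        · intro hh y hy; rw [← hE y hy]; exact hh y hy
        · intro hh y hy; rw [hE y hy]; exact hh y hy
    exact if_congr hcond rfl rfl

def InR {L ℓ : ℕ} (x : SiteL L) (z : SiteL ℓ) : Prop :=
  x.1.1.val + z.1.1.val + (x.1.2.val + z.1.2.val) ≤ L

def addSite {L ℓ : ℕ} (x : SiteL L) (z : SiteL ℓ) (h : InR x z) : SiteL L :=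
  ⟨(⟨x.1.1.val + z.1.1.val, by unfold InR at h; omega⟩,
    ⟨x.1.2.val + z.1.2.val, by unfold InR at h; omega⟩), by
      show x.1.1.val + z.1.1.val + (x.1.2.val + z.1.2.val) ≤ L
      exact h⟩

@[simp] lemma addSite_fst {L ℓ : ℕ} (x : SiteL L) (z : SiteL ℓ) (h : InR x z) :
    (addSite x z h).1.1.val = x.1.1.val + z.1.1.val := rfl

@[simp] lemma addSite_snd {L ℓ : ℕ} (x : SiteL L) (z : SiteL ℓ) (h : InR x z) :
    (addSite x z h).1.2.val = x.1.2.val + z.1.2.val := rfl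

def phi0 {L : ℕ} (ℓ : ℕ) (x : SiteL L) (η : SiteL L → Bool) : SiteL ℓ → Bool :=
  fun z => if h : InR x z then η (addSite x z h) else false

@[simp] lemma origin_fst (L : ℕ) : (origin L).1.1.val = 0 := rfl
@[simp] lemma origin_snd (L : ℕ) : (origin L).1.2.val = 0 := rfl

lemma InR_origin {L : ℕ} (ℓ : ℕ) (x : SiteL L) : InR x (origin ℓ) := by
  unfold InR
  have := x.2
  simp
  omega

lemma addSite_origin {L ℓ : ℕ} (x : SiteL L) (h : InR x (origin ℓ)) :
    addSite x (origin ℓ) h = x := by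
  apply site_ext <;> simp

lemma coupling {L ℓ : ℕ} (x : SiteL L) (k : ℕ) :
    ∀ (η : SiteL L → Bool) (z : SiteL ℓ) (h : InR x z),
      bootNEfull^[k] (phi0 ℓ x η) z = false → bootNEfree^[k] η (addSite x z h) = false := by
  induction k with
  | zero =>
    intro η z h hz
    simpa [phi0, h] using hz
  | succ k ih =>
    intro η z h hz
    rw [Function.iterate_succ_apply'] at hz ⊢
    rw [bootfull_false_iff] at hz
    rcases hz with h1 | ⟨⟨zN, hN, hzN⟩, ⟨zE, hE, hzE⟩⟩
    · exact bootfree_false (ih η z h h1)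
    · rw [bootfree_false_iff]
      refine Or.inr ⟨?_, ?_⟩
      · intro y hy
        obtain ⟨ha, hb⟩ := hy
        obtain ⟨haN, hbN⟩ := hN
        have hyb := y.2
        have hInR : InR x zN := by
          unfold InR
          simp only [addSite_fst, addSite_snd] at ha hb
          omega
        have hres := ih η zN hInR hzN
        have hy_eq : y = addSite x zN hInR := by
          apply site_ext
          · simp only [addSite_fst, addSite_snd] at ha hb ⊢
            omega
          · simp only [addSite_fst, addSite_snd] at ha hb ⊢
            omega
        rw [hy_eq]
        exact hres
      · intro y hy
        obtain ⟨ha, hb⟩ := hy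
        obtain ⟨haE, hbE⟩ := hE
        have hyb := y.2
        have hInR : InR x zE := by
          unfold InR
          simp only [addSite_fst, addSite_snd] at ha hb
          omega
        have hres := ih η zE hInR hzE
        have hy_eq : y = addSite x zE hInR := by
          apply site_ext
          · simp only [addSite_fst, addSite_snd] at ha hb ⊢
            omega
          · simp only [addSite_fst, addSite_snd] at ha hb ⊢
            omega
        rw [hy_eq]
        exact hres

lemma phi0_update {L ℓ : ℕ} (x : SiteL L) (η : SiteL L → Bool) :
    phi0 ℓ x (Function.update η x true) = Function.update (phi0 ℓ x η) (origin ℓ) true := by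
  funext z
  by_cases hz : z = origin ℓ
  · subst hz
    rw [Function.update_self]
    unfold phi0
    rw [dif_pos (InR_origin ℓ x), addSite_origin, Function.update_self]
  · rw [Function.update_of_ne hz]
    unfold phi0
    by_cases h : InR x z
    · rw [dif_pos h, dif_pos h]
      have hne : addSite x z h ≠ x := by
        intro heq
        apply hz
        have h1 := congrArg (fun s : SiteL L => s.1.1.val) heq
        have h2 := congrArg (fun s : SiteL L => s.1.2.val) heq
        simp only [addSite_fst, addSite_snd] at h1 h2
        apply site_ext <;> simp only [origin, Fin.val_zero] <;> omega
      rw [Function.update_of_ne hne]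
    · rw [dif_neg h, dif_neg h]


def EvNE (ℓ : ℕ) : (SiteL ℓ → Bool) → Prop :=
  fun ζ => bootNEfull^[ℓ] (Function.update ζ (origin ℓ) true) (origin ℓ) = true

lemma EvNE_mono {ℓ : ℕ} {ζ ζ' : SiteL ℓ → Bool} (h : ∀ z, ζ' z = false → ζ z = false)
    (hE : EvNE ℓ ζ) : EvNE ℓ ζ' := by
  unfold EvNE at hE ⊢
  by_contra hc
  have hfalse : bootNEfull^[ℓ] (Function.update ζ' (origin ℓ) true) (origin ℓ) = false := by
    cases hb : bootNEfull^[ℓ] (Function.update ζ' (origin ℓ) true) (origin ℓ)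
    · rfl
    · exact absurd hb hc
  have hmono : ∀ z, Function.update ζ' (origin ℓ) true z = false
      → Function.update ζ (origin ℓ) true z = false := by
    intro z hz
    by_cases hzo : z = origin ℓ
    · subst hzo; rw [Function.update_self] at hz; exact absurd hz (by simp)
    · rw [Function.update_of_ne hzo] at hz ⊢
      exact h z hz
  have := bootfull_iter_mono hmono ℓ (origin ℓ) hfalse
  rw [hE] at this
  exact absurd this (by simp)

variable {p : ℝ}

noncomputable def ind (P : Prop) : ℝ := if P then 1 else 0

lemma ind_pos {P : Prop} (h : P) : ind P = 1 := by simp [ind, h]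

lemma ind_neg {P : Prop} (h : ¬ P) : ind P = 0 := by simp [ind, h]

lemma ind_nonneg (P : Prop) : 0 ≤ ind P := by
  unfold ind; split <;> norm_num

lemma ind_mono {P Q : Prop} (h : P → Q) : ind P ≤ ind Q := by
  by_cases hp : P
  · rw [ind_pos hp, ind_pos (h hp)]
  · rw [ind_neg hp]; exact ind_nonneg Q

lemma ind_congr {P Q : Prop} (h : P ↔ Q) : ind P = ind Q := by
  by_cases hp : P
  · rw [ind_pos hp, ind_pos (h.1 hp)]
  · rw [ind_neg hp, ind_neg (fun q => hp (h.2 q))]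

lemma probEv_eq {V : Type*} [Fintype V] [DecidableEq V] (E : (V → Bool) → Prop) :
    probEv p E = mean p (fun η => ind (E η)) := rfl

lemma probEv_nonneg (hp0 : 0 ≤ p) (hp1 : p ≤ 1) {V : Type*} [Fintype V] [DecidableEq V]
    (E : (V → Bool) → Prop) : 0 ≤ probEv p E := by
  rw [probEv_eq]
  exact mean_nonneg hp0 hp1 fun η => ind_nonneg _

lemma pNE_factor {ℓ : ℕ} (hp0 : 0 < p) (hp1 : p < 1) :
    probEv p (EvNE ℓ) = pNE ℓ p / p := by
  have key : pNE ℓ p = p * probEv p (EvNE ℓ) := by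
    have hpoint : ∀ ζ : SiteL ℓ → Bool,
        ind (bootNEfull^[ℓ] ζ (origin ℓ) = true)
        = ind (ζ (origin ℓ) = true) * ind (EvNE ℓ ζ) := by
      intro ζ
      by_cases h0 : ζ (origin ℓ) = true
      · have hupd : Function.update ζ (origin ℓ) true = ζ := by
          conv_lhs => rw [← h0]
          exact Function.update_eq_self _ ζ
        rw [ind_pos h0, one_mul]
        refine ind_congr ?_
        unfold EvNE
        rw [hupd]
      · have h0' : ζ (origin ℓ) = false := by
          cases hb : ζ (origin ℓ)
          · rfl
          · exact absurd hb h0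
        have hf : bootNEfull^[ℓ] ζ (origin ℓ) = false := bootfull_iter_false ℓ h0'
        rw [ind_neg h0, ind_neg (by rw [hf]; simp), zero_mul]
    have e1 : pNE ℓ p = mean p (fun ζ : SiteL ℓ → Bool =>
        ind (ζ (origin ℓ) = true) * ind (EvNE ℓ ζ)) := by
      unfold pNE
      rw [probEv_eq]
      exact mean_congr fun ζ => hpoint ζ
    rw [e1]
    rw [mean_mul_local_indep (x := origin ℓ)
      (fun ζ => ind (ζ (origin ℓ) = true))
      (fun ζ => ind (EvNE ℓ ζ))
      (fun η η' hη => by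
        show ind (η (origin ℓ) = true) = ind (η' (origin ℓ) = true)
        rw [hη])
      (fun η s => by
        show ind (EvNE ℓ (Function.update η (origin ℓ) s)) = ind (EvNE ℓ η)
        refine ind_congr ?_
        unfold EvNE
        rw [Function.update_idem])]
    have hmu : mean p (fun ζ : SiteL ℓ → Bool => ind (ζ (origin ℓ) = true)) = p := by
      calc mean p (fun ζ : SiteL ℓ → Bool => ind (ζ (origin ℓ) = true))
          = mean p (cexp p {origin ℓ}
              (fun ζ => ind (ζ (origin ℓ) = true))) := (mean_cexp _ _).symm
        _ = mean p (fun _ => p) := by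
            refine mean_congr fun η => ?_
            rw [cexp_single]
            rw [show ind ((Function.update η (origin ℓ) true) (origin ℓ) = true) = 1 from
              ind_pos (by rw [Function.update_self])]
            rw [show ind ((Function.update η (origin ℓ) false) (origin ℓ) = true) = 0 from
              ind_neg (by rw [Function.update_self]; simp)]
            ring
        _ = p := mean_const p
    rw [hmu, probEv_eq]
  rw [key, mul_comm, mul_div_assoc, div_self (ne_of_gt hp0), mul_one]

lemma eps_le {L : ℕ} (hp0 : 0 < p) (hp1 : p < 1) (ℓ : ℕ) (x : SiteL L) :
    mean p (fun η => 1 - cNE ℓ x η) ≤ pNE ℓ p / p := by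
  classical
  have hp0' := hp0.le
  have hp1' := hp1.le
  have h0 : mean p (fun η : SiteL L → Bool => 1 - cNE ℓ x η)
      = mean p (fun η : SiteL L → Bool
          => ind (bootNEfree^[ℓ] (Function.update η x true) x = true)) := by
    refine mean_congr fun η => ?_
    unfold cNE
    cases hb : bootNEfree^[ℓ] (Function.update η x true) x
    · rw [if_pos rfl, ind_neg (by simp)]
      ring
    · rw [if_neg (by simp), ind_pos rfl]
      ring
  rw [h0]
  have h1 : ∀ η : SiteL L → Bool,
      ind (bootNEfree^[ℓ] (Function.update η x true) x = true)
      ≤ ind (EvNE ℓ (phi0 ℓ x η)) := by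
    intro η
    refine ind_mono fun he => ?_
    unfold EvNE
    by_contra hno
    have hfalse : bootNEfull^[ℓ] (Function.update (phi0 ℓ x η) (origin ℓ) true)
        (origin ℓ) = false := by
      cases hb : bootNEfull^[ℓ] (Function.update (phi0 ℓ x η) (origin ℓ) true) (origin ℓ)
      · rfl
      · exact absurd hb hno
    rw [← phi0_update] at hfalse
    have hcoup := coupling x ℓ (Function.update η x true) (origin ℓ) (InR_origin ℓ x) hfalse
    rw [addSite_origin] at hcoup
    rw [hcoup] at he
    exact absurd he (by simp)
  calc mean p (fun η : SiteL L → Bool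
        => ind (bootNEfree^[ℓ] (Function.update η x true) x = true))
      ≤ mean p (fun η : SiteL L → Bool => ind (EvNE ℓ (phi0 ℓ x η))) :=
        mean_mono hp0' hp1' h1
    _ = mean p (fun ζ : SiteL ℓ → Bool =>
          ind (EvNE ℓ (fun z => if h : InR x z then ζ z else false))) := by
        have hjinj : Function.Injective
            (fun u : {z : SiteL ℓ // InR x z} => addSite x u.1 u.2) := by
          intro a b hab
          have h1' := congrArg (fun s : SiteL L => s.1.1.val) hab
          have h2' := congrArg (fun s : SiteL L => s.1.2.val) hab
          simp only [addSite_fst, addSite_snd] at h1' h2'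
          apply Subtype.ext
          apply site_ext <;> omega
        have hA := mean_inj (p := p)
          (fun u : {z : SiteL ℓ // InR x z} => addSite x u.1 u.2) hjinj
          (fun κ : {z : SiteL ℓ // InR x z} → Bool =>
            ind (EvNE ℓ (fun z => if h : InR x z then κ ⟨z, h⟩ else false)))
        have hB := mean_restrict (p := p) (fun z : SiteL ℓ => InR x z)
          (fun κ : {z : SiteL ℓ // InR x z} → Bool =>
            ind (EvNE ℓ (fun z => if h : InR x z then κ ⟨z, h⟩ else false)))
        calc mean p (fun η : SiteL L → Bool => ind (EvNE ℓ (phi0 ℓ x η)))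
            = mean p (fun η : SiteL L → Bool => ind (EvNE ℓ
                (fun z => if h : InR x z then η (addSite x z h) else false))) := by
              refine mean_congr fun η => ?_
              rfl
          _ = mean p (fun κ : {z : SiteL ℓ // InR x z} → Bool =>
                ind (EvNE ℓ (fun z => if h : InR x z then κ ⟨z, h⟩ else false))) := hA
          _ = mean p (fun ζ : SiteL ℓ → Bool =>
                ind (EvNE ℓ (fun z => if h : InR x z then ζ z else false))) := by
              rw [← hB]
    _ ≤ mean p (fun ζ : SiteL ℓ → Bool => ind (EvNE ℓ ζ)) := by
        refine mean_mono hp0' hp1' fun ζ => ?_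
        refine ind_mono fun hE => ?_
        refine EvNE_mono (ζ := fun z => if h : InR x z then ζ z else false) ?_ hE
        intro z hz
        show (if h : InR x z then ζ z else false) = false
        by_cases h : InR x z
        · rw [dif_pos h]; exact hz
        · rw [dif_neg h]
    _ = pNE ℓ p / p := by
        rw [← probEv_eq]
        exact pNE_factor hp0 hp1

end Model

end NEP

open Finset NEP in
theorem NE_longrange_poincare (ℓ : ℕ) (p : ℝ) (hp : p ∈ Set.Ioo (0 : ℝ) 1) (hl : 1 ≤ ℓ)
    (hδ : ((ℓ : ℝ) + 1) ^ 2 * (pNE ℓ p / p) ≤ 1 / 4) :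
    ∀ (L : ℕ) (f : (SiteL L → Bool) → ℝ),
      varTot p f ≤ 8 * ∑ x : SiteL L, mean p (fun η => cNE ℓ x η * cvar p {x} f η) := by
  obtain ⟨hp0, hp1⟩ := hp
  intro L f
  classical
  set N := Fintype.card (SiteL L) with hN
  have hidx_lt : ∀ x : SiteL L, ((Fintype.equivFin (SiteL L)) x).val < N :=
    fun x => ((Fintype.equivFin (SiteL L)) x).isLt
  set ι : SiteL L → ℕ :=
    fun x => (x.1.1.val + x.1.2.val) * N + ((Fintype.equivFin (SiteL L)) x).val with hι
  have hkey : ∀ a b : SiteL L, a.1.1.val + a.1.2.val < b.1.1.val + b.1.2.val → ι a < ι b := by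
    intro a b hab
    have hia : ι a = (a.1.1.val + a.1.2.val) * N + ((Fintype.equivFin (SiteL L)) a).val := rfl
    have hib : ι b = (b.1.1.val + b.1.2.val) * N + ((Fintype.equivFin (SiteL L)) b).val := rfl
    have h1 := hidx_lt a
    have h : (a.1.1.val + a.1.2.val + 1) * N ≤ (b.1.1.val + b.1.2.val) * N :=
      Nat.mul_le_mul_right N (by omega)
    have e : (a.1.1.val + a.1.2.val + 1) * N = (a.1.1.val + a.1.2.val) * N + N := by ring
    omega
  have hι_inj : Function.Injective ι := by
    intro a b hab
    by_cases hs : a.1.1.val + a.1.2.val = b.1.1.val + b.1.2.val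
    · have hab' : (a.1.1.val + a.1.2.val) * N + ((Fintype.equivFin (SiteL L)) a).val
          = (b.1.1.val + b.1.2.val) * N + ((Fintype.equivFin (SiteL L)) b).val := hab
      rw [hs] at hab'
      have he : ((Fintype.equivFin (SiteL L)) a).val
          = ((Fintype.equivFin (SiteL L)) b).val := by omega
      exact (Fintype.equivFin (SiteL L)).injective (Fin.ext he)
    · rcases Nat.lt_or_ge (a.1.1.val + a.1.2.val) (b.1.1.val + b.1.2.val) with h | h
      · exact absurd hab (Nat.ne_of_lt (hkey a b h))
      · have h' : b.1.1.val + b.1.2.val < a.1.1.val + a.1.2.val :=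
          lt_of_le_of_ne h (fun e => hs e.symm)
        exact absurd hab.symm (Nat.ne_of_lt (hkey b a h'))
  letI myord : LinearOrder (SiteL L) := LinearOrder.lift' ι hι_inj
  have hc01 : ∀ (x : SiteL L) (η : SiteL L → Bool), cNE ℓ x η = 0 ∨ cNE ℓ x η = 1 := by
    intro x η
    unfold cNE
    split
    · exact Or.inr rfl
    · exact Or.inl rfl
  have hdep : ∀ (x : SiteL L) (η η' : SiteL L → Bool),
      (∀ y ∈ (univ.filter (fun y => inTri ℓ x y)).erase x, η y = η' y)
      → cNE ℓ x η = cNE ℓ x η' := by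
    intro x η η' hagree
    unfold cNE
    have heq : bootNEfree^[ℓ] (Function.update η x true) x
        = bootNEfree^[ℓ] (Function.update η' x true) x := by
      apply bootfree_iter_local
      intro y hy
      by_cases hyx : y = x
      · subst hyx; rw [Function.update_self, Function.update_self]
      · rw [Function.update_of_ne hyx, Function.update_of_ne hyx]
        exact hagree y (Finset.mem_erase.2 ⟨hyx, Finset.mem_filter.2 ⟨Finset.mem_univ y, hy⟩⟩)
    rw [heq]
  have hΔι : ∀ x : SiteL L, ∀ y ∈ (univ.filter (fun y => inTri ℓ x y)).erase x, ι x < ι y := by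
    intro x y hy
    obtain ⟨hne, hyT⟩ := Finset.mem_erase.mp hy
    obtain ⟨h1, h2, h3⟩ := (Finset.mem_filter.mp hyT).2
    apply hkey
    by_contra hge
    push_neg at hge
    have hxa : x.1.1.val = y.1.1.val := by omega
    have hxb : x.1.2.val = y.1.2.val := by omega
    exact hne (site_ext hxa.symm hxb.symm)
  have hxT : ∀ x : SiteL L, x ∈ univ.filter (fun y => inTri ℓ x y) := by
    intro x
    exact Finset.mem_filter.2 ⟨Finset.mem_univ x, ⟨le_refl _, le_refl _, by omega⟩⟩
  have hsum : ∀ y : SiteL L,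
      ∑ x ∈ univ.filter (fun x =>
          y ∈ insert x ((univ.filter (fun z => inTri ℓ x z)).erase x)),
        mean p (fun η => 1 - cNE ℓ x η) ≤ 1/4 := by
    intro y
    have hsub : univ.filter (fun x : SiteL L =>
          y ∈ insert x ((univ.filter (fun z => inTri ℓ x z)).erase x))
        = univ.filter (fun x : SiteL L => inTri ℓ x y) := by
      refine Finset.filter_congr fun x _ => ?_
      rw [Finset.insert_erase (hxT x)]
      simp only [Finset.mem_filter, Finset.mem_univ, true_and]
    rw [hsub]
    have hpNEnn : 0 ≤ pNE ℓ p / p := div_nonneg (probEv_nonneg hp0.le hp1.le _) hp0.le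
    have hcard : (univ.filter (fun x : SiteL L => inTri ℓ x y)).card ≤ (ℓ+1) * (ℓ+1) := by
      have hinj : Set.InjOn (fun x : SiteL L =>
          ((⟨(y.1.1.val - x.1.1.val) % (ℓ+1), Nat.mod_lt _ (Nat.succ_pos ℓ)⟩ : Fin (ℓ+1)),
           (⟨(y.1.2.val - x.1.2.val) % (ℓ+1), Nat.mod_lt _ (Nat.succ_pos ℓ)⟩ : Fin (ℓ+1))))
          (univ.filter (fun x : SiteL L => inTri ℓ x y)) := by
        intro a ha b hb hab
        obtain ⟨ha1, ha2, ha3⟩ := (Finset.mem_filter.mp ha).2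
        obtain ⟨hb1, hb2, hb3⟩ := (Finset.mem_filter.mp hb).2
        have e1 := congrArg (fun q : Fin (ℓ+1) × Fin (ℓ+1) => q.1.val) hab
        have e2 := congrArg (fun q : Fin (ℓ+1) × Fin (ℓ+1) => q.2.val) hab
        simp only at e1 e2
        have m1 : (y.1.1.val - a.1.1.val) % (ℓ+1) = y.1.1.val - a.1.1.val :=
          Nat.mod_eq_of_lt (by omega)
        have m2 : (y.1.1.val - b.1.1.val) % (ℓ+1) = y.1.1.val - b.1.1.val :=
          Nat.mod_eq_of_lt (by omega)
        have m3 : (y.1.2.val - a.1.2.val) % (ℓ+1) = y.1.2.val - a.1.2.val :=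
          Nat.mod_eq_of_lt (by omega)
        have m4 : (y.1.2.val - b.1.2.val) % (ℓ+1) = y.1.2.val - b.1.2.val :=
          Nat.mod_eq_of_lt (by omega)
        rw [m1, m2] at e1
        rw [m3, m4] at e2
        apply site_ext <;> omega
      have hc := Finset.card_le_card_of_injOn _ (fun a _ => Finset.mem_univ _) hinj
      calc (univ.filter (fun x : SiteL L => inTri ℓ x y)).card
          ≤ (univ : Finset (Fin (ℓ+1) × Fin (ℓ+1))).card := hc
        _ = (ℓ+1) * (ℓ+1) := by simp
    calc ∑ x ∈ univ.filter (fun x : SiteL L => inTri ℓ x y),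
          mean p (fun η => 1 - cNE ℓ x η)
        ≤ (univ.filter (fun x : SiteL L => inTri ℓ x y)).card • (pNE ℓ p / p) :=
          Finset.sum_le_card_nsmul _ _ _ (fun x _ => eps_le hp0 hp1 ℓ x)
      _ = ((univ.filter (fun x : SiteL L => inTri ℓ x y)).card : ℝ) * (pNE ℓ p / p) :=
          nsmul_eq_mul _ _
      _ ≤ (((ℓ+1) * (ℓ+1) : ℕ) : ℝ) * (pNE ℓ p / p) :=
          mul_le_mul_of_nonneg_right (by exact_mod_cast hcard) hpNEnn
      _ = ((ℓ:ℝ)+1)^2 * (pNE ℓ p / p) := by push_cast; ring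
      _ ≤ 1/4 := hδ
  refine @abstract_poincare (SiteL L) _ _ p myord hp0 hp1 (fun x => cNE ℓ x)
    (fun x => (univ.filter (fun z => inTri ℓ x z)).erase x) hc01 hdep ?_ hsum f
  intro x y hy
  refine @lt_of_le_of_ne (SiteL L) (@LinearOrder.toPartialOrder _ myord) x y ?_ ?_
  · exact (hΔι x y hy).le
  · intro he
    subst he
    exact lt_irrefl _ (hΔι x x hy)
end
end

section
/- Let k ≥ 2, 1 ≤ j ≤ k and p ∈ (0,1). There exists a constant γ ≥ 1, depending only on j, k and p but not on L, such that for every L ≥ 1 and every f : {0,1}^{T_L} → ℝ on the ball T_L of radius L centered at r in the (k+1)-regular tree, the two-block Poincaré inequality Var_μ(f) ≤ γ · ( μ( c_r · Var_r(f) ) + μ( Var_B(f) ) ) holds, where c_r(η) = 1 if and only if at least j of the k+1 neighbors y of r satisfy η_y = 0, B = T_L \ {r}, Var_r(f) is the conditional variance of f in the coordinate η_r given all other coordinates, and Var_B(f) is the conditional variance of f in the coordinates of B given η_r. -/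
open scoped Classical

noncomputable section

/-- Vertices of the ball `T_L` of radius `L` centered at `r` in the `(k+1)`-regular tree:
the root (`none`) together with the words `v₁⋯v_{m+1}`, `m + 1 ≤ L`, where `v₁ ∈ Fin (k+1)`
and the subsequent letters lie in `Fin k`. -/
abbrev BV (k L : ℕ) := Option (Σ m : Fin L, Fin (k + 1) × (Fin m.val → Fin k))

/-- Depth (distance from the root `r`). -/
def bdepth {k L : ℕ} : BV k L → ℕ
  | none => 0
  | some ⟨m, _, _⟩ => m.val + 1

/-- `y` is a one-letter extension of `x`. -/
def oneStep {k L : ℕ} : BV k L → BV k L → Prop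
  | none, some ⟨m, _, _⟩ => m.val = 0
  | some ⟨m, a, w⟩, some ⟨m', b, w'⟩ =>
      a = b ∧ ∃ h : m'.val = m.val + 1, ∀ i : Fin m.val, w' (Fin.cast h.symm i.castSucc) = w i
  | _, _ => False

/-- Adjacency in the ball `T_L`: one of the two words is a one-letter extension of the other. -/
def adj {k L : ℕ} (x y : BV k L) : Prop := oneStep x y ∨ oneStep y x

namespace TBP
open Finset

variable {V : Type*} [Fintype V] [DecidableEq V] {p : ℝ}

lemma sum_pi_bool (F : V → Bool → ℝ) :
    ∑ η : V → Bool, ∏ x, F x (η x) = ∏ x, (F x true + F x false) := by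
  have h := Finset.prod_univ_sum (fun _ : V => (univ : Finset Bool)) F
  rw [Fintype.piFinset_univ] at h
  rw [← h]
  exact Finset.prod_congr rfl fun x _ => by rw [Fintype.sum_bool]

lemma wt_nonneg (hp0 : 0 < p) (hp1 : p < 1) (η : V → Bool) : 0 ≤ wt p η :=
  Finset.prod_nonneg fun x _ => by split_ifs <;> linarith

lemma sum_wt : ∑ η : V → Bool, wt p η = 1 := by
  have h := sum_pi_bool (V := V) (fun _ b => if b then p else 1 - p)
  simp only [if_true, if_false] at h
  simp only [wt]
  rw [h]
  have e : (p + if (false:Bool) = true then p else 1 - p) = 1 := by norm_num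
  rw [e, Finset.prod_const_one]

lemma mean_congr {u v : (V → Bool) → ℝ} (h : ∀ η, u η = v η) : mean p u = mean p v := by
  unfold mean; exact Finset.sum_congr rfl fun η _ => by rw [h]

lemma mean_add (u v : (V → Bool) → ℝ) :
    mean p (fun η => u η + v η) = mean p u + mean p v := by
  unfold mean; rw [← Finset.sum_add_distrib]
  exact Finset.sum_congr rfl fun η _ => by ring

lemma mean_sub (u v : (V → Bool) → ℝ) :
    mean p (fun η => u η - v η) = mean p u - mean p v := by
  unfold mean; rw [← Finset.sum_sub_distrib]
  exact Finset.sum_congr rfl fun η _ => by ring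

lemma mean_const_mul (a : ℝ) (u : (V → Bool) → ℝ) :
    mean p (fun η => a * u η) = a * mean p u := by
  unfold mean; rw [Finset.mul_sum]
  exact Finset.sum_congr rfl fun η _ => by ring

lemma mean_const (a : ℝ) : mean p (fun _ : V → Bool => a) = a := by
  unfold mean
  rw [← Finset.sum_mul, sum_wt (V := V) (p := p), one_mul]

lemma mean_mono (hp0 : 0 < p) (hp1 : p < 1) {u v : (V → Bool) → ℝ} (h : ∀ η, u η ≤ v η) :
    mean p u ≤ mean p v :=
  Finset.sum_le_sum fun η _ => mul_le_mul_of_nonneg_left (h η) (wt_nonneg hp0 hp1 η)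

lemma mean_nonneg (hp0 : 0 < p) (hp1 : p < 1) {u : (V → Bool) → ℝ} (h : ∀ η, 0 ≤ u η) :
    0 ≤ mean p u := by
  have := mean_mono hp0 hp1 (u := fun _ => (0:ℝ)) (v := u) h
  rwa [mean_const] at this

lemma varTot_eq (f : (V → Bool) → ℝ) :
    varTot p f = mean p (fun η => (f η - mean p f) ^ 2) := by
  have h1 : ∀ η : V → Bool, (f η - mean p f) ^ 2
      = f η ^ 2 + ((-2 * mean p f) * f η + (mean p f)^2) := fun η => by ring
  rw [mean_congr h1, mean_add (fun η => f η ^2), mean_add, mean_const_mul, mean_const]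
  unfold varTot; ring

lemma varTot_nonneg (hp0 : 0 < p) (hp1 : p < 1) (f : (V → Bool) → ℝ) :
    0 ≤ varTot p f := by
  rw [varTot_eq]; exact mean_nonneg hp0 hp1 fun η => sq_nonneg _

lemma mean_cs (hp0 : 0 < p) (hp1 : p < 1) (u v : (V → Bool) → ℝ) :
    (mean p (fun η => u η * v η))^2 ≤ mean p (fun η => u η ^ 2) * mean p (fun η => v η ^ 2) := by
  have h := Finset.sum_mul_sq_le_sq_mul_sq Finset.univ
    (fun η : V → Bool => Real.sqrt (wt p η) * u η) (fun η => Real.sqrt (wt p η) * v η)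
  have e1 : ∀ η : V → Bool, (Real.sqrt (wt p η) * u η) * (Real.sqrt (wt p η) * v η)
      = wt p η * (u η * v η) := fun η => by
    rw [mul_mul_mul_comm, Real.mul_self_sqrt (wt_nonneg hp0 hp1 η)]
  have e2 : ∀ (w : (V → Bool) → ℝ) (η), (Real.sqrt (wt p η) * w η) ^ 2 = wt p η * w η ^ 2 :=
    fun w η => by rw [mul_pow, Real.sq_sqrt (wt_nonneg hp0 hp1 η)]
  rw [Finset.sum_congr rfl fun η _ => e1 η, Finset.sum_congr rfl fun η _ => e2 u η,
    Finset.sum_congr rfl fun η _ => e2 v η] at h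
  exact h

end TBP

namespace TBP
open Finset

variable {V : Type*} [Fintype V] [DecidableEq V] {p : ℝ}

/-- flip the coordinate at `r` -/
def flipAt (r : V) : (V → Bool) ≃ (V → Bool) where
  toFun ζ := fun x => if x = r then !ζ x else ζ x
  invFun ζ := fun x => if x = r then !ζ x else ζ x
  left_inv ζ := funext fun x => by by_cases h : x = r <;> simp [h]
  right_inv ζ := funext fun x => by by_cases h : x = r <;> simp [h]

lemma flipAt_eq_update (r : V) (ζ : V → Bool) :
    flipAt r ζ = Function.update ζ r (!ζ r) := by
  funext x
  by_cases h : x = r <;> simp [flipAt, h, Function.update_apply]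

lemma sum_ind_eq {r : V} {Φ : (V → Bool) → ℝ}
    (hΦ : ∀ ζ b, Φ (Function.update ζ r b) = Φ ζ) (b b' : Bool) :
    ∑ ζ : V → Bool, (if ζ r = b then Φ ζ else 0)
      = ∑ ζ : V → Bool, (if ζ r = b' then Φ ζ else 0) := by
  have key : ∑ ζ : V → Bool, (if ζ r = true then Φ ζ else 0)
      = ∑ ζ : V → Bool, (if ζ r = false then Φ ζ else 0) := by
    rw [← Equiv.sum_comp (flipAt r) (fun ζ => if ζ r = true then Φ ζ else 0)]
    refine Finset.sum_congr rfl fun ζ _ => ?_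
    have h1 : (flipAt r ζ) r = !ζ r := by simp [flipAt]
    have h2 : Φ (flipAt r ζ) = Φ ζ := by rw [flipAt_eq_update, hΦ]
    rw [h1, h2]
    cases h : ζ r <;> simp
  cases b <;> cases b' <;> simp [key]

lemma sum_w_eq_ind {r : V} {Φ : (V → Bool) → ℝ}
    (hΦ : ∀ ζ b, Φ (Function.update ζ r b) = Φ ζ) (b : Bool) :
    ∑ ζ : V → Bool, (if ζ r then p else 1 - p) * Φ ζ
      = ∑ ζ : V → Bool, (if ζ r = b then Φ ζ else 0) := by
  have hsplit : ∀ ζ : V → Bool, (if ζ r then p else 1 - p) * Φ ζ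
      = p * (if ζ r = true then Φ ζ else 0) + (1 - p) * (if ζ r = false then Φ ζ else 0) := by
    intro ζ; cases h : ζ r <;> simp [h]
  rw [Finset.sum_congr rfl fun ζ _ => hsplit ζ, Finset.sum_add_distrib, ← Finset.mul_sum,
    ← Finset.mul_sum, sum_ind_eq hΦ true b, sum_ind_eq hΦ false b]
  ring

lemma wt_factor (r : V) (ζ : V → Bool) :
    wt p ζ = (if ζ r then p else 1 - p)
      * ∏ x ∈ Finset.univ.erase r, (if ζ x then p else 1 - p) :=
  (Finset.mul_prod_erase Finset.univ _ (Finset.mem_univ r)).symm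

lemma mean_eq_update (r : V) (S : (V → Bool) → ℝ) :
    mean p S = p * mean p (fun ζ => S (Function.update ζ r true))
      + (1 - p) * mean p (fun ζ => S (Function.update ζ r false)) := by
  set Prd : (V → Bool) → ℝ := fun ζ => ∏ x ∈ Finset.univ.erase r, (if ζ x then p else 1 - p)
    with hPrd
  have hPrdinv : ∀ (ζ : V → Bool) (c : Bool), Prd (Function.update ζ r c) = Prd ζ := by
    intro ζ c
    refine Finset.prod_congr rfl fun x hx => ?_
    rw [Function.update_of_ne (Finset.ne_of_mem_erase hx)]
  have hΦ : ∀ b : Bool, ∀ (ζ : V → Bool) (c : Bool),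
      (Prd (Function.update ζ r c)) * S (Function.update (Function.update ζ r c) r b)
        = Prd ζ * S (Function.update ζ r b) := by
    intro b ζ c
    rw [hPrdinv, Function.update_idem]
  have hmb : ∀ b : Bool, mean p (fun ζ => S (Function.update ζ r b))
      = ∑ ζ : V → Bool, (if ζ r = b then Prd ζ * S (Function.update ζ r b) else 0) := by
    intro b
    unfold mean
    rw [Finset.sum_congr rfl fun ζ _ => by
      rw [wt_factor r ζ, mul_assoc]]
    exact sum_w_eq_ind (Φ := fun ζ => Prd ζ * S (Function.update ζ r b)) (hΦ b) b
  have hpt : ∀ ζ : V → Bool, wt p ζ * S ζ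
      = p * (if ζ r = true then Prd ζ * S (Function.update ζ r true) else 0)
        + (1 - p) * (if ζ r = false then Prd ζ * S (Function.update ζ r false) else 0) := by
    intro ζ
    rw [wt_factor r ζ]
    cases h : ζ r
    · have : Function.update ζ r false = ζ := by rw [← h, Function.update_eq_self]
      simp [h, this]; ring
    · have : Function.update ζ r true = ζ := by rw [← h, Function.update_eq_self]
      simp [h, this]; ring
  unfold mean
  rw [Finset.sum_congr rfl fun ζ _ => hpt ζ, Finset.sum_add_distrib, ← Finset.mul_sum,
    ← Finset.mul_sum, ← hmb true, ← hmb false]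
  rfl

lemma mean_root (r : V) (h : Bool → ℝ) :
    mean p (fun η => h (η r)) = p * h true + (1 - p) * h false := by
  rw [mean_eq_update r (fun η => h (η r))]
  simp only [Function.update_self]
  rw [mean_const, mean_const]

lemma cexp_block (r : V) (f : (V → Bool) → ℝ) (η : V → Bool) :
    cexp p (Finset.univ.erase r) f η = mean p (fun ζ => f (Function.update ζ r (η r))) := by
  set Prd : (V → Bool) → ℝ := fun ζ => ∏ x ∈ Finset.univ.erase r, (if ζ x then p else 1 - p)
    with hPrd
  have hPrdinv : ∀ (ζ : V → Bool) (c : Bool), Prd (Function.update ζ r c) = Prd ζ := by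
    intro ζ c
    refine Finset.prod_congr rfl fun x hx => ?_
    rw [Function.update_of_ne (Finset.ne_of_mem_erase hx)]
  have hΦ : ∀ (ζ : V → Bool) (c : Bool),
      (Prd (Function.update ζ r c)) * f (Function.update (Function.update ζ r c) r (η r))
        = Prd ζ * f (Function.update ζ r (η r)) := by
    intro ζ c; rw [hPrdinv, Function.update_idem]
  have hprod : ∀ ζ : V → Bool,
      (∏ x : V, if x ∈ Finset.univ.erase r then (if ζ x then p else 1 - p)
        else (if ζ x = η x then (1:ℝ) else 0))
      = (if ζ r = η r then (1:ℝ) else 0) * Prd ζ := by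
    intro ζ
    rw [← Finset.mul_prod_erase Finset.univ _ (Finset.mem_univ r)]
    congr 1
    · rw [if_neg (by simp)]
    · exact Finset.prod_congr rfl fun x hx => if_pos hx
  unfold cexp
  rw [Finset.sum_congr rfl fun ζ _ => by rw [hprod ζ]]
  have step : ∀ ζ : V → Bool, (if ζ r = η r then (1:ℝ) else 0) * Prd ζ * f ζ
      = (if ζ r = η r then Prd ζ * f (Function.update ζ r (η r)) else 0) := by
    intro ζ
    by_cases h : ζ r = η r
    · have : Function.update ζ r (η r) = ζ := by rw [← h, Function.update_eq_self]
      rw [this, if_pos h, if_pos h]; ring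
    · rw [if_neg h, if_neg h]; ring
  rw [Finset.sum_congr rfl fun ζ _ => step ζ,
    ← sum_w_eq_ind (Φ := fun ζ => Prd ζ * f (Function.update ζ r (η r))) hΦ (η r)]
  unfold mean
  exact Finset.sum_congr rfl fun ζ _ => by rw [wt_factor r ζ, mul_assoc]

end TBP
namespace TBP
open Finset

variable {V : Type*} [Fintype V] [DecidableEq V] {p : ℝ}

lemma cexp_single (r : V) (f : (V → Bool) → ℝ) (η : V → Bool) :
    cexp p {r} f η
      = p * f (Function.update η r true) + (1 - p) * f (Function.update η r false) := by
  have hprod : ∀ ζ : V → Bool,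
      (∏ x : V, if x ∈ ({r} : Finset V) then (if ζ x then p else 1 - p)
        else (if ζ x = η x then (1:ℝ) else 0))
      = (if ζ r then p else 1 - p)
        * (if ∀ x ∈ Finset.univ.erase r, ζ x = η x then (1:ℝ) else 0) := by
    intro ζ
    rw [← Finset.mul_prod_erase Finset.univ _ (Finset.mem_univ r)]
    refine congrArg₂ (· * ·) ?_ ?_
    · rw [if_pos (Finset.mem_singleton_self r)]
    · rw [Finset.prod_congr rfl (fun x hx => if_neg
        (fun hmem => (Finset.ne_of_mem_erase hx) (Finset.mem_singleton.1 hmem))),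
        Finset.prod_boole]
      exact ite_congr rfl (fun _ => rfl) (fun _ => rfl)
  have hpt : ∀ ζ : V → Bool,
      ((if ζ r then p else 1 - p)
        * (if ∀ x ∈ Finset.univ.erase r, ζ x = η x then (1:ℝ) else 0)) * f ζ
      = (if ζ = Function.update η r true then p * f ζ else 0)
        + (if ζ = Function.update η r false then (1 - p) * f ζ else 0) := by
    intro ζ
    by_cases hc : ∀ x ∈ Finset.univ.erase r, ζ x = η x
    · have hζ : ζ = Function.update η r (ζ r) := by
        funext x
        by_cases hx : x = r
        · subst hx; rw [Function.update_self]
        · rw [Function.update_of_ne hx]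
          exact hc x (Finset.mem_erase.2 ⟨hx, Finset.mem_univ x⟩)
      cases hb : ζ r
      · have hne : ζ ≠ Function.update η r true := by
          intro he
          have h2 := congrFun he r
          rw [Function.update_self, hb] at h2
          exact Bool.noConfusion h2
        have heq : ζ = Function.update η r false := by rw [hζ, hb]
        rw [if_pos hc, if_neg hne, if_pos heq]
        norm_num
      · have hne : ζ ≠ Function.update η r false := by
          intro he
          have h2 := congrFun he r
          rw [Function.update_self, hb] at h2
          exact Bool.noConfusion h2
        have heq : ζ = Function.update η r true := by rw [hζ, hb]
        rw [if_pos hc, if_neg hne, if_pos heq]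
        norm_num
    · rw [if_neg hc]
      push_neg at hc
      obtain ⟨x, hx, hxne⟩ := hc
      have h1 : ζ ≠ Function.update η r true := fun he => hxne (by
        rw [he, Function.update_of_ne (Finset.ne_of_mem_erase hx)])
      have h2 : ζ ≠ Function.update η r false := fun he => hxne (by
        rw [he, Function.update_of_ne (Finset.ne_of_mem_erase hx)])
      rw [if_neg h1, if_neg h2]
      ring
  unfold cexp
  have hsum : (∑ ζ : V → Bool, (∏ x : V, if x ∈ ({r} : Finset V) then (if ζ x then p else 1 - p)
        else (if ζ x = η x then (1:ℝ) else 0)) * f ζ)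
      = ∑ ζ : V → Bool, ((if ζ = Function.update η r true then p * f ζ else 0)
        + (if ζ = Function.update η r false then (1 - p) * f ζ else 0)) :=
    Finset.sum_congr rfl fun ζ _ => by rw [hprod ζ]; exact hpt ζ
  rw [hsum, Finset.sum_add_distrib, Finset.sum_ite_eq' Finset.univ (Function.update η r true)
    (fun ζ => p * f ζ), Finset.sum_ite_eq' Finset.univ (Function.update η r false)
    (fun ζ => (1 - p) * f ζ)]
  simp

lemma cvar_single (r : V) (f : (V → Bool) → ℝ) (η : V → Bool) :
    cvar p {r} f η
      = p * (1 - p) * (f (Function.update η r true) - f (Function.update η r false)) ^ 2 := by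
  unfold cvar
  rw [cexp_single r f η, cexp_single r (fun ζ => f ζ ^ 2) η]
  ring

lemma cvar_block (r : V) (f : (V → Bool) → ℝ) (η : V → Bool) :
    cvar p (Finset.univ.erase r) f η
      = varTot p (fun ζ => f (Function.update ζ r (η r))) := by
  unfold cvar varTot
  rw [cexp_block r f η, cexp_block r (fun ζ => f ζ ^ 2) η]

lemma assemble (q q0 d mcd E2 Vd V1 V0 Mr MB vf : ℝ)
    (hp0 : 0 < p) (hp1 : p < 1) (hq0pos : 0 < q0) (hq0le : q0 ≤ q) (hq1 : q ≤ 1)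
    (hdecomp : vf = MB + p * (1 - p) * d ^ 2)
    (hMB : MB = p * V1 + (1 - p) * V0) (hV1 : 0 ≤ V1) (hV0 : 0 ≤ V0)
    (hMr : Mr = p * (1 - p) * E2) (hE2 : 0 ≤ E2)
    (hcs1 : mcd ^ 2 ≤ q * E2)
    (hcov : (mcd - q * d) ^ 2 ≤ (q - q ^ 2) * Vd)
    (hVd : Vd ≤ 2 * V1 + 2 * V0) (hVdnn : 0 ≤ Vd) :
    vf ≤ (1 + 4 / q0 ^ 2) * (Mr + MB) := by
  have h1p : 0 < 1 - p := by linarith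
  have hq : 0 < q := lt_of_lt_of_le hq0pos hq0le
  have hMBnn : 0 ≤ MB := by
    have h1 := mul_nonneg hp0.le hV1
    have h2 := mul_nonneg h1p.le hV0
    linarith
  have hMrnn : 0 ≤ Mr := by
    have h1 := mul_nonneg (mul_nonneg hp0.le h1p.le) hE2
    linarith
  have key1 : (q * d) ^ 2 ≤ 2 * mcd ^ 2 + 2 * (mcd - q * d) ^ 2 := by
    nlinarith [sq_nonneg (2 * mcd - q * d)]
  have key2 : q ^ 2 * d ^ 2 ≤ 2 * (q * E2) + 2 * ((q - q ^ 2) * Vd) := by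
    have e : (q * d) ^ 2 = q ^ 2 * d ^ 2 := by ring
    linarith [key1, hcs1, hcov, e]
  have key3 : q ^ 2 * d ^ 2 ≤ 2 * E2 + 2 * Vd := by
    have a1 : q * E2 ≤ E2 := by
      have h := mul_nonneg (by linarith : (0:ℝ) ≤ 1 - q) hE2
      nlinarith
    have a2 : (q - q ^ 2) * Vd ≤ Vd := by
      have h := mul_nonneg (by nlinarith [sq_nonneg q] : (0:ℝ) ≤ 1 - (q - q ^ 2)) hVdnn
      nlinarith
    linarith [key2, a1, a2]
  have key4 : q0 ^ 2 * d ^ 2 ≤ q ^ 2 * d ^ 2 := by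
    have h : q0 ^ 2 ≤ q ^ 2 := by nlinarith
    exact mul_le_mul_of_nonneg_right h (sq_nonneg d)
  have key5 : p * (1 - p) * Vd ≤ 2 * MB := by
    have b1 := mul_le_mul_of_nonneg_left hVd (mul_nonneg hp0.le h1p.le)
    have b2 : p * (1 - p) * (2 * V1 + 2 * V0) ≤ 2 * (p * V1) + 2 * ((1 - p) * V0) := by
      nlinarith [mul_nonneg (mul_nonneg hp0.le hp0.le) hV1,
        mul_nonneg (mul_nonneg h1p.le h1p.le) hV0]
    linarith [b1, b2]
  have key6 : p * (1 - p) * q0 ^ 2 * d ^ 2 ≤ 2 * Mr + 4 * MB := by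
    have h36 : q0 ^ 2 * d ^ 2 ≤ 2 * E2 + 2 * Vd := le_trans key4 key3
    have h37 := mul_le_mul_of_nonneg_left h36 (mul_nonneg hp0.le h1p.le)
    have h38 : p * (1 - p) * (2 * E2 + 2 * Vd) = 2 * (p * (1 - p) * E2) + 2 * (p * (1 - p) * Vd) := by
      ring
    have h39 : p * (1 - p) * (q0 ^ 2 * d ^ 2) = p * (1 - p) * q0 ^ 2 * d ^ 2 := by ring
    linarith [h37, h38, key5, h39, hMr]
  have hγ : (1 + 4 / q0 ^ 2) * (Mr + MB)
      = (q0 ^ 2 * (Mr + MB) + 4 * (Mr + MB)) / q0 ^ 2 := by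
    field_simp
  rw [hγ, le_div_iff₀ (by positivity : (0:ℝ) < q0 ^ 2)]
  have hexp : vf * q0 ^ 2 = MB * q0 ^ 2 + p * (1 - p) * q0 ^ 2 * d ^ 2 := by
    rw [hdecomp]; ring
  have c1 := mul_nonneg (sq_nonneg q0) hMrnn
  have c2 := mul_nonneg (sq_nonneg q0) hMBnn
  linarith [hexp, key6, hMrnn, hMBnn, c1, c2]

end TBP
namespace TBP
open Finset

variable {V : Type*} [Fintype V] [DecidableEq V] {p : ℝ}

lemma main_ineq (hp0 : 0 < p) (hp1 : p < 1) (r : V) (c : (V → Bool) → ℝ)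
    (hc01 : ∀ η, c η = 0 ∨ c η = 1) {q0 : ℝ} (hq0pos : 0 < q0) (hq0le : q0 ≤ mean p c)
    (f : (V → Bool) → ℝ) :
    varTot p f ≤ (1 + 4 / q0 ^ 2) *
      (mean p (fun η => c η * cvar p {r} f η) + mean p (cvar p (Finset.univ.erase r) f)) := by
  have h1p : 0 < 1 - p := by linarith
  have hc0 : ∀ η, 0 ≤ c η := fun η => by rcases hc01 η with h | h <;> rw [h] <;> norm_num
  have hq1 : mean p c ≤ 1 := by
    have h := mean_mono hp0 hp1 (u := c) (v := fun _ : V → Bool => (1:ℝ))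
      (fun η => by rcases hc01 η with h | h <;> rw [h] <;> norm_num)
    rwa [mean_const] at h
  have hm : mean p f = p * mean p (fun η => f (Function.update η r true))
      + (1 - p) * mean p (fun η => f (Function.update η r false)) := mean_eq_update r f
  have hm2 : mean p (fun η => f η ^ 2)
      = p * mean p (fun η => f (Function.update η r true) ^ 2)
      + (1 - p) * mean p (fun η => f (Function.update η r false) ^ 2) :=
    mean_eq_update r (fun η => f η ^ 2)
  have hmD : mean p (fun η => f (Function.update η r true) - f (Function.update η r false))
      = mean p (fun η => f (Function.update η r true))
        - mean p (fun η => f (Function.update η r false)) := mean_sub _ _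
  have hA1 : mean p (cvar p (Finset.univ.erase r) f)
      = p * varTot p (fun η => f (Function.update η r true))
        + (1 - p) * varTot p (fun η => f (Function.update η r false)) := by
    rw [mean_congr (fun η => cvar_block r f η)]
    exact mean_root r (fun b => varTot p (fun ζ => f (Function.update ζ r b)))
  have hdecomp : varTot p f = mean p (cvar p (Finset.univ.erase r) f)
      + p * (1 - p) * (mean p (fun η => f (Function.update η r true)
          - f (Function.update η r false))) ^ 2 := by
    rw [hA1]
    simp only [varTot]
    rw [hm2, hm, hmD]
    ring
  have hMr : mean p (fun η => c η * cvar p {r} f η)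
      = p * (1 - p) * mean p (fun η => c η * (f (Function.update η r true)
          - f (Function.update η r false)) ^ 2) := by
    rw [← mean_const_mul]
    exact mean_congr fun η => by rw [cvar_single r f η]; ring
  have hE2nn : 0 ≤ mean p (fun η => c η * (f (Function.update η r true)
      - f (Function.update η r false)) ^ 2) :=
    mean_nonneg hp0 hp1 fun η => mul_nonneg (hc0 η) (sq_nonneg _)
  have hcs1 : (mean p (fun η => c η * (f (Function.update η r true)
        - f (Function.update η r false)))) ^ 2
      ≤ mean p c * mean p (fun η => c η * (f (Function.update η r true)
        - f (Function.update η r false)) ^ 2) := by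
    have h : (mean p (fun η => c η * (c η * (f (Function.update η r true)
          - f (Function.update η r false))))) ^ 2
        ≤ mean p (fun η => c η ^ 2) * mean p (fun η => (c η * (f (Function.update η r true)
          - f (Function.update η r false))) ^ 2) :=
      mean_cs hp0 hp1 c (fun η => c η * (f (Function.update η r true)
        - f (Function.update η r false)))
    have e1 : ∀ η : V → Bool, c η * (c η * (f (Function.update η r true)
          - f (Function.update η r false)))
        = c η * (f (Function.update η r true) - f (Function.update η r false)) := by
      intro η; rcases hc01 η with hcη | hcη <;> rw [hcη] <;> ring
    have e2 : ∀ η : V → Bool, c η ^ 2 = c η := fun η => by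
      rcases hc01 η with hcη | hcη <;> rw [hcη] <;> norm_num
    have e3 : ∀ η : V → Bool, (c η * (f (Function.update η r true)
          - f (Function.update η r false))) ^ 2
        = c η * (f (Function.update η r true) - f (Function.update η r false)) ^ 2 := by
      intro η; rcases hc01 η with hcη | hcη <;> rw [hcη] <;> ring
    rw [mean_congr e1, mean_congr e2, mean_congr e3] at h
    exact h
  have hA5 : mean p (fun η => (c η - mean p c) * ((f (Function.update η r true)
        - f (Function.update η r false)) - mean p (fun η => f (Function.update η r true)
        - f (Function.update η r false))))
      = mean p (fun η => c η * (f (Function.update η r true) - f (Function.update η r false)))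
        - mean p c * mean p (fun η => f (Function.update η r true)
          - f (Function.update η r false)) := by
    have e : ∀ η : V → Bool, (c η - mean p c) * ((f (Function.update η r true)
          - f (Function.update η r false)) - mean p (fun η => f (Function.update η r true)
          - f (Function.update η r false)))
        = c η * (f (Function.update η r true) - f (Function.update η r false))
          + ((- mean p (fun η => f (Function.update η r true) - f (Function.update η r false)))
              * c η
            + ((- mean p c) * (f (Function.update η r true) - f (Function.update η r false))
              + mean p c * mean p (fun η => f (Function.update η r true)
                - f (Function.update η r false)))) := fun η => by ring
    rw [mean_congr e, mean_add, mean_add, mean_add, mean_const_mul, mean_const_mul, mean_const]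
    ring
  have hcov : (mean p (fun η => c η * (f (Function.update η r true)
        - f (Function.update η r false)))
      - mean p c * mean p (fun η => f (Function.update η r true)
        - f (Function.update η r false))) ^ 2
      ≤ (mean p c - (mean p c) ^ 2)
        * varTot p (fun η => f (Function.update η r true) - f (Function.update η r false)) := by
    have h : (mean p (fun η => (c η - mean p c) * ((f (Function.update η r true)
          - f (Function.update η r false)) - mean p (fun η => f (Function.update η r true)
          - f (Function.update η r false))))) ^ 2
        ≤ mean p (fun η => (c η - mean p c) ^ 2)
          * mean p (fun η => ((f (Function.update η r true) - f (Function.update η r false))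
            - mean p (fun η => f (Function.update η r true)
              - f (Function.update η r false))) ^ 2) :=
      mean_cs hp0 hp1 (fun η => c η - mean p c)
        (fun η => (f (Function.update η r true) - f (Function.update η r false))
          - mean p (fun η => f (Function.update η r true) - f (Function.update η r false)))
    have e4 : ∀ η : V → Bool, (c η - mean p c) ^ 2
        = c η + ((-2 * mean p c) * c η + mean p c ^ 2) := by
      intro η; rcases hc01 η with hcη | hcη <;> rw [hcη] <;> ring
    have h5 : mean p (fun η => (c η - mean p c) ^ 2) = mean p c - (mean p c) ^ 2 := by
      rw [mean_congr e4, mean_add, mean_add, mean_const_mul, mean_const]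
      ring
    rw [h5, hA5, ← varTot_eq] at h
    exact h
  have hVd : varTot p (fun η => f (Function.update η r true) - f (Function.update η r false))
      ≤ 2 * varTot p (fun η => f (Function.update η r true))
        + 2 * varTot p (fun η => f (Function.update η r false)) := by
    rw [varTot_eq]
    have pt : ∀ η : V → Bool, ((f (Function.update η r true) - f (Function.update η r false))
          - mean p (fun η => f (Function.update η r true) - f (Function.update η r false))) ^ 2
        ≤ 2 * (f (Function.update η r true)
            - mean p (fun η => f (Function.update η r true))) ^ 2
          + 2 * (f (Function.update η r false)
            - mean p (fun η => f (Function.update η r false))) ^ 2 := by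
      intro η
      rw [hmD]
      nlinarith [sq_nonneg ((f (Function.update η r true)
          - mean p (fun η => f (Function.update η r true)))
        + (f (Function.update η r false)
          - mean p (fun η => f (Function.update η r false))))]
    have h := mean_mono hp0 hp1 pt
    refine h.trans (le_of_eq ?_)
    rw [mean_add, mean_const_mul, mean_const_mul, ← varTot_eq, ← varTot_eq]
  exact assemble (mean p c) q0
    (mean p (fun η => f (Function.update η r true) - f (Function.update η r false)))
    (mean p (fun η => c η * (f (Function.update η r true) - f (Function.update η r false))))
    (mean p (fun η => c η * (f (Function.update η r true) - f (Function.update η r false)) ^ 2))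
    (varTot p (fun η => f (Function.update η r true) - f (Function.update η r false)))
    (varTot p (fun η => f (Function.update η r true)))
    (varTot p (fun η => f (Function.update η r false)))
    (mean p (fun η => c η * cvar p {r} f η))
    (mean p (cvar p (Finset.univ.erase r) f))
    (varTot p f)
    hp0 hp1 hq0pos hq0le hq1 hdecomp hA1
    (varTot_nonneg hp0 hp1 _) (varTot_nonneg hp0 hp1 _)
    hMr hE2nn hcs1 hcov hVd (varTot_nonneg hp0 hp1 _)

end TBP

theorem two_block_poincare (k j : ℕ) (p : ℝ) (hk : 2 ≤ k) (hj1 : 1 ≤ j) (hjk : j ≤ k)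
    (hp : p ∈ Set.Ioo (0 : ℝ) 1) :
    ∃ γ : ℝ, 1 ≤ γ ∧ ∀ (L : ℕ), 1 ≤ L → ∀ f : (BV k L → Bool) → ℝ,
      varTot p f ≤ γ *
        (mean p (fun η =>
            (if j ≤ (Finset.univ.filter
                fun y : BV k L => adj (none : BV k L) y ∧ η y = false).card
              then (1 : ℝ) else 0) * cvar p {(none : BV k L)} f η)
          + mean p (cvar p (Finset.univ.erase (none : BV k L)) f)) := by
  obtain ⟨hp0, hp1⟩ := hp
  have h1p : 0 < 1 - p := by linarith
  refine ⟨1 + 4 / ((1 - p) ^ (k + 1)) ^ 2, ?_, ?_⟩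
  · have h4 : (0:ℝ) ≤ 4 / ((1 - p) ^ (k + 1)) ^ 2 := by positivity
    linarith
  intro L hL f
  have hL0 : 0 < L := hL
  have hc01 : ∀ η : BV k L → Bool,
      (if j ≤ (Finset.univ.filter
          fun y : BV k L => adj (none : BV k L) y ∧ η y = false).card
        then (1:ℝ) else 0) = 0 ∨
      (if j ≤ (Finset.univ.filter
          fun y : BV k L => adj (none : BV k L) y ∧ η y = false).card
        then (1:ℝ) else 0) = 1 := fun η => by split_ifs <;> simp
  -- the k+1 neighbours of the root
  set ι : Fin (k + 1) → BV k L := fun a => some ⟨⟨0, hL0⟩, a, Fin.elim0⟩ with hι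
  have hinj : Function.Injective ι := by
    intro a b hab
    simp only [hι, Option.some.injEq, Sigma.mk.inj_iff, Prod.mk.injEq, heq_eq_eq] at hab
    exact hab.2.1
  set S : Finset (BV k L) := Finset.univ.image ι with hS
  have hcardS : S.card = k + 1 := by
    rw [hS, Finset.card_image_of_injective _ hinj, Finset.card_univ, Fintype.card_fin]
  have hadj : ∀ a : Fin (k + 1), adj (none : BV k L) (ι a) := fun a => Or.inl rfl
  have hpoint : ∀ η : BV k L → Bool,
      (if ∀ x ∈ S, η x = false then (1:ℝ) else 0)
      ≤ (if j ≤ (Finset.univ.filter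
          fun y : BV k L => adj (none : BV k L) y ∧ η y = false).card
        then (1:ℝ) else 0) := by
    intro η
    by_cases h : ∀ x ∈ S, η x = false
    · rw [if_pos h]
      have hsub : S ⊆ Finset.univ.filter
          (fun y : BV k L => adj (none : BV k L) y ∧ η y = false) := by
        intro x hx
        obtain ⟨a, -, rfl⟩ := Finset.mem_image.1 (hS ▸ hx)
        exact Finset.mem_filter.2 ⟨Finset.mem_univ _, hadj a, h _ hx⟩
      have hcard : k + 1 ≤ (Finset.univ.filter
          (fun y : BV k L => adj (none : BV k L) y ∧ η y = false)).card := by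
        have h2 := Finset.card_le_card hsub
        omega
      rw [if_pos (le_trans (le_trans hjk (Nat.le_succ k)) hcard)]
    · rw [if_neg h]
      have : (0:ℝ) ≤ if j ≤ (Finset.univ.filter
          fun y : BV k L => adj (none : BV k L) y ∧ η y = false).card then (1:ℝ) else 0 := by
        by_cases h2 : j ≤ (Finset.univ.filter
            fun y : BV k L => adj (none : BV k L) y ∧ η y = false).card
        · rw [if_pos h2]; norm_num
        · rw [if_neg h2]
      exact this
  have hmean : mean p (fun η : BV k L → Bool => if ∀ x ∈ S, η x = false then (1:ℝ) else 0)
      = (1 - p) ^ (k + 1) := by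
    have hpt : ∀ η : BV k L → Bool,
        wt p η * (if ∀ x ∈ S, η x = false then (1:ℝ) else 0)
        = ∏ x : BV k L, ((if η x then p else 1 - p)
            * (if x ∈ S then (if η x = false then (1:ℝ) else 0) else 1)) := by
      intro η
      rw [Finset.prod_mul_distrib]
      congr 1
      rw [Finset.prod_ite_mem, Finset.univ_inter, Finset.prod_boole]
      try exact ite_congr rfl (fun _ => rfl) (fun _ => rfl)
    have hsum := TBP.sum_pi_bool (V := BV k L)
      (fun x b => (if b then p else 1 - p)
        * (if x ∈ S then (if b = false then (1:ℝ) else 0) else 1))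
    unfold mean
    rw [Finset.sum_congr rfl fun η _ => hpt η]
    rw [hsum]
    have hfac : ∀ x : BV k L,
        ((if true then p else 1 - p) * (if x ∈ S then (if (true : Bool) = false then (1:ℝ) else 0) else 1))
        + ((if false then p else 1 - p) * (if x ∈ S then (if (false : Bool) = false then (1:ℝ) else 0) else 1))
        = (if x ∈ S then 1 - p else 1) := by
      intro x
      by_cases hx : x ∈ S
      · simp [hx]
      · simp [hx]
        try ring
    rw [Finset.prod_congr rfl fun x _ => hfac x, Finset.prod_ite_mem, Finset.univ_inter,
      Finset.prod_const, hcardS]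
  have hq0le : (1 - p) ^ (k + 1) ≤ mean p (fun η : BV k L → Bool =>
      if j ≤ (Finset.univ.filter
        fun y : BV k L => adj (none : BV k L) y ∧ η y = false).card
      then (1:ℝ) else 0) := by
    have h := TBP.mean_mono hp0 hp1 hpoint
    rwa [hmean] at h
  exact TBP.main_ineq hp0 hp1 (none : BV k L)
    (fun η => if j ≤ (Finset.univ.filter
        fun y : BV k L => adj (none : BV k L) y ∧ η y = false).card
      then (1:ℝ) else 0)
    hc01 (pow_pos h1p (k + 1)) hq0le f
end
end
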